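/- arXiv:2402.08331 — 15 statements merged into one kernel-verified Lean document; each statement's English description precedes it below -/
import Mathlib

section
/- Let 0 < γ < 1 be an irrational number whose continued fraction expansion γ = [0; a_1, a_2, a_3, …] is purely periodic with period m ≥ 1, i.e., a_{i+m} = a_i for all i ≥ 1, and let p_i, q_i be the numerators and denominators of its convergents. Let n ≥ 1 be an integer and let e_0, e_1, …, e_t be natural numbers satisfying: n − 1 = Σ_{0≤i≤t} e_i q_i; 0 ≤ e_0 < a_1; 0 ≤ e_i ≤ a_{i+1} for all i ≥ 1; and whenever e_i = a_{i+1} for some i ≥ 1, then e_{i−1} = 0 (i.e., the e_i form the canonical Ostrowski γ-representation of n − 1). Then Σ_{0≤i≤t} e_i q_{i+m} = q_m (n − 1) + q_{m−1} ⌊n γ⌋. -/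
open Finset in
/-- Theorem 4 of Schaeffer–Shallit–Zorcic: appending `m` zeros to the Ostrowski
γ-representation of `n-1` yields `q_m (n-1) + q_{m-1} ⌊nγ⌋`. -/
theorem ostrowski_shift_identity
    (γ : ℝ) (hγirr : Irrational γ) (hγ0 : 0 < γ) (hγ1 : γ < 1)
    -- the continued fraction expansion γ = [0; a₁, a₂, …] via the Gauss map:
    (a : ℕ → ℕ) (x : ℕ → ℝ) (hx0 : x 0 = γ) (ha0 : a 0 = 0)
    (hgauss : ∀ i : ℕ, (a (i + 1) : ℤ) = ⌊1 / x i⌋ ∧ x (i + 1) = 1 / x i - (a (i + 1) : ℝ))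
    -- pure periodicity with period m:
    (m : ℕ) (hm : 1 ≤ m) (haper : ∀ i : ℕ, 1 ≤ i → a (i + m) = a i)
    -- convergents (with p₋₁ = 1, q₋₁ = 0):
    (p q : ℕ → ℤ)
    (hp0 : p 0 = 0) (hq0 : q 0 = 1)
    (hp1 : p 1 = (a 1 : ℤ) * p 0 + 1) (hq1 : q 1 = (a 1 : ℤ) * q 0 + 0)
    (hp : ∀ i : ℕ, p (i + 2) = (a (i + 2) : ℤ) * p (i + 1) + p i)
    (hq : ∀ i : ℕ, q (i + 2) = (a (i + 2) : ℤ) * q (i + 1) + q i)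
    -- the canonical Ostrowski γ-representation of n - 1:
    (n : ℕ) (hn : 1 ≤ n) (t : ℕ) (e : ℕ → ℕ)
    (hrep : ((n : ℤ) - 1) = ∑ i ∈ range (t + 1), (e i : ℤ) * q i)
    (he0 : e 0 < a 1)
    (hei : ∀ i : ℕ, 1 ≤ i → e i ≤ a (i + 1))
    (hcarry : ∀ i : ℕ, 1 ≤ i → e i = a (i + 1) → e (i - 1) = 0) :
    ∑ i ∈ range (t + 1), (e i : ℤ) * q (i + m)
      = q m * ((n : ℤ) - 1) + q (m - 1) * ⌊(n : ℝ) * γ⌋ := by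
  -- Properties of the Gauss map iterates
  have hx : ∀ i, 0 < x i ∧ x i < 1 ∧ Irrational (x i) := by
    intro i
    induction i with
    | zero => exact ⟨hx0 ▸ hγ0, hx0 ▸ hγ1, hx0 ▸ hγirr⟩
    | succ i ih =>
      obtain ⟨h0, h1, hirr⟩ := ih
      obtain ⟨hfl, hxs⟩ := hgauss i
      have hxval : x (i + 1) = Int.fract (1 / x i) := by
        rw [hxs, Int.fract, ← hfl]; norm_cast
      have hinv : Irrational (1 / x i) := by rw [one_div]; exact hirr.inv
      have hfr : Irrational (x (i + 1)) := by
        rw [hxval, Int.fract]; exact hinv.sub_intCast _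
      have h0' : 0 < x (i + 1) := by
        have hnn : (0 : ℝ) ≤ x (i + 1) := hxval ▸ Int.fract_nonneg _
        exact hnn.lt_of_ne (Ne.symm hfr.ne_zero)
      exact ⟨h0', hxval ▸ Int.fract_lt_one _, hfr⟩
  -- θ i = γ q i - p i
  set θ : ℕ → ℝ := fun i => γ * (q i : ℝ) - (p i : ℝ) with hθdef
  have hθ0 : θ 0 = γ := by simp [hθdef, hp0, hq0]
  have hθ1 : θ 1 = (a 1 : ℝ) * γ - 1 := by
    simp only [hθdef, hp1, hq1, hp0, hq0]; push_cast; ring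
  have hθrec : ∀ i, θ (i + 2) = (a (i + 2) : ℝ) * θ (i + 1) + θ i := by
    intro i; simp only [hθdef, hp i, hq i]; push_cast; ring
  have hstep : ∀ i, θ (i + 1) = -(x (i + 1)) * θ i := by
    intro i
    induction i with
    | zero =>
      rw [hθ1, hθ0, (hgauss 0).2, hx0]
      field_simp
      ring
    | succ i ih =>
      have hxne : x (i + 1) ≠ 0 := (hx (i + 1)).1.ne'
      have hθi : θ i = -θ (i + 1) / x (i + 1) := by
        rw [ih]; field_simp
      rw [hθrec i, (hgauss (i + 1)).2, hθi]
      field_simp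
      ring
  -- β i = |θ i| with alternating signs
  set β : ℕ → ℝ := fun i => (-1 : ℝ) ^ i * θ i with hβdef
  have hβs : ∀ i, β (i + 1) = x (i + 1) * β i := by
    intro i; simp only [hβdef, hstep i, pow_succ]; ring
  have hβpos : ∀ i, 0 < β i := by
    intro i
    induction i with
    | zero => simpa [hβdef, hθ0] using hγ0
    | succ i ih => rw [hβs i]; exact mul_pos (hx (i + 1)).1 ih
  have hβ1 : β 1 = 1 - (a 1 : ℝ) * γ := by
    simp only [hβdef, hθ1]; ring
  have hβrec : ∀ k, β k = (a (k + 2) : ℝ) * β (k + 1) + β (k + 2) := by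
    intro k
    simp only [hβdef, hθrec k, pow_succ]
    ring
  -- tail sums
  set T : ℕ → ℝ := fun k => ∑ i ∈ Finset.Ico k (t + 1), (e i : ℝ) * θ i with hTdef
  have hecoef : ∀ k, (e k : ℝ) ≤ (a (k + 1) : ℝ) := by
    intro k
    rcases Nat.eq_zero_or_pos k with hk | hk
    · subst hk; exact_mod_cast he0.le
    · exact_mod_cast hei k hk
  have hC : ∀ d k, t + 1 ≤ k + d →
      -β k < (-1 : ℝ) ^ k * T k ∧ (-1 : ℝ) ^ k * T k < (a (k + 1) : ℝ) * β k + β (k + 1) := by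
    intro d
    induction d with
    | zero =>
      intro k hk
      have hT0 : T k = 0 := by
        simp only [hTdef]
        rw [Finset.Ico_eq_empty (by omega), Finset.sum_empty]
      rw [hT0, mul_zero]
      constructor
      · linarith [hβpos k]
      · have := hβpos (k + 1)
        have := hβpos k
        have : (0 : ℝ) ≤ (a (k + 1) : ℝ) := Nat.cast_nonneg _
        positivity
    | succ d ih =>
      intro k hk
      by_cases hkt : t + 1 ≤ k
      · have hT0 : T k = 0 := by
          simp only [hTdef]
          rw [Finset.Ico_eq_empty (by omega), Finset.sum_empty]
        rw [hT0, mul_zero]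
        refine ⟨by linarith [hβpos k], ?_⟩
        have h1 := hβpos (k + 1)
        have h2 := hβpos k
        have h3 : (0 : ℝ) ≤ (a (k + 1) : ℝ) := Nat.cast_nonneg _
        positivity
      · push_neg at hkt
        have hsplit : T k = (e k : ℝ) * θ k + T (k + 1) := by
          simp only [hTdef]
          exact Finset.sum_eq_sum_Ico_succ_bot hkt _
        obtain ⟨ihl, ihu⟩ := ih (k + 1) (by omega)
        -- rewrite: (-1)^k * T k = e k * β k - ((-1)^(k+1) * T (k+1))
        have hkey : (-1 : ℝ) ^ k * T k = (e k : ℝ) * β k - (-1 : ℝ) ^ (k + 1) * T (k + 1) := by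
          rw [hsplit]
          simp only [hβdef, pow_succ]
          ring
        rw [hkey]
        constructor
        · have hub : (-1 : ℝ) ^ (k + 1) * T (k + 1) <
              (a (k + 2) : ℝ) * β (k + 1) + β (k + 2) := ihu
          have hβk : (a (k + 2) : ℝ) * β (k + 1) + β (k + 2) = β k := (hβrec k).symm
          have he : (0 : ℝ) ≤ (e k : ℝ) * β k :=
            mul_nonneg (Nat.cast_nonneg _) (hβpos k).le
          nlinarith
        · have hlb : -β (k + 1) < (-1 : ℝ) ^ (k + 1) * T (k + 1) := ihl
          have heb : (e k : ℝ) * β k ≤ (a (k + 1) : ℝ) * β k :=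
            mul_le_mul_of_nonneg_right (hecoef k) (hβpos k).le
          linarith
  -- bounds on T 1 and T 0
  have hC1 := hC (t + 1) 1 (by omega)
  have hT1ub : T 1 < β 1 := by
    have := hC1.1
    simp only [pow_one] at this
    linarith
  have hT1lb : -γ < T 1 := by
    have := hC1.2
    simp only [pow_one] at this
    have hβ0 : (a 2 : ℝ) * β 1 + β 2 = β 0 := (hβrec 0).symm
    have hβ0' : β 0 = γ := by simp [hβdef, hθ0]
    linarith [this, hβ0 ▸ this]
  have hT0split : T 0 = (e 0 : ℝ) * θ 0 + T 1 := by
    simp only [hTdef]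
    exact Finset.sum_eq_sum_Ico_succ_bot (by omega) _
  have he0γ : (0 : ℝ) ≤ (e 0 : ℝ) * θ 0 := by
    rw [hθ0]; exact mul_nonneg (Nat.cast_nonneg _) hγ0.le
  have he0' : (e 0 : ℝ) ≤ (a 1 : ℝ) - 1 := by
    have h : (e 0 : ℝ) + 1 ≤ (a 1 : ℝ) := by exact_mod_cast Nat.succ_le_of_lt he0
    linarith
  have hT0lb : -γ < T 0 := by rw [hT0split]; linarith
  have hT0ub : T 0 < 1 - γ := by
    rw [hT0split, hθ0]
    have h1 : (e 0 : ℝ) * γ ≤ ((a 1 : ℝ) - 1) * γ :=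
      mul_le_mul_of_nonneg_right he0' hγ0.le
    nlinarith [hβ1, hT1ub]
  -- the floor identity
  set P : ℤ := ∑ i ∈ range (t + 1), (e i : ℤ) * p i with hPdef
  have hrepR : ((n : ℝ) - 1) = ∑ i ∈ range (t + 1), (e i : ℝ) * (q i : ℝ) := by
    exact_mod_cast congrArg (fun z : ℤ => (z : ℝ)) hrep
  have hT0val : T 0 = ((n : ℝ) - 1) * γ - (P : ℝ) := by
    simp only [hTdef, hθdef, hPdef]
    rw [← Finset.range_eq_Ico]
    push_cast
    rw [hrepR, Finset.sum_mul, ← Finset.sum_sub_distrib]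
    congr 1
    ext i
    ring
  have hfloor : ⌊(n : ℝ) * γ⌋ = P := by
    rw [Int.floor_eq_iff]
    have hexp : (n : ℝ) * γ = (P : ℝ) + (T 0 + γ) := by
      rw [hT0val]; ring
    constructor
    · rw [hexp]; linarith
    · rw [hexp]; push_cast; linarith
  -- the shift identity for q
  have hshift : ∀ i, q (i + m) = q m * q i + q (m - 1) * p i := by
    intro i
    induction i using Nat.twoStepInduction with
    | zero => simp [hq0, hp0]
    | one =>
      have hm1 : m - 1 + 2 = m + 1 := by omega
      have hm2 : m - 1 + 1 = m := by omega
      have := hq (m - 1)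
      rw [hm1, hm2] at this
      have ha : a (m + 1) = a 1 := by
        have := haper 1 le_rfl
        rwa [Nat.add_comm] at this
      rw [Nat.add_comm 1 m, this, ha, hq1, hp1, hq0, hp0]
      ring
    | more i ih1 ih2 =>
      have harr : i + 2 + m = (i + m) + 2 := by ring
      have ha : a (i + m + 2) = a (i + 2) := by
        have := haper (i + 2) (by omega)
        rwa [show i + 2 + m = i + m + 2 by ring] at this
      have ih2' : q (i + m + 1) = q m * q (i + 1) + q (m - 1) * p (i + 1) := by
        rw [show i + m + 1 = i + 1 + m by omega]; exact ih2
      rw [harr, hq (i + m), ha, ih2', ih1, hq i, hp i]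
      ring
  -- conclude
  calc ∑ i ∈ range (t + 1), (e i : ℤ) * q (i + m)
      = ∑ i ∈ range (t + 1), (q m * ((e i : ℤ) * q i) + q (m - 1) * ((e i : ℤ) * p i)) := by
        apply Finset.sum_congr rfl
        intro i _
        rw [hshift i]
        ring
    _ = q m * ((n : ℤ) - 1) + q (m - 1) * P := by
        rw [Finset.sum_add_distrib, ← Finset.mul_sum, ← Finset.mul_sum, ← hrep, hPdef]
    _ = q m * ((n : ℤ) - 1) + q (m - 1) * ⌊(n : ℝ) * γ⌋ := by rw [hfloor]
end

section
/- Let α = (√21 − 1)/2 and β = (√21 + 3)/4. Then every natural number n ≥ 12 can be written as the sum of two elements of the inhomogeneous Beatty sequence (⌊kα + β⌋)_{k≥1}; that is, for every integer n ≥ 12 there exist integers u ≥ 1 and v ≥ 1 such that n = ⌊uα + β⌋ + ⌊vα + β⌋. -/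
noncomputable def fB (k : ℕ) : ℤ :=
  ⌊(k : ℝ) * ((Real.sqrt 21 - 1) / 2) + (Real.sqrt 21 + 3) / 4⌋

lemma s_sq : (Real.sqrt 21) ^ 2 = 21 := Real.sq_sqrt (by norm_num)
lemma s_nonneg : (0 : ℝ) ≤ Real.sqrt 21 := Real.sqrt_nonneg 21
lemma s_lb : (4.58 : ℝ) < Real.sqrt 21 := by nlinarith [s_sq, s_nonneg]
lemma s_ub : Real.sqrt 21 < 4.59 := by nlinarith [s_sq, s_nonneg]

lemma fB_one : fB 1 = 3 := by
  unfold fB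
  rw [Int.floor_eq_iff]
  refine ⟨by push_cast; nlinarith [s_lb, s_ub], by push_cast; nlinarith [s_lb, s_ub]⟩

lemma fB_four : fB 4 = 9 := by
  unfold fB
  rw [Int.floor_eq_iff]
  refine ⟨by push_cast; nlinarith [s_lb, s_ub], by push_cast; nlinarith [s_lb, s_ub]⟩

lemma fB_five : fB 5 = 10 := by
  unfold fB
  rw [Int.floor_eq_iff]
  refine ⟨by push_cast; nlinarith [s_lb, s_ub], by push_cast; nlinarith [s_lb, s_ub]⟩

lemma fB_step (k : ℕ) : fB k + 1 ≤ fB (k + 1) ∧ fB (k + 1) ≤ fB k + 2 := by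
  unfold fB
  set a : ℝ := (Real.sqrt 21 - 1) / 2 with ha
  set x : ℝ := (k : ℝ) * a + (Real.sqrt 21 + 3) / 4 with hx
  have hy : ((k : ℕ) + 1 : ℕ) * a + (Real.sqrt 21 + 3) / 4 = x + a := by
    push_cast; ring
  have h1 : (1 : ℝ) < a := by rw [ha]; nlinarith [s_lb]
  have h2 : a < 2 := by rw [ha]; nlinarith [s_ub]
  rw [hy]
  constructor
  · have : ⌊x⌋ + 1 = ⌊x + 1⌋ := (Int.floor_add_one x).symm
    rw [this]
    exact Int.floor_le_floor (by linarith)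
  · have hfl : (⌊x + a⌋ : ℝ) ≤ x + a := Int.floor_le _
    have hfl2 : x < (⌊x⌋ : ℝ) + 1 := Int.lt_floor_add_one x
    have : (⌊x + a⌋ : ℝ) < (⌊x⌋ : ℝ) + 3 := by linarith
    have hz : ⌊x + a⌋ < ⌊x⌋ + 3 := by exact_mod_cast this
    omega

lemma fB_hits (m : ℕ) (hm : 3 ≤ m) :
    ∃ k : ℕ, 1 ≤ k ∧ (fB k = (m : ℤ) ∨ fB k = (m : ℤ) + 1) := by
  induction m, hm using Nat.le_induction with
  | base => exact ⟨1, le_refl 1, Or.inl (by rw [fB_one]; norm_num)⟩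
  | succ m hm ih =>
    obtain ⟨k, hk1, hk⟩ := ih
    rcases hk with h | h
    · obtain ⟨hlo, hhi⟩ := fB_step k
      refine ⟨k + 1, by omega, ?_⟩
      push_cast
      omega
    · exact ⟨k, hk1, Or.inl (by push_cast; omega)⟩

/-- Every natural number `n ≥ 12` is the sum of two elements of the
inhomogeneous Beatty sequence `⌊k·(√21−1)/2 + (√21+3)/4⌋`, `k ≥ 1`. -/
theorem beatty_sqrt21_sum_of_two :
    ∀ n : ℕ, 12 ≤ n →
      ∃ u v : ℕ, 1 ≤ u ∧ 1 ≤ v ∧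
        (n : ℤ) = ⌊(u : ℝ) * ((Real.sqrt 21 - 1) / 2) + (Real.sqrt 21 + 3) / 4⌋
                + ⌊(v : ℝ) * ((Real.sqrt 21 - 1) / 2) + (Real.sqrt 21 + 3) / 4⌋ := by
  intro n hn
  rcases eq_or_lt_of_le hn with h12 | h13
  · refine ⟨1, 4, by norm_num, by norm_num, ?_⟩
    have h1 := fB_one
    have h4 := fB_four
    unfold fB at h1 h4
    rw [show ((1:ℕ):ℝ) = ((1:ℕ):ℝ) from rfl] at h1
    rw [← h12]
    push_cast at h1 h4 ⊢
    rw [h1, h4]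
    norm_num
  · have hm : 3 ≤ n - 10 := by omega
    obtain ⟨k, hk1, hk⟩ := fB_hits (n - 10) hm
    have hcast : ((n - 10 : ℕ) : ℤ) = (n : ℤ) - 10 := by
      have : (10 : ℕ) ≤ n := by omega
      push_cast [this]; ring
    rcases hk with h | h
    · refine ⟨k, 5, hk1, by norm_num, ?_⟩
      have h5 := fB_five
      unfold fB at h h5
      push_cast at h5 ⊢
      rw [h5, h]
      rw [hcast]; ring
    · refine ⟨k, 4, hk1, by norm_num, ?_⟩
      have h4 := fB_four
      unfold fB at h h4
      push_cast at h4 ⊢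
      rw [h4, h]
      rw [hcast]; ring
end

section
/- Let φ = (1 + √5)/2 be the golden ratio, and define c(n) = ⌊nφ + 1/2⌋ for n ≥ 0. Then every natural number n ≠ 1 can be written as the sum of two elements of the sequence c; that is, for every natural number n ≠ 1 there exist natural numbers i, j ≥ 0 with n = ⌊iφ + 1/2⌋ + ⌊jφ + 1/2⌋. -/
private lemma s5sq : Real.sqrt 5 ^ 2 = 5 := Real.sq_sqrt (by norm_num)
private lemma s5lb : 2.236 < Real.sqrt 5 := by
  nlinarith [s5sq, Real.sqrt_nonneg 5]
private lemma s5ub : Real.sqrt 5 < 2.2361 := by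
  nlinarith [s5sq, Real.sqrt_nonneg 5]

private lemma mem_c (n : ℕ)
    (h : Int.fract ((n:ℝ) * ((1 + Real.sqrt 5) / 2)) ≤ (Real.sqrt 5 - 1)/4 ∨
         1 - (Real.sqrt 5 - 1)/4 < Int.fract ((n:ℝ) * ((1 + Real.sqrt 5) / 2))) :
    ∃ k : ℕ, (n : ℤ) = ⌊(k : ℝ) * ((1 + Real.sqrt 5) / 2) + 1/2⌋ := by
  set φ : ℝ := (1 + Real.sqrt 5)/2 with hφ
  set f := Int.fract ((n:ℝ) * φ) with hfdef
  have hf0 : 0 ≤ f := Int.fract_nonneg _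
  have hf1 : f < 1 := Int.fract_lt_one _
  have hfl : ((⌊(n:ℝ)*φ⌋ : ℤ) : ℝ) = (n:ℝ)*φ - f := by
    rw [hfdef]; exact (Int.self_sub_fract _).symm
  have hφ2 : φ^2 = φ + 1 := by rw [hφ]; nlinarith [s5sq]
  have hKnn : (n:ℤ) ≤ ⌊(n:ℝ)*φ⌋ := by
    apply Int.le_floor.mpr
    push_cast
    nlinarith [s5lb, Nat.cast_nonneg (α := ℝ) n]
  rcases h with h | h
  · refine ⟨(⌊(n:ℝ)*φ⌋ - n).toNat, ?_⟩
    have hge : (0:ℤ) ≤ ⌊(n:ℝ)*φ⌋ - n := by omega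
    have hc : (((⌊(n:ℝ)*φ⌋ - n).toNat : ℕ) : ℝ) = (n:ℝ)*φ - f - n := by
      have hcn : (((⌊(n:ℝ)*φ⌋ - n).toNat : ℕ) : ℝ) = ((⌊(n:ℝ)*φ⌋ - (n:ℤ) : ℤ) : ℝ) := by
        exact_mod_cast congrArg (Int.cast : ℤ → ℝ) (Int.toNat_of_nonneg hge)
      push_cast [hcn]
      linarith [hfl]
    symm
    rw [Int.floor_eq_iff, hc]
    constructor
    · push_cast; nlinarith [s5sq, s5lb]
    · push_cast; nlinarith [s5sq, s5lb]
  · refine ⟨(⌊(n:ℝ)*φ⌋ - n).toNat + 1, ?_⟩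
    have hge : (0:ℤ) ≤ ⌊(n:ℝ)*φ⌋ - n := by omega
    have hc : (((⌊(n:ℝ)*φ⌋ - n).toNat + 1 : ℕ) : ℝ) = (n:ℝ)*φ - f - n + 1 := by
      have hcn : (((⌊(n:ℝ)*φ⌋ - n).toNat : ℕ) : ℝ) = ((⌊(n:ℝ)*φ⌋ - (n:ℤ) : ℤ) : ℝ) := by
        exact_mod_cast congrArg (Int.cast : ℤ → ℝ) (Int.toNat_of_nonneg hge)
      push_cast [hcn]
      linarith [hfl]
    symm
    rw [Int.floor_eq_iff, hc]
    constructor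
    · push_cast; nlinarith [s5sq, s5lb]
    · push_cast; nlinarith [s5sq, s5lb]

/-- Every natural number `n ≠ 1` is the sum of two elements of the sequence
`c(n) = ⌊nφ + 1/2⌋` (OEIS A007067), where `φ` is the golden ratio. -/
theorem sum_of_two_A007067 :
    ∀ n : ℕ, n ≠ 1 →
      ∃ i j : ℕ,
        (n : ℤ) = ⌊(i : ℝ) * ((1 + Real.sqrt 5) / 2) + 1 / 2⌋
                + ⌊(j : ℝ) * ((1 + Real.sqrt 5) / 2) + 1 / 2⌋ := by
  have cval : ∀ k m : ℕ, ((m:ℝ) ≤ (k:ℝ) * ((1 + Real.sqrt 5)/2) + 1/2) →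
      ((k:ℝ) * ((1 + Real.sqrt 5)/2) + 1/2 < m + 1) →
      ⌊(k : ℝ) * ((1 + Real.sqrt 5) / 2) + 1/2⌋ = (m:ℤ) := by
    intro k m h1 h2
    rw [Int.floor_eq_iff]
    constructor <;> push_cast <;> linarith
  have c0 : ⌊((0:ℕ) : ℝ) * ((1 + Real.sqrt 5) / 2) + 1/2⌋ = (0:ℤ) := by
    apply cval <;> push_cast <;> nlinarith [s5lb, s5ub]
  have c1 : ⌊((1:ℕ) : ℝ) * ((1 + Real.sqrt 5) / 2) + 1/2⌋ = (2:ℤ) := by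
    apply cval <;> push_cast <;> nlinarith [s5lb, s5ub]
  have c2 : ⌊((2:ℕ) : ℝ) * ((1 + Real.sqrt 5) / 2) + 1/2⌋ = (3:ℤ) := by
    apply cval <;> push_cast <;> nlinarith [s5lb, s5ub]
  have c3 : ⌊((3:ℕ) : ℝ) * ((1 + Real.sqrt 5) / 2) + 1/2⌋ = (5:ℤ) := by
    apply cval <;> push_cast <;> nlinarith [s5lb, s5ub]
  have c4 : ⌊((4:ℕ) : ℝ) * ((1 + Real.sqrt 5) / 2) + 1/2⌋ = (6:ℤ) := by
    apply cval <;> push_cast <;> nlinarith [s5lb, s5ub]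
  intro n hn
  rcases lt_or_ge n 6 with h6 | h6
  · interval_cases n
    · exact ⟨0, 0, by rw [c0]; norm_num⟩
    · exact absurd rfl hn
    · exact ⟨1, 0, by rw [c1, c0]; norm_num⟩
    · exact ⟨2, 0, by rw [c2, c0]; norm_num⟩
    · exact ⟨1, 1, by rw [c1]; norm_num⟩
    · exact ⟨3, 0, by rw [c3, c0]; norm_num⟩
  · set φ : ℝ := (1 + Real.sqrt 5)/2 with hφ
    set f := Int.fract ((n:ℝ) * φ) with hfdef
    have hf0 : 0 ≤ f := Int.fract_nonneg _
    have hf1 : f < 1 := Int.fract_lt_one _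
    have hfl : ((⌊(n:ℝ)*φ⌋ : ℤ) : ℝ) = (n:ℝ)*φ - f := by
      rw [hfdef]; exact (Int.self_sub_fract _).symm
    by_cases ha : f ≤ (Real.sqrt 5 - 1)/4 ∨ 1 - (Real.sqrt 5 - 1)/4 < f
    · obtain ⟨k, hk⟩ := mem_c n ha
      exact ⟨k, 0, by rw [← hk, c0]; ring⟩
    · push_neg at ha
      obtain ⟨ha1, ha2⟩ := ha
      by_cases hb : f ≤ (5 * Real.sqrt 5 - 9)/4
      · -- subtract 2 = c(1)
        have hn2 : ((n-2:ℕ):ℝ) = (n:ℝ) - 2 := by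
          push_cast [Nat.cast_sub (show 2 ≤ n by omega)]; ring
        have key : Int.fract (((n-2:ℕ):ℝ) * φ) = f - (Real.sqrt 5 - 2) := by
          rw [hn2]
          have heq : ((n:ℝ) - 2) * φ = ((⌊(n:ℝ)*φ⌋ - 3 : ℤ) : ℝ) + (f - (Real.sqrt 5 - 2)) := by
            push_cast [hfl]; rw [hφ]; ring
          rw [heq, Int.fract_intCast_add, Int.fract_eq_self.mpr]
          exact ⟨by nlinarith [s5lb, s5ub], by nlinarith [s5lb, s5ub]⟩
        obtain ⟨i, hi⟩ := mem_c (n-2) (Or.inl (by rw [key]; nlinarith [s5lb, s5ub]))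
        refine ⟨i, 1, ?_⟩
        rw [← hi, c1]
        have : ((n-2:ℕ):ℤ) = (n:ℤ) - 2 := by push_cast [Nat.cast_sub (show 2 ≤ n by omega)]; ring
        omega
      · -- subtract 6 = c(4)
        push_neg at hb
        have hn6 : ((n-6:ℕ):ℝ) = (n:ℝ) - 6 := by
          push_cast [Nat.cast_sub h6]; ring
        have key : Int.fract (((n-6:ℕ):ℝ) * φ) = f + 7 - 3 * Real.sqrt 5 := by
          rw [hn6]
          have heq : ((n:ℝ) - 6) * φ = ((⌊(n:ℝ)*φ⌋ - 10 : ℤ) : ℝ) + (f + 7 - 3 * Real.sqrt 5) := by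
            push_cast [hfl]; rw [hφ]; ring
          rw [heq, Int.fract_intCast_add, Int.fract_eq_self.mpr]
          exact ⟨by nlinarith [s5lb, s5ub], by nlinarith [s5lb, s5ub]⟩
        obtain ⟨i, hi⟩ := mem_c (n-6) (Or.inr (by rw [key]; nlinarith [s5lb, s5ub]))
        refine ⟨i, 4, ?_⟩
        rw [← hi, c4]
        have : ((n-6:ℕ):ℤ) = (n:ℤ) - 6 := by push_cast [Nat.cast_sub h6]; ring
        omega
end

section
/- Let α = (3 − √5)/2, and define the Fibonacci word f : ℕ → ℤ by f(n) = ⌊(n+2)α⌋ − ⌊(n+1)α⌋. Let s = (√5 − 1)/2 and t = (1 + √5)/2, and define a(k) = k + ⌊ks/2⌋ + ⌊kt/2⌋. Then for every integer n ≥ 1, the following are equivalent: (1) there exists i ≥ 0 with f(i) = f(i + (n+1)) = f(i + 2(n+1)) = 0 and there is no j ≥ 0 with f(j) = f(j + (n+1)) = f(j + 2(n+1)) = 1; (2) there exists an integer k ≥ 1 with n = a(k). -/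
private lemma reble_floor_eq {z : ℝ} {l : ℤ} (h1 : (l:ℝ) ≤ z) (h2 : z < l + 1) : ⌊z⌋ = l :=
  Int.floor_eq_iff.mpr ⟨h1, h2⟩

private lemma reble_fract_eq {z : ℝ} {l : ℤ} (h1 : (l:ℝ) ≤ z) (h2 : z < l + 1) :
    Int.fract z = z - l := by
  rw [Int.fract, reble_floor_eq h1 h2]

private lemma reble_dense_tail (α β u v : ℝ) (p : ℕ) (L : ℤ) (hp1 : 1 ≤ p)
    (hpα : (p:ℝ)*α = β + (L:ℝ)) (hu : 0 ≤ u) (huv : u < v) (hv : v ≤ 1)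
    (hcase : (0 < β ∧ β < v - u) ∨ (1 - (v-u) < β ∧ β < 1)) :
    ∃ m : ℕ, 1 ≤ m ∧ u < Int.fract ((m:ℝ)*α) ∧ Int.fract ((m:ℝ)*α) < v := by
  rcases hcase with ⟨hβ0, hβε⟩ | ⟨hγ1, hγ2⟩
  · set jZ : ℤ := ⌊u/β⌋ + 1 with hjZ
    have hjZ1 : 1 ≤ jZ := by
      have : 0 ≤ ⌊u/β⌋ := Int.floor_nonneg.mpr (by positivity)
      omega
    have hjβu : u < jZ * β := by
      have h1 : u/β < ⌊u/β⌋ + 1 := Int.lt_floor_add_one _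
      have := (div_lt_iff₀ hβ0).mp h1
      push_cast [hjZ]
      linarith
    have hjβv : jZ * β < v := by
      have h2 : ((⌊u/β⌋:ℤ):ℝ) ≤ u/β := Int.floor_le _
      have := (le_div_iff₀ hβ0).mp h2
      push_cast [hjZ]
      nlinarith
    have hjnat : ((jZ.toNat : ℤ)) = jZ := Int.toNat_of_nonneg (by omega)
    have hcnat : ((jZ.toNat : ℕ) : ℝ) = (jZ:ℝ) := by exact_mod_cast hjnat
    have hc : ((jZ.toNat * p : ℕ):ℝ) * α = (jZ:ℝ) * β + ((jZ * L : ℤ):ℝ) := by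
      have h1 : ((jZ.toNat * p : ℕ):ℝ) = ((jZ.toNat:ℕ):ℝ) * ((p:ℕ):ℝ) := by
        push_cast; ring
      rw [show ((jZ.toNat * p : ℕ):ℝ) * α = ((jZ.toNat:ℕ):ℝ) * (((p:ℕ):ℝ) * α) by
        rw [h1]; ring, hcnat, hpα]
      push_cast
      ring
    have hfr2 : Int.fract (((jZ.toNat * p : ℕ):ℝ) * α) = jZ * β := by
      rw [hc, Int.fract_add_intCast]
      have hlo : (((0:ℤ)):ℝ) ≤ (jZ:ℝ) * β := by push_cast; nlinarith
      have hhi : (jZ:ℝ) * β < ((0:ℤ):ℝ) + 1 := by push_cast; linarith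
      rw [reble_fract_eq hlo hhi]
      push_cast
      ring
    exact ⟨jZ.toNat * p, Nat.one_le_iff_ne_zero.mpr (Nat.mul_ne_zero (by omega) (by omega)),
      by rw [hfr2]; exact hjβu, by rw [hfr2]; exact hjβv⟩
  · have hγ0 : 0 < 1 - β := by linarith
    have hγε : 1 - β < v - u := by linarith
    set jZ : ℤ := ⌊(1-v)/(1-β)⌋ + 1 with hjZ
    have hjZ1 : 1 ≤ jZ := by
      have : 0 ≤ ⌊(1-v)/(1-β)⌋ := Int.floor_nonneg.mpr (div_nonneg (by linarith) (by linarith))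
      omega
    have hjγ1 : 1 - v < jZ * (1-β) := by
      have h1 : (1-v)/(1-β) < ⌊(1-v)/(1-β)⌋ + 1 := Int.lt_floor_add_one _
      have := (div_lt_iff₀ hγ0).mp h1
      push_cast [hjZ]
      linarith
    have hjγ2 : jZ * (1-β) < 1 - u := by
      have h2 : ((⌊(1-v)/(1-β)⌋:ℤ):ℝ) ≤ (1-v)/(1-β) := Int.floor_le _
      have := (le_div_iff₀ hγ0).mp h2
      push_cast [hjZ]
      nlinarith
    have hjγpos : 0 < (jZ:ℝ) * (1-β) := by
      have : (1:ℝ) ≤ jZ := by exact_mod_cast hjZ1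
      nlinarith
    have hjnat : ((jZ.toNat : ℤ)) = jZ := Int.toNat_of_nonneg (by omega)
    have hcnat : ((jZ.toNat : ℕ) : ℝ) = (jZ:ℝ) := by exact_mod_cast hjnat
    have hc : ((jZ.toNat * p : ℕ):ℝ) * α = -((jZ:ℝ) * (1-β)) + ((jZ * L + jZ : ℤ):ℝ) := by
      have h1 : ((jZ.toNat * p : ℕ):ℝ) = ((jZ.toNat:ℕ):ℝ) * ((p:ℕ):ℝ) := by
        push_cast; ring
      rw [show ((jZ.toNat * p : ℕ):ℝ) * α = ((jZ.toNat:ℕ):ℝ) * (((p:ℕ):ℝ) * α) by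
        rw [h1]; ring, hcnat, hpα]
      push_cast
      ring
    have hfr2 : Int.fract (((jZ.toNat * p : ℕ):ℝ) * α) = 1 - (jZ:ℝ) * (1-β) := by
      rw [hc, Int.fract_add_intCast]
      have hlo : (((-1:ℤ)):ℝ) ≤ -((jZ:ℝ) * (1-β)) := by push_cast; linarith
      have hhi : -((jZ:ℝ) * (1-β)) < ((-1:ℤ):ℝ) + 1 := by push_cast; linarith
      rw [reble_fract_eq hlo hhi]
      push_cast
      ring
    exact ⟨jZ.toNat * p, Nat.one_le_iff_ne_zero.mpr (Nat.mul_ne_zero (by omega) (by omega)),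
      by rw [hfr2]; linarith, by rw [hfr2]; linarith⟩

private lemma reble_dense (α : ℝ) (hirr : Irrational α) (u v : ℝ) (hu : 0 ≤ u) (huv : u < v)
    (hv : v ≤ 1) : ∃ m : ℕ, 1 ≤ m ∧ u < Int.fract ((m:ℝ)*α) ∧ Int.fract ((m:ℝ)*α) < v := by
  have noteq : ∀ p q : ℤ, p ≠ 0 → (p:ℝ)*α ≠ (q:ℝ) := fun p q hp => (hirr.intCast_mul hp).ne_int q
  set ε := v - u with hε
  have hε0 : 0 < ε := by simp only [hε]; linarith
  obtain ⟨K, hK⟩ := exists_nat_gt (1/ε)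
  have hK0 : 0 < (K:ℝ) := lt_trans (by positivity) hK
  have hKε : 1/(K:ℝ) < ε := by
    rw [div_lt_iff₀ hK0]; rw [div_lt_iff₀ hε0] at hK; nlinarith
  have step : ∃ p : ℕ, 1 ≤ p ∧
      ((0 < Int.fract ((p:ℝ)*α) ∧ Int.fract ((p:ℝ)*α) < ε) ∨
       (1 - ε < Int.fract ((p:ℝ)*α) ∧ Int.fract ((p:ℝ)*α) < 1)) := by
    have key : ∀ i j : ℕ, i < j → ⌊(K:ℝ) * Int.fract ((i:ℝ)*α)⌋ = ⌊(K:ℝ) * Int.fract ((j:ℝ)*α)⌋ →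
        ∃ p : ℕ, 1 ≤ p ∧
        ((0 < Int.fract ((p:ℝ)*α) ∧ Int.fract ((p:ℝ)*α) < ε) ∨
         (1 - ε < Int.fract ((p:ℝ)*α) ∧ Int.fract ((p:ℝ)*α) < 1)) := by
      intro i j hij hg
      set fi := Int.fract ((i:ℝ)*α) with hfi
      set fj := Int.fract ((j:ℝ)*α) with hfj
      have hb1 : ((⌊(K:ℝ)*fi⌋ : ℤ):ℝ) ≤ (K:ℝ)*fi := Int.floor_le _
      have hb2 : (K:ℝ)*fi < ⌊(K:ℝ)*fi⌋ + 1 := Int.lt_floor_add_one _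
      have hb3 : ((⌊(K:ℝ)*fj⌋ : ℤ):ℝ) ≤ (K:ℝ)*fj := Int.floor_le _
      have hb4 : (K:ℝ)*fj < ⌊(K:ℝ)*fj⌋ + 1 := Int.lt_floor_add_one _
      rw [hg] at hb1 hb2
      have hKinv : 0 < 1/(K:ℝ) := by positivity
      have hd1 : fj - fi < 1/K := by
        rw [lt_div_iff₀ hK0]; nlinarith
      have hd2 : -(1/K) < fj - fi := by
        rw [neg_lt, neg_sub, lt_div_iff₀ hK0]; nlinarith
      refine ⟨j - i, by omega, ?_⟩
      have hcast : ((j - i : ℕ):ℝ) * α = (fj - fi) + ((⌊(j:ℝ)*α⌋ - ⌊(i:ℝ)*α⌋ : ℤ):ℝ) := by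
        have hc : ((j - i : ℕ):ℝ) = (j:ℝ) - (i:ℝ) := by
          push_cast [Nat.cast_sub hij.le]; ring
        rw [hc, hfj, hfi, Int.fract, Int.fract]
        push_cast
        ring
      have hfr : Int.fract (((j - i : ℕ):ℝ) * α) = Int.fract (fj - fi) := by
        rw [hcast, Int.fract_add_intCast]
      have hne : fj - fi ≠ 0 := by
        intro h0
        apply noteq ((j:ℤ) - i) (⌊(j:ℝ)*α⌋ - ⌊(i:ℝ)*α⌋) (by omega)
        rw [hfj, hfi, Int.fract, Int.fract] at h0
        push_cast
        push_cast at h0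
        linarith
      rcases hne.lt_or_gt with hneg | hpos
      · right
        have hlo : (((-1:ℤ)):ℝ) ≤ fj - fi := by
          push_cast
          nlinarith [Int.fract_nonneg ((j:ℝ)*α), Int.fract_lt_one ((i:ℝ)*α)]
        have hhi : fj - fi < ((-1:ℤ):ℝ) + 1 := by push_cast; linarith
        have h1 := reble_fract_eq hlo hhi
        rw [hfr, h1]
        push_cast
        exact ⟨by linarith, by linarith⟩
      · left
        have hlo : (((0:ℤ)):ℝ) ≤ fj - fi := by push_cast; linarith
        have hhi : fj - fi < ((0:ℤ):ℝ) + 1 := by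
          push_cast
          nlinarith [Int.fract_lt_one ((j:ℝ)*α), Int.fract_nonneg ((i:ℝ)*α)]
        have h1 := reble_fract_eq hlo hhi
        rw [hfr, h1]
        push_cast
        exact ⟨by linarith, by linarith⟩
    have hmaps : ∀ i ∈ Finset.range (K+1),
        (⌊(K:ℝ) * Int.fract ((i:ℝ)*α)⌋) ∈ Finset.Ico (0:ℤ) (K:ℤ) := by
      intro i _
      rw [Finset.mem_Ico]
      refine ⟨Int.floor_nonneg.mpr (mul_nonneg hK0.le (Int.fract_nonneg _)), ?_⟩
      have : (K:ℝ) * Int.fract ((i:ℝ)*α) < K := by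
        nlinarith [Int.fract_lt_one ((i:ℝ)*α), Int.fract_nonneg ((i:ℝ)*α)]
      exact Int.floor_lt.mpr (by exact_mod_cast this)
    have hcard : (Finset.Ico (0:ℤ) (K:ℤ)).card < (Finset.range (K+1)).card := by
      rw [Int.card_Ico, Finset.card_range]
      simp
    obtain ⟨i, hi, j, hj, hij, hgij⟩ :=
      Finset.exists_ne_map_eq_of_card_lt_of_maps_to hcard hmaps
    rcases hij.lt_or_gt with h | h
    · exact key i j h hgij
    · exact key j i h hgij.symm
  obtain ⟨p, hp1, hp⟩ := step
  rw [hε] at hp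
  exact reble_dense_tail α (Int.fract ((p:ℝ)*α)) u v p ⌊(p:ℝ)*α⌋ hp1
    (by rw [Int.fract]; ring) hu huv hv hp
set_option maxHeartbeats 8000000 in
/-- Reble's conjecture for OEIS A189377: `n` is of the form
`a(k) = k + ⌊ks/2⌋ + ⌊kt/2⌋` (with `s = (√5−1)/2`, `t = (1+√5)/2`) iff the
Fibonacci word has a monochromatic 3-term arithmetic progression of `0`s with
common difference `n+1` but none of `1`s. -/
theorem reble_A189377
    (α : ℝ) (hα : α = (3 - Real.sqrt 5) / 2)
    (f : ℕ → ℤ) (hf : ∀ n : ℕ, f n = ⌊((n : ℝ) + 2) * α⌋ - ⌊((n : ℝ) + 1) * α⌋)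
    (s t : ℝ) (hs : s = (Real.sqrt 5 - 1) / 2) (ht : t = (1 + Real.sqrt 5) / 2)
    (a : ℕ → ℤ) (ha : ∀ k : ℕ, a k = (k : ℤ) + ⌊(k : ℝ) * s / 2⌋ + ⌊(k : ℝ) * t / 2⌋) :
    ∀ n : ℕ, 1 ≤ n →
      (((∃ i : ℕ, f i = 0 ∧ f (i + (n + 1)) = 0 ∧ f (i + 2 * (n + 1)) = 0) ∧
        ¬(∃ j : ℕ, f j = 1 ∧ f (j + (n + 1)) = 1 ∧ f (j + 2 * (n + 1)) = 1)) ↔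
      (∃ k : ℕ, 1 ≤ k ∧ (n : ℤ) = a k)) := by
  have h5 : (Real.sqrt 5) ^ 2 = 5 := Real.sq_sqrt (by norm_num)
  have h5nn : 0 ≤ Real.sqrt 5 := Real.sqrt_nonneg 5
  have h5l : 2.236 < Real.sqrt 5 := by nlinarith
  have h5h : Real.sqrt 5 < 2.2361 := by nlinarith
  have hl : (0.3819:ℝ) < α := by rw [hα]; linarith
  have hh : α < (0.382:ℝ) := by rw [hα]; linarith
  have hq : α * α = 3*α - 1 := by rw [hα]; nlinarith
  have hirr : Irrational α := by
    rw [hα]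
    intro ⟨q, hqq⟩
    apply (by norm_num : Nat.Prime 5).irrational_sqrt
    refine ⟨3 - 2*q, ?_⟩
    push_cast
    linarith [hqq]
  have noteq : ∀ p q : ℤ, p ≠ 0 → (p:ℝ)*α ≠ (q:ℝ) := fun p q hp => (hirr.intCast_mul hp).ne_int q
  have hs1 : s = 1 - α := by rw [hs, hα]; ring
  have ht1 : t = 2 - α := by rw [ht, hα]; ring
  -- value of the Fibonacci word
  have fval : ∀ i : ℕ, f i = if 1 - α ≤ Int.fract (((i:ℝ)+1)*α) then 1 else 0 := by
    intro i
    rw [hf i]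
    have harg : ((i:ℝ)+2)*α = (((i:ℝ)+1)*α) + α := by ring
    have hfl : (((⌊((i:ℝ)+1)*α⌋ : ℤ)):ℝ) ≤ ((i:ℝ)+1)*α := Int.floor_le _
    have hfu : ((i:ℝ)+1)*α < ⌊((i:ℝ)+1)*α⌋ + 1 := Int.lt_floor_add_one _
    have hfr : Int.fract (((i:ℝ)+1)*α) = ((i:ℝ)+1)*α - ⌊((i:ℝ)+1)*α⌋ := rfl
    split
    case isTrue h =>
      have : ⌊((i:ℝ)+2)*α⌋ = ⌊((i:ℝ)+1)*α⌋ + 1 := by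
        rw [harg]
        refine reble_floor_eq ?_ ?_
        · push_cast; rw [hfr] at h; linarith
        · push_cast; linarith
      omega
    case isFalse h =>
      push_neg at h
      have : ⌊((i:ℝ)+2)*α⌋ = ⌊((i:ℝ)+1)*α⌋ := by
        rw [harg]
        refine reble_floor_eq ?_ ?_
        · push_cast; linarith
        · push_cast; rw [hfr] at h; linarith
      omega
  have f0 : ∀ i : ℕ, f i = 0 ↔ Int.fract (((i:ℝ)+1)*α) < 1 - α := by
    intro i
    rw [fval i]
    split
    case isTrue h => constructor <;> intro h2 <;> [omega; linarith]
    case isFalse h => push_neg at h; constructor <;> intro h2 <;> [exact h; rfl]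
  have f1 : ∀ i : ℕ, f i = 1 ↔ 1 - α ≤ Int.fract (((i:ℝ)+1)*α) := by
    intro i
    rw [fval i]
    split
    case isTrue h => constructor <;> intro h2 <;> [exact h; rfl]
    case isFalse h => push_neg at h; constructor <;> intro h2 <;> [omega; linarith]
  intro n hn
  set X := Int.fract (((n:ℝ)+1)*α) with hXdef
  set N := ⌊((n:ℝ)+1)*α⌋ with hNdef
  have hNX : ((n:ℝ)+1)*α = (N:ℝ) + X := by rw [hXdef, Int.fract]; ring
  have hX0 : 0 ≤ X := Int.fract_nonneg _
  have hX1 : X < 1 := Int.fract_lt_one _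
  -- shift lemmas
  have hsh : ∀ (i c : ℕ) (M : ℤ) (Y : ℝ), ((c:ℕ):ℝ)*α = (M:ℝ) + Y →
      Int.fract ((((i + c : ℕ):ℝ)+1)*α) = Int.fract (Int.fract (((i:ℝ)+1)*α) + Y) := by
    intro i c M Y hc
    have hfr_i : Int.fract (((i:ℝ)+1)*α) = ((i:ℝ)+1)*α - ⌊((i:ℝ)+1)*α⌋ := rfl
    have key : (((i + c : ℕ):ℝ)+1)*α
        = (Int.fract (((i:ℝ)+1)*α) + Y) + ((⌊((i:ℝ)+1)*α⌋ + M : ℤ):ℝ) := by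
      push_cast
      push_cast at hc
      rw [hfr_i]
      linarith [hc]
    rw [key, Int.fract_add_intCast]
  have hc1 : (((n+1 : ℕ)):ℝ)*α = ((N:ℤ):ℝ) + X := by push_cast; linarith [hNX]
  have hc2 : (((2*(n+1) : ℕ)):ℝ)*α = ((2*N:ℤ):ℝ) + 2*X := by push_cast; linarith [hNX]
  have hsh1 : ∀ i : ℕ, Int.fract ((((i + (n+1) : ℕ):ℝ)+1)*α)
      = Int.fract (Int.fract (((i:ℝ)+1)*α) + X) := fun i => hsh i (n+1) N X hc1
  have hsh2 : ∀ i : ℕ, Int.fract ((((i + 2*(n+1) : ℕ):ℝ)+1)*α)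
      = Int.fract (Int.fract (((i:ℝ)+1)*α) + 2*X) := fun i => hsh i (2*(n+1)) (2*N) (2*X) hc2
  -- boundary disequalities
  have hne0 : X ≠ 0 := by
    intro hc
    exact noteq (n+1) N (by omega) (by push_cast; linear_combination hNX + hc)
  have hneA : X ≠ α/2 := by
    intro hc
    exact noteq (2*n+1) (2*N) (by omega) (by push_cast; linear_combination 2*hNX + 2*hc)
  have hneB : X ≠ (1-α)/2 := by
    intro hc
    exact noteq (2*n+3) (2*N+1) (by omega) (by push_cast; linear_combination 2*hNX + 2*hc)
  have hneH : X ≠ 1/2 := by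
    intro hc
    exact noteq (2*n+2) (2*N+1) (by omega) (by push_cast; linear_combination 2*hNX + 2*hc)
  have hneC : X ≠ α := by
    intro hc
    exact noteq n N (by omega) (by push_cast; linear_combination hNX + hc)
  have hneD : X ≠ 1-α := by
    intro hc
    exact noteq (n+2) (N+1) (by omega) (by push_cast; linear_combination hNX + hc)
  have hneE : X ≠ (1+α)/2 := by
    intro hc
    exact noteq (2*n+1) (2*N+1) (by omega) (by push_cast; linear_combination 2*hNX + 2*hc)
  have hneF : X ≠ 1-α/2 := by
    intro hc
    exact noteq (2*n+3) (2*N+2) (by omega) (by push_cast; linear_combination 2*hNX + 2*hc)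
  -- no 3-AP of ones when X in U
  have H1NO : ((α/2 < X ∧ X < (1-α)/2) ∨ (α < X ∧ X < 1-α) ∨ ((1+α)/2 < X ∧ X < 1-α/2)) →
      ¬(∃ j : ℕ, f j = 1 ∧ f (j + (n + 1)) = 1 ∧ f (j + 2 * (n + 1)) = 1) := by
    rintro hU ⟨j, hj0, hj1, hj2⟩
    rw [f1] at hj0 hj1 hj2
    rw [hsh1 j] at hj1
    rw [hsh2 j] at hj2
    set y := Int.fract (((j:ℝ)+1)*α) with hy
    have hy1 : y < 1 := Int.fract_lt_one _
    rcases hU with ⟨h1, h2⟩ | ⟨h1, h2⟩ | ⟨h1, h2⟩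
    · have heq : Int.fract (y + 2*X) = y + 2*X - ((1:ℤ):ℝ) :=
        reble_fract_eq (by push_cast; linarith) (by push_cast; linarith)
      rw [heq] at hj2; push_cast at hj2; linarith
    · have heq : Int.fract (y + X) = y + X - ((1:ℤ):ℝ) :=
        reble_fract_eq (by push_cast; linarith) (by push_cast; linarith)
      rw [heq] at hj1; push_cast at hj1; linarith
    · have heq : Int.fract (y + 2*X) = y + 2*X - ((2:ℤ):ℝ) :=
        reble_fract_eq (by push_cast; linarith) (by push_cast; linarith)
      rw [heq] at hj2; push_cast at hj2; linarith
  -- no 3-AP of zeros when X in the middle complement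
  have H0NO : (((1-α)/2 < X ∧ X < α) ∨ (1-α < X ∧ X < (1+α)/2)) →
      ¬(∃ i : ℕ, f i = 0 ∧ f (i + (n + 1)) = 0 ∧ f (i + 2 * (n + 1)) = 0) := by
    rintro hc ⟨i, hi0, hi1, hi2⟩
    rw [f0] at hi0 hi1 hi2
    rw [hsh1 i] at hi1
    rw [hsh2 i] at hi2
    set y := Int.fract (((i:ℝ)+1)*α) with hy
    have hy0 : 0 ≤ y := Int.fract_nonneg _
    rcases hc with ⟨h1, h2⟩ | ⟨h1, h2⟩
    · rcases lt_or_ge (y + 2*X) 1 with h | h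
      · have heq : Int.fract (y + 2*X) = y + 2*X - ((0:ℤ):ℝ) :=
          reble_fract_eq (by push_cast; linarith) (by push_cast; linarith)
        rw [heq] at hi2; push_cast at hi2; linarith
      · have heq : Int.fract (y + X) = y + X - ((0:ℤ):ℝ) :=
          reble_fract_eq (by push_cast; linarith) (by push_cast; linarith)
        rw [heq] at hi1; push_cast at hi1; linarith
    · rcases lt_or_ge (y + X) 1 with h | h
      · have heq : Int.fract (y + X) = y + X - ((0:ℤ):ℝ) :=
          reble_fract_eq (by push_cast; linarith) (by push_cast; linarith)
        rw [heq] at hi1; push_cast at hi1; linarith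
      · have heq : Int.fract (y + 2*X) = y + 2*X - ((1:ℤ):ℝ) :=
          reble_fract_eq (by push_cast; linarith) (by push_cast; linarith)
        rw [heq] at hi2; push_cast at hi2; linarith
  -- existence of a 3-AP of ones when X near 0 or 1
  have H1AP : ((0 < X ∧ X < α/2) ∨ (1-α/2 < X ∧ X < 1)) →
      ∃ j : ℕ, f j = 1 ∧ f (j + (n + 1)) = 1 ∧ f (j + 2 * (n + 1)) = 1 := by
    rintro (⟨h1, h2⟩ | ⟨h1, h2⟩)
    · obtain ⟨m, hm1, hJ1, hJ2⟩ := reble_dense α hirr (1-α) (1-2*X)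
        (by linarith) (by linarith) (by linarith)
      refine ⟨m - 1, ?_, ?_, ?_⟩ <;>
        [rw [f1]; (rw [f1, hsh1 (m-1)]); (rw [f1, hsh2 (m-1)])] <;>
        rw [show ((((m-1:ℕ)):ℝ)+1) = ((m:ℕ):ℝ) by
          have : (m - 1) + 1 = m := by omega
          exact_mod_cast this]
      · linarith [hJ1]
      · have heq : Int.fract (Int.fract ((m:ℝ)*α) + X) = Int.fract ((m:ℝ)*α) + X - ((0:ℤ):ℝ) :=
          reble_fract_eq (by push_cast; linarith [Int.fract_nonneg ((m:ℝ)*α)])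
            (by push_cast; linarith)
        rw [heq]; push_cast; linarith
      · have heq : Int.fract (Int.fract ((m:ℝ)*α) + 2*X) = Int.fract ((m:ℝ)*α) + 2*X - ((0:ℤ):ℝ) :=
          reble_fract_eq (by push_cast; linarith [Int.fract_nonneg ((m:ℝ)*α)])
            (by push_cast; linarith)
        rw [heq]; push_cast; linarith
    · obtain ⟨m, hm1, hJ1, hJ2⟩ := reble_dense α hirr (3-α-2*X) 1
        (by linarith) (by linarith) le_rfl
      refine ⟨m - 1, ?_, ?_, ?_⟩ <;>
        [rw [f1]; (rw [f1, hsh1 (m-1)]); (rw [f1, hsh2 (m-1)])] <;>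
        rw [show ((((m-1:ℕ)):ℝ)+1) = ((m:ℕ):ℝ) by
          have : (m - 1) + 1 = m := by omega
          exact_mod_cast this]
      · linarith [hJ1]
      · have heq : Int.fract (Int.fract ((m:ℝ)*α) + X) = Int.fract ((m:ℝ)*α) + X - ((1:ℤ):ℝ) :=
          reble_fract_eq (by push_cast; linarith) (by push_cast; linarith)
        rw [heq]; push_cast; linarith
      · have heq : Int.fract (Int.fract ((m:ℝ)*α) + 2*X) = Int.fract ((m:ℝ)*α) + 2*X - ((2:ℤ):ℝ) :=
          reble_fract_eq (by push_cast; linarith) (by push_cast; linarith)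
        rw [heq]; push_cast; linarith
  -- existence of a 3-AP of zeros when X in U
  have H0AP : ((α/2 < X ∧ X < (1-α)/2) ∨ (α < X ∧ X < 1-α) ∨ ((1+α)/2 < X ∧ X < 1-α/2)) →
      ∃ i : ℕ, f i = 0 ∧ f (i + (n + 1)) = 0 ∧ f (i + 2 * (n + 1)) = 0 := by
    have main : ∀ (u v : ℝ) (l1 l2 : ℤ), 0 ≤ u → u < v → v ≤ 1 →
        (∀ y : ℝ, u < y → y < v → ((l1:ℝ) ≤ y + X ∧ y + X < l1 + 1 ∧ y + X - l1 < 1-α)) →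
        (∀ y : ℝ, u < y → y < v → ((l2:ℝ) ≤ y + 2*X ∧ y + 2*X < l2 + 1 ∧ y + 2*X - l2 < 1-α)) →
        v ≤ 1 - α →
        ∃ i : ℕ, f i = 0 ∧ f (i + (n + 1)) = 0 ∧ f (i + 2 * (n + 1)) = 0 := by
      intro u v l1 l2 hu huv hv hP1 hP2 hva
      obtain ⟨m, hm1, hJ1, hJ2⟩ := reble_dense α hirr u v hu huv hv
      refine ⟨m - 1, ?_, ?_, ?_⟩ <;>
        [rw [f0]; (rw [f0, hsh1 (m-1)]); (rw [f0, hsh2 (m-1)])] <;>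
        rw [show ((((m-1:ℕ)):ℝ)+1) = ((m:ℕ):ℝ) by
          have : (m - 1) + 1 = m := by omega
          exact_mod_cast this]
      · linarith
      · obtain ⟨ha1, ha2, ha3⟩ := hP1 (Int.fract ((m:ℝ)*α)) hJ1 hJ2
        rw [reble_fract_eq ha1 ha2]
        linarith
      · obtain ⟨ha1, ha2, ha3⟩ := hP2 (Int.fract ((m:ℝ)*α)) hJ1 hJ2
        rw [reble_fract_eq ha1 ha2]
        linarith
    rintro (⟨h1, h2⟩ | ⟨h1, h2⟩ | ⟨h1, h2⟩)
    · refine main 0 (1-α-2*X) 0 0 le_rfl (by linarith) (by linarith) ?_ ?_ (by linarith)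
      · intro y hy1 hy2
        refine ⟨by push_cast; linarith, by push_cast; linarith, by push_cast; linarith⟩
      · intro y hy1 hy2
        refine ⟨by push_cast; linarith, by push_cast; linarith, by push_cast; linarith⟩
    · rcases hneH.lt_or_gt with hhalf | hhalf
      · -- X < 1/2
        refine main (1-2*X) (1-α-X) 0 1 (by linarith) (by linarith) (by linarith) ?_ ?_ (by linarith)
        · intro y hy1 hy2
          refine ⟨by push_cast; linarith, by push_cast; linarith, by push_cast; linarith⟩
        · intro y hy1 hy2
          refine ⟨by push_cast; linarith, by push_cast; linarith, by push_cast; linarith⟩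
      · -- X > 1/2
        refine main (1-X) (2-2*X-α) 1 1 (by linarith) (by linarith) (by linarith) ?_ ?_ (by linarith)
        · intro y hy1 hy2
          refine ⟨by push_cast; linarith, by push_cast; linarith, by push_cast; linarith⟩
        · intro y hy1 hy2
          refine ⟨by push_cast; linarith, by push_cast; linarith, by push_cast; linarith⟩
    · refine main (2-2*X) (1-α) 1 2 (by linarith) (by linarith) (by linarith) ?_ ?_ (by linarith)
      · intro y hy1 hy2
        refine ⟨by push_cast; linarith, by push_cast; linarith, by push_cast; linarith⟩
      · intro y hy1 hy2
        refine ⟨by push_cast; linarith, by push_cast; linarith, by push_cast; linarith⟩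
  -- computation of a at even arguments
  have evenMain : ∀ m : ℕ, 1 ≤ m → ∃ (A NA : ℤ) (Y : ℝ), a (2*m) = A ∧
      ((A:ℝ)+1)*α = (NA:ℝ) + Y ∧ α < Y ∧ Y < 1-α ∧ NA = ⌊(m:ℝ)*(2-α)⌋ := by
    intro m hm
    set Fm := ⌊(m:ℝ)*α⌋ with hFmdef
    set u := Int.fract ((m:ℝ)*α) with hudef
    have hFu : (Fm:ℝ) = (m:ℝ)*α - u := by rw [hudef, Int.fract]; ring
    have hu0 : 0 ≤ u := Int.fract_nonneg _
    have hu1 : u < 1 := Int.fract_lt_one _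
    have hune : u ≠ 0 := by
      intro hc
      exact noteq m Fm (by omega) (by push_cast; linarith [hFu, hc])
    have hu0' : 0 < u := lt_of_le_of_ne hu0 (Ne.symm hune)
    have hfl1 : ⌊((2*m:ℕ):ℝ) * s / 2⌋ = (m:ℤ) - Fm - 1 := by
      rw [hs1]
      refine reble_floor_eq ?_ ?_ <;> push_cast <;> nlinarith [hFu]
    have hfl2 : ⌊((2*m:ℕ):ℝ) * t / 2⌋ = 2*(m:ℤ) - Fm - 1 := by
      rw [ht1]
      refine reble_floor_eq ?_ ?_ <;> push_cast <;> nlinarith [hFu]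
    have hA : a (2*m) = 5*(m:ℤ) - 2*Fm - 2 := by
      rw [ha (2*m), hfl1, hfl2]; push_cast; ring
    refine ⟨5*(m:ℤ) - 2*Fm - 2, 2*(m:ℤ) - Fm - 1, 1 - α - u*(1-2*α), hA, ?_, ?_, ?_, ?_⟩
    · push_cast
      linear_combination (1-2*α)*hFu + (-2*(m:ℝ))*hq
    · nlinarith [hu1]
    · nlinarith [hu0']
    · refine (reble_floor_eq ?_ ?_).symm <;> push_cast <;> nlinarith [hFu]
  -- computation of a at odd arguments
  have oddMain : ∀ m : ℕ, ∃ (A NA : ℤ) (Y : ℝ), a (2*m+1) = A ∧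
      ((A:ℝ)+1)*α = (NA:ℝ) + Y ∧
      ((α/2 < Y ∧ Y < (1-α)/2) ∨ ((1+α)/2 < Y ∧ Y < 1-α/2)) ∧
      NA = (m:ℤ) + ⌊(m:ℝ)*(1-α) + 1 - α/2⌋ := by
    intro m
    set Fm := ⌊(m:ℝ)*α⌋ with hFmdef
    set u := Int.fract ((m:ℝ)*α) with hudef
    have hFu : (Fm:ℝ) = (m:ℝ)*α - u := by rw [hudef, Int.fract]; ring
    have hu0 : 0 ≤ u := Int.fract_nonneg _
    have hu1 : u < 1 := Int.fract_lt_one _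
    have hub1 : u ≠ (1-α)/2 := by
      intro hc
      exact noteq (2*m+1) (2*Fm+1) (by omega)
        (by push_cast; linear_combination (-2)*hFu + 2*hc)
    have hub2 : u ≠ 1-α/2 := by
      intro hc
      exact noteq (2*m+1) (2*Fm+2) (by omega)
        (by push_cast; linear_combination (-2)*hFu + 2*hc)
    have harg1 : ((2*m+1:ℕ):ℝ) * s / 2 = (m:ℝ) - Fm - u + (1-α)/2 := by
      rw [hs1]; push_cast; linarith [hFu]
    have harg2 : ((2*m+1:ℕ):ℝ) * t / 2 = 2*(m:ℝ) - Fm - u + 1 - α/2 := by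
      rw [ht1]; push_cast; linarith [hFu]
    rcases lt_trichotomy u ((1-α)/2) with hcase | hcase | hcase
    · -- case (a)
      have hfl1 : ⌊((2*m+1:ℕ):ℝ) * s / 2⌋ = (m:ℤ) - Fm := by
        rw [harg1]
        refine reble_floor_eq ?_ ?_ <;> push_cast <;> linarith
      have hfl2 : ⌊((2*m+1:ℕ):ℝ) * t / 2⌋ = 2*(m:ℤ) - Fm := by
        rw [harg2]
        refine reble_floor_eq ?_ ?_ <;> push_cast <;> linarith
      have hA : a (2*m+1) = 5*(m:ℤ) + 1 - 2*Fm := by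
        rw [ha (2*m+1), hfl1, hfl2]; push_cast; ring
      refine ⟨5*(m:ℤ) + 1 - 2*Fm, 2*(m:ℤ) - Fm, 2*α - u*(1-2*α), hA, ?_, ?_, ?_⟩
      · push_cast
        linear_combination (1-2*α)*hFu + (-2*(m:ℝ))*hq
      · right
        constructor
        · nlinarith [hq, mul_le_mul_of_nonneg_right hcase.le (show (0:ℝ) ≤ 1-2*α by linarith)]
        · nlinarith [hu0]
      · have : ⌊(m:ℝ)*(1-α) + 1 - α/2⌋ = (m:ℤ) - Fm := by
          refine reble_floor_eq ?_ ?_ <;> push_cast <;> nlinarith [hFu]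
        rw [this]; ring
    · exact absurd hcase hub1
    · rcases lt_trichotomy u (1-α/2) with hcase2 | hcase2 | hcase2
      · -- case (b)
        have hfl1 : ⌊((2*m+1:ℕ):ℝ) * s / 2⌋ = (m:ℤ) - Fm - 1 := by
          rw [harg1]
          refine reble_floor_eq ?_ ?_ <;> push_cast <;> linarith
        have hfl2 : ⌊((2*m+1:ℕ):ℝ) * t / 2⌋ = 2*(m:ℤ) - Fm := by
          rw [harg2]
          refine reble_floor_eq ?_ ?_ <;> push_cast <;> linarith
        have hA : a (2*m+1) = 5*(m:ℤ) - 2*Fm := by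
          rw [ha (2*m+1), hfl1, hfl2]; push_cast; ring
        refine ⟨5*(m:ℤ) - 2*Fm, 2*(m:ℤ) - Fm, α - u*(1-2*α), hA, ?_, ?_, ?_⟩
        · push_cast
          linear_combination (1-2*α)*hFu + (-2*(m:ℝ))*hq
        · left
          constructor
          · nlinarith [hq, mul_le_mul_of_nonneg_right hcase2.le (show (0:ℝ) ≤ 1-2*α by linarith)]
          · nlinarith [hq, mul_le_mul_of_nonneg_right hcase.le (show (0:ℝ) ≤ 1-2*α by linarith)]
        · have : ⌊(m:ℝ)*(1-α) + 1 - α/2⌋ = (m:ℤ) - Fm := by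
            refine reble_floor_eq ?_ ?_ <;> push_cast <;> nlinarith [hFu]
          rw [this]; ring
      · exact absurd hcase2 hub2
      · -- case (c)
        have hfl1 : ⌊((2*m+1:ℕ):ℝ) * s / 2⌋ = (m:ℤ) - Fm - 1 := by
          rw [harg1]
          refine reble_floor_eq ?_ ?_ <;> push_cast <;> linarith
        have hfl2 : ⌊((2*m+1:ℕ):ℝ) * t / 2⌋ = 2*(m:ℤ) - Fm - 1 := by
          rw [harg2]
          refine reble_floor_eq ?_ ?_ <;> push_cast <;> linarith
        have hA : a (2*m+1) = 5*(m:ℤ) - 1 - 2*Fm := by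
          rw [ha (2*m+1), hfl1, hfl2]; push_cast; ring
        refine ⟨5*(m:ℤ) - 1 - 2*Fm, 2*(m:ℤ) - Fm - 1, 1 - u*(1-2*α), hA, ?_, ?_, ?_⟩
        · push_cast
          linear_combination (1-2*α)*hFu + (-2*(m:ℝ))*hq
        · right
          constructor
          · nlinarith [hu1]
          · nlinarith [hq, mul_le_mul_of_nonneg_right hcase2.le (show (0:ℝ) ≤ 1-2*α by linarith)]
        · have : ⌊(m:ℝ)*(1-α) + 1 - α/2⌋ = (m:ℤ) - Fm - 1 := by
            refine reble_floor_eq ?_ ?_ <;> push_cast <;> nlinarith [hFu]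
          rw [this]; ring
  -- from membership in the sequence to the interval condition
  have HkU : (∃ k : ℕ, 1 ≤ k ∧ (n:ℤ) = a k) →
      ((α/2 < X ∧ X < (1-α)/2) ∨ (α < X ∧ X < 1-α) ∨ ((1+α)/2 < X ∧ X < 1-α/2)) := by
    rintro ⟨k, hk1, hkn⟩
    rcases Nat.even_or_odd k with ⟨m, hm⟩ | ⟨m, hm⟩
    · have hm1 : 1 ≤ m := by omega
      obtain ⟨A, NA, Y, hA, hid, hY1, hY2, _⟩ := evenMain m hm1
      have hnA : (n:ℤ) = A := by rw [hkn, show k = 2*m by omega, hA]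
      have hnR : ((n:ℝ)+1)*α = Y + ((NA:ℤ):ℝ) := by
        have : ((n:ℝ)) = ((A:ℤ):ℝ) := by exact_mod_cast hnA
        rw [this]; linarith [hid]
      have hXY : X = Y := by
        rw [hXdef, hnR, Int.fract_add_intCast, Int.fract_eq_self.mpr ⟨by linarith, by linarith⟩]
      right; left
      exact ⟨by linarith [hXY], by linarith [hXY]⟩
    · obtain ⟨A, NA, Y, hA, hid, hYc, _⟩ := oddMain m
      have hnA : (n:ℤ) = A := by rw [hkn, hm, hA]
      have hnR : ((n:ℝ)+1)*α = Y + ((NA:ℤ):ℝ) := by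
        have : ((n:ℝ)) = ((A:ℤ):ℝ) := by exact_mod_cast hnA
        rw [this]; linarith [hid]
      rcases hYc with ⟨hY1, hY2⟩ | ⟨hY1, hY2⟩
      · have hXY : X = Y := by
          rw [hXdef, hnR, Int.fract_add_intCast, Int.fract_eq_self.mpr ⟨by linarith, by linarith⟩]
        left
        exact ⟨by linarith [hXY], by linarith [hXY]⟩
      · have hXY : X = Y := by
          rw [hXdef, hnR, Int.fract_add_intCast, Int.fract_eq_self.mpr ⟨by linarith, by linarith⟩]
        right; right
        exact ⟨by linarith [hXY], by linarith [hXY]⟩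
  -- identification helpers
  have Dres : ∀ (A : ℤ) (Y : ℝ), ((A:ℝ)+1)*α = (N:ℝ) + Y → -α < X - Y → X - Y < α →
      (n:ℤ) = A := by
    intro A Y hid hlo hhi
    have hD : (((n:ℤ) - A : ℤ):ℝ)*α = X - Y := by
      push_cast; linear_combination hNX - hid
    by_contra hne
    have h1 : 1 ≤ |(n:ℤ) - A| := Int.one_le_abs (by omega)
    have h2 : (1:ℝ) ≤ |(((n:ℤ) - A : ℤ):ℝ)| := by
      rw [← Int.cast_abs]; exact_mod_cast h1
    have h5 : |(((n:ℤ)-A:ℤ):ℝ) * α| = |(((n:ℤ)-A:ℤ):ℝ)| * α := by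
      rw [abs_mul, abs_of_pos (show (0:ℝ) < α by linarith)]
    have h6 : |X - Y| < α := abs_lt.mpr ⟨by linarith, hhi⟩
    rw [hD] at h5
    nlinarith [h2, h5, h6, abs_nonneg (X - Y)]
  have Dcross : ∀ (A : ℤ) (Y : ℝ), ((A:ℝ)+1)*α = (N:ℝ) + Y → α < |X - Y| → |X - Y| < 1-α →
      False := by
    intro A Y hid hlo hhi
    have hD : (((n:ℤ) - A : ℤ):ℝ)*α = X - Y := by
      push_cast; linear_combination hNX - hid
    have h5 : |(((n:ℤ)-A:ℤ):ℝ) * α| = |(((n:ℤ)-A:ℤ):ℝ)| * α := by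
      rw [abs_mul, abs_of_pos (show (0:ℝ) < α by linarith)]
    rw [hD] at h5
    have hcast : |(((n:ℤ)-A:ℤ):ℝ)| = ((|(n:ℤ) - A| : ℤ):ℝ) := by rw [Int.cast_abs]
    rcases (by omega : |(n:ℤ) - A| ≤ 1 ∨ 2 ≤ |(n:ℤ) - A|) with h | h
    · have : ((|(n:ℤ) - A| : ℤ):ℝ) ≤ 1 := by exact_mod_cast h
      nlinarith [h5, hcast]
    · have : (2:ℝ) ≤ ((|(n:ℤ) - A| : ℤ):ℝ) := by exact_mod_cast h
      nlinarith [h5, hcast]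
  -- Na identity
  have hNa : (N:ℝ)*α = 3*(N:ℝ) - (n:ℝ) + (X*(3-α) - 1) := by
    linear_combination (3-α)*hNX + ((n:ℝ)+1)*hq
  have hn' : (1:ℝ) ≤ (n:ℝ) := by exact_mod_cast hn
  -- from the interval condition to membership in the sequence
  have oddcase : ∀ (M : ℤ) (w : ℝ), (M:ℝ) = (N:ℝ)*(1-α) + 1/2 - α - w → 0 < w → w < 1-α →
      ((α/2 < X ∧ X < (1-α)/2) ∨ ((1+α)/2 < X ∧ X < 1-α/2)) →
      ∃ k : ℕ, 1 ≤ k ∧ (n:ℤ) = a k := by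
    intro M w hPid hw0 hw1 hXI
    have hNlow : 2*α - X ≤ (N:ℝ) := by
      nlinarith [hNX, mul_le_mul_of_nonneg_right (show (2:ℝ) ≤ (n:ℝ)+1 by linarith)
        (show (0:ℝ) ≤ α by linarith)]
    have hXlt : X < 1-α/2 := by
      rcases hXI with ⟨_, h⟩ | ⟨_, h⟩ <;> linarith
    have hN0 : 0 ≤ N := by
      have h7 : (-1:ℝ) < (N:ℝ) := by linarith
      have h8 : (-1:ℤ) < N := by exact_mod_cast h7
      omega
    have hN0' : (0:ℝ) ≤ (N:ℝ) := by exact_mod_cast hN0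
    have hmZ0 : 0 ≤ M := by
      have h7 : (-1:ℝ) < (M:ℝ) := by nlinarith [hPid]
      have h8 : (-1:ℤ) < M := by exact_mod_cast h7
      omega
    have hflm : ⌊(M:ℝ)*(1-α) + 1 - α/2⌋ = N - M := by
      have hexp : (M:ℝ)*(1-α) + 1 - α/2 = (((N - M : ℤ)):ℝ) + (1 - w*(2-α)) := by
        push_cast
        linear_combination (2-α)*hPid + ((N:ℝ)+1)*hq
      refine reble_floor_eq ?_ ?_ <;> rw [hexp] <;> push_cast <;>
        nlinarith [hq, mul_lt_mul_of_pos_right hw1 (show (0:ℝ) < 2-α by linarith),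
          mul_pos hw0 (show (0:ℝ) < 2-α by linarith)]
    have htn : ((M.toNat : ℕ):ℝ) = (M:ℝ) := by
      exact_mod_cast Int.toNat_of_nonneg hmZ0
    obtain ⟨A, NA, Y, hA, hid, hYc, hNAfl⟩ := oddMain M.toNat
    rw [htn, hflm] at hNAfl
    have hNAN : NA = N := by
      rw [hNAfl]
      have : (M.toNat : ℤ) = M := Int.toNat_of_nonneg hmZ0
      omega
    rw [hNAN] at hid
    refine ⟨2*M.toNat + 1, by omega, ?_⟩
    rw [hA]
    rcases hXI with ⟨hx1, hx2⟩ | ⟨hx1, hx2⟩ <;> rcases hYc with ⟨hY1, hY2⟩ | ⟨hY1, hY2⟩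
    · exact Dres A Y hid (by linarith) (by linarith)
    · exact absurd (Dcross A Y hid (by rw [abs_of_neg (by linarith)]; linarith)
        (by rw [abs_of_neg (by linarith)]; linarith)) (by simp)
    · exact absurd (Dcross A Y hid (by rw [abs_of_pos (by linarith)]; linarith)
        (by rw [abs_of_pos (by linarith)]; linarith)) (by simp)
    · exact Dres A Y hid (by linarith) (by linarith)
  have HUk : ((α/2 < X ∧ X < (1-α)/2) ∨ (α < X ∧ X < 1-α) ∨ ((1+α)/2 < X ∧ X < 1-α/2)) →
      ∃ k : ℕ, 1 ≤ k ∧ (n:ℤ) = a k := by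
    have h3α : (0:ℝ) < 3-α := by linarith
    rintro (⟨h1, h2⟩ | ⟨h1, h2⟩ | ⟨h1, h2⟩)
    · -- odd, I₁
      refine oddcase ((n:ℤ) - 2*N) (3/2 - α - X*(3-α)) (by push_cast; linarith [hNa]) ?_ ?_
        (Or.inl ⟨h1, h2⟩)
      · nlinarith [hq, mul_lt_mul_of_pos_right h2 h3α]
      · nlinarith [hq, mul_lt_mul_of_pos_right h1 h3α]
    · -- even
      have hNlow : 2*α - X ≤ (N:ℝ) := by
        nlinarith [hNX, mul_le_mul_of_nonneg_right (show (2:ℝ) ≤ (n:ℝ)+1 by linarith)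
          (show (0:ℝ) ≤ α by linarith)]
      have hN1 : 1 ≤ N := by
        have h7 : (0:ℝ) < (N:ℝ) := by nlinarith
        have h8 : (0:ℤ) < N := by exact_mod_cast h7
        omega
      have hN1' : (1:ℝ) ≤ (N:ℝ) := by exact_mod_cast hN1
      have hv0 : 0 < X*(3-α) - 1 := by
        nlinarith [hq, mul_lt_mul_of_pos_right h1 h3α]
      have hv1 : X*(3-α) - 1 < 1-α := by
        nlinarith [hq, mul_lt_mul_of_pos_right h2 h3α]
      set mZ : ℤ := (n:ℤ) - 2*N with hmZdef
      have hmZR : (mZ:ℝ) = (N:ℝ)*(1-α) + (X*(3-α) - 1) := by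
        rw [hmZdef]; push_cast; linarith [hNa]
      have hmZ1 : 1 ≤ mZ := by
        have h7 : (0:ℝ) < (mZ:ℝ) := by nlinarith
        have h8 : (0:ℤ) < mZ := by exact_mod_cast h7
        omega
      have hflm : ⌊(mZ:ℝ)*(2-α)⌋ = N := by
        have hexp : (mZ:ℝ)*(2-α) = (N:ℝ) + (X*(3-α) - 1)*(2-α) := by
          linear_combination (2-α)*hmZR + (N:ℝ)*hq
        refine reble_floor_eq ?_ ?_ <;> rw [hexp] <;>
          nlinarith [hq, mul_lt_mul_of_pos_right hv1 (show (0:ℝ) < 2-α by linarith),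
            mul_pos hv0 (show (0:ℝ) < 2-α by linarith)]
      have htn : ((mZ.toNat : ℕ):ℝ) = (mZ:ℝ) := by
        exact_mod_cast Int.toNat_of_nonneg (by omega : (0:ℤ) ≤ mZ)
      obtain ⟨A, NA, Y, hA, hid, hY1, hY2, hNAfl⟩ := evenMain mZ.toNat (by omega)
      rw [htn, hflm] at hNAfl
      rw [hNAfl] at hid
      refine ⟨2*mZ.toNat, by omega, ?_⟩
      rw [hA]
      exact Dres A Y hid (by linarith) (by linarith)
    · -- odd, I₃
      refine oddcase ((n:ℤ) - 2*N - 1) (5/2 - α - X*(3-α)) (by push_cast; linarith [hNa]) ?_ ?_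
        (Or.inr ⟨h1, h2⟩)
      · nlinarith [hq, mul_lt_mul_of_pos_right h2 h3α]
      · nlinarith [hq, mul_lt_mul_of_pos_right h1 h3α]
  -- final assembly
  constructor
  · rintro ⟨hex, hno⟩
    apply HUk
    by_contra hU
    push_neg at hU
    obtain ⟨hU1, hU2, hU3⟩ := hU
    have hXpos : 0 < X := lt_of_le_of_ne hX0 (Ne.symm hne0)
    rcases lt_or_ge X (α/2) with h | h
    · exact hno (H1AP (Or.inl ⟨hXpos, h⟩))
    · have h' : α/2 < X := lt_of_le_of_ne h (Ne.symm hneA)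
      have hB : (1-α)/2 ≤ X := hU1 h'
      have hB' : (1-α)/2 < X := lt_of_le_of_ne hB (Ne.symm hneB)
      rcases lt_or_ge X α with h2 | h2
      · exact (H0NO (Or.inl ⟨hB', h2⟩)) hex
      · have h2' : α < X := lt_of_le_of_ne h2 (Ne.symm hneC)
        have hD : 1-α ≤ X := hU2 h2'
        have hD' : 1-α < X := lt_of_le_of_ne hD (Ne.symm hneD)
        rcases lt_or_ge X ((1+α)/2) with h3 | h3
        · exact (H0NO (Or.inr ⟨hD', h3⟩)) hex
        · have h3' : (1+α)/2 < X := lt_of_le_of_ne h3 (Ne.symm hneE)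
          have hF : 1-α/2 ≤ X := hU3 h3'
          have hF' : 1-α/2 < X := lt_of_le_of_ne hF (Ne.symm hneF)
          exact hno (H1AP (Or.inr ⟨hF', hX1⟩))
  · intro hk
    have hU := HkU hk
    exact ⟨H0AP hU, H1NO hU⟩
end

section
/- Let α = (3 − √5)/2, and define the Fibonacci word f : ℕ → ℤ by f(n) = ⌊(n+2)α⌋ − ⌊(n+1)α⌋. Let s = (√5 − 1)/2 and t = (1 + √5)/2, and define b(k) = k + ⌊2k/s⌋ + ⌊kt/s⌋ (equivalently b(k) = k + ⌊k(√5+1)⌋ + ⌊k(3+√5)/2⌋). Then for every integer n ≥ 1, the following are equivalent: (1) there is no i ≥ 0 with f(i) = f(i + (n+1)) = f(i + 2(n+1)) = 0 and there is no j ≥ 0 with f(j) = f(j + (n+1)) = f(j + 2(n+1)) = 1; (2) there exists an integer k ≥ 1 with n = b(k). -/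
namespace Reble

noncomputable def B : ℝ := (Real.sqrt 5 - 1) / 2

lemma B_sq : B ^ 2 = 1 - B := by
  unfold B; nlinarith [Real.sq_sqrt (by norm_num : (5:ℝ) ≥ 0)]

lemma B_gt : 0.618 < B := by
  unfold B; nlinarith [Real.sq_sqrt (by norm_num : (5:ℝ) ≥ 0), Real.sqrt_nonneg 5]
lemma B_lt : B < 0.61805 := by
  unfold B; nlinarith [Real.sq_sqrt (by norm_num : (5:ℝ) ≥ 0), Real.sqrt_nonneg 5]

lemma irrB : Irrational B := by
  have h5 : Irrational (Real.sqrt 5) := (Nat.prime_five).irrational_sqrt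
  have h1 : Irrational (Real.sqrt 5 - (1:ℤ)) := h5.sub_intCast 1
  have h2 := h1.div_intCast (m := 2) (by norm_num)
  simpa [B] using h2

lemma B_comb {p q : ℤ} (hq : q ≠ 0) (h : (p : ℝ) + q * B = 0) : False := by
  have h1 : Irrational ((q : ℝ) * B) := irrB.intCast_mul hq
  have h2 : ((q:ℝ) * B) = ((-p : ℤ) : ℝ) := by push_cast; linarith
  exact (h2 ▸ h1).ne_int (-p) rfl


lemma dense_fract (ξ : ℝ) (hirr : ∀ p q : ℤ, q ≠ 0 → (p:ℝ) + q*ξ ≠ 0)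
    (u v : ℝ) (h0 : 0 ≤ u) (h1 : v ≤ 1) (huv : u < v) :
    ∃ m : ℕ, 1 ≤ m ∧ u < Int.fract ((m:ℝ)*ξ) ∧ Int.fract ((m:ℝ)*ξ) < v := by
  obtain ⟨n, hn⟩ := exists_nat_one_div_lt (show (0:ℝ) < v - u by linarith)
  obtain ⟨j, k, hk0, hkn, hjk⟩ := Real.exists_int_int_abs_mul_sub_le ξ (Nat.succ_pos n)
  set η := (k:ℝ)*ξ - j with hη
  have hηne : η ≠ 0 := by
    intro h
    exact hirr (-j) k (by omega) (by push_cast; linarith)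
  have hηlt : |η| < v - u := by
    calc |η| ≤ 1 / ((n+1 : ℕ) + 1) := hjk
    _ ≤ 1 / ((n:ℝ) + 1) := by
        apply div_le_div_of_nonneg_left (by norm_num) (by positivity)
        push_cast; linarith
    _ < v - u := hn
  rcases lt_or_gt_of_ne hηne with hneg | hpos
  · -- η < 0 case
    set η' := -η with hη'
    have hη'pos : 0 < η' := by simp [hη']; linarith
    have habs : η' < v - u := by rw [abs_of_neg hneg] at hηlt; linarith
    set J : ℤ := ⌊(1-v)/η'⌋ + 1 with hJ
    have hJ1 : 1 ≤ J := by
      have : (0:ℤ) ≤ ⌊(1-v)/η'⌋ := Int.floor_nonneg.2 (div_nonneg (by linarith) hη'pos.le)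
      omega
    have hJr : (J:ℝ) = (⌊(1-v)/η'⌋ : ℝ) + 1 := by rw [hJ]; push_cast; ring
    have hlow : 1 - v < (J:ℝ) * η' := by
      have h2 := Int.lt_floor_add_one ((1-v)/η')
      rw [div_lt_iff₀ hη'pos] at h2
      rw [hJr]; linarith
    have hhigh : (J:ℝ) * η' < 1 - u := by
      have h2 := Int.floor_le ((1-v)/η')
      rw [le_div_iff₀ hη'pos] at h2
      rw [hJr]; nlinarith
    clear hJ hJr
    clear_value J
    have h1 : (0:ℤ) < J * k := mul_pos (by omega) hk0
    refine ⟨(J*k).toNat, by omega, ?_, ?_⟩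
    all_goals {
      have hmk : (((J*k).toNat : ℕ) : ℝ) = (J:ℝ) * (k:ℝ) := by
        have h2 : ((J*k).toNat : ℤ) = J*k := Int.toNat_of_nonneg h1.le
        have h3 := congrArg (Int.cast : ℤ → ℝ) h2
        push_cast at h3
        exact h3
      rw [hmk]
      have e1 : (J:ℝ) * (k:ℝ) * ξ = ((J*j : ℤ) : ℝ) + (-((J:ℝ) * η')) := by
        rw [hη', hη]; push_cast; ring
      rw [e1, Int.fract_intCast_add]
      have e2 : Int.fract ((J:ℝ) * η') = (J:ℝ) * η' := by
        rw [Int.fract_eq_self]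
        constructor <;> nlinarith
      rw [Int.fract_neg (by rw [e2]; nlinarith), e2]
      linarith
    }
  · -- η > 0 case
    have habs : η < v - u := by rw [abs_of_pos hpos] at hηlt; linarith
    set J : ℤ := ⌊u/η⌋ + 1 with hJ
    have hJ1 : 1 ≤ J := by
      have : (0:ℤ) ≤ ⌊u/η⌋ := Int.floor_nonneg.2 (div_nonneg h0 hpos.le)
      omega
    have hJr : (J:ℝ) = (⌊u/η⌋ : ℝ) + 1 := by rw [hJ]; push_cast; ring
    have hlow : u < (J:ℝ) * η := by
      have h2 := Int.lt_floor_add_one (u/η)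
      rw [div_lt_iff₀ hpos] at h2
      rw [hJr]; linarith
    have hhigh : (J:ℝ) * η < v := by
      have h2 := Int.floor_le (u/η)
      rw [le_div_iff₀ hpos] at h2
      rw [hJr]; nlinarith
    clear hJ hJr
    clear_value J
    have h1 : (0:ℤ) < J * k := mul_pos (by omega) hk0
    refine ⟨(J*k).toNat, by omega, ?_, ?_⟩
    all_goals {
      have hmk : (((J*k).toNat : ℕ) : ℝ) = (J:ℝ) * (k:ℝ) := by
        have h2 : ((J*k).toNat : ℤ) = J*k := Int.toNat_of_nonneg h1.le
        have h3 := congrArg (Int.cast : ℤ → ℝ) h2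
        push_cast at h3
        exact h3
      rw [hmk]
      have e1 : (J:ℝ) * (k:ℝ) * ξ = ((J*j : ℤ) : ℝ) + ((J:ℝ) * η) := by
        rw [hη]; push_cast; ring
      rw [e1, Int.fract_intCast_add]
      have e2 : Int.fract ((J:ℝ) * η) = (J:ℝ) * η := by
        rw [Int.fract_eq_self]
        constructor <;> nlinarith
      rw [e2]
      linarith
    }


lemma fract_eq_add_int (y : ℝ) (N : ℤ) (h1 : 0 ≤ y + (N:ℝ)) (h2 : y + (N:ℝ) < 1) :
    Int.fract y = y + (N:ℝ) := by
  have e : Int.fract y = Int.fract (y + (N:ℝ)) := (Int.fract_add_intCast y N).symm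
  rw [e, Int.fract_eq_self.2 ⟨h1, h2⟩]

section withf
variable {α : ℝ} (hα : α = 1 - B) {f : ℕ → ℤ}
  (hf : ∀ n : ℕ, f n = ⌊((n : ℝ) + 2) * α⌋ - ⌊((n : ℝ) + 1) * α⌋)

include hα hf

lemma f_floor (m : ℕ) : f m = ⌊Int.fract (((m:ℝ)+1)*α) + α⌋ := by
  have e1 : ((m:ℝ)+2)*α = (⌊((m:ℝ)+1)*α⌋ : ℤ) + (Int.fract (((m:ℝ)+1)*α) + α) := by
    rw [Int.fract]; push_cast; ring
  rw [hf m, e1, Int.floor_intCast_add]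
  ring

lemma f_zero_iff (m : ℕ) : f m = 0 ↔ Int.fract (((m:ℝ)+1)*α) < B := by
  have hfl := f_floor hα hf m
  set y := Int.fract (((m:ℝ)+1)*α) with hy
  have hy0 : 0 ≤ y := Int.fract_nonneg _
  have hy1 : y < 1 := Int.fract_lt_one _
  constructor
  · intro h0
    have h1 : y + α < (⌊y + α⌋ : ℝ) + 1 := Int.lt_floor_add_one _
    rw [← hfl, h0] at h1
    push_cast at h1
    rw [hα] at h1; linarith
  · intro h
    rw [hfl]
    rw [Int.floor_eq_zero_iff]
    simp only [Set.mem_Ico]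
    rw [hα]
    constructor <;> linarith [B_gt, B_lt]

lemma f_one_iff (m : ℕ) : f m = 1 ↔ B ≤ Int.fract (((m:ℝ)+1)*α) := by
  have hfl := f_floor hα hf m
  set y := Int.fract (((m:ℝ)+1)*α) with hy
  have hy0 : 0 ≤ y := Int.fract_nonneg _
  have hy1 : y < 1 := Int.fract_lt_one _
  constructor
  · intro h1
    have h2 : (⌊y + α⌋ : ℝ) ≤ y + α := Int.floor_le _
    rw [← hfl, h1] at h2
    push_cast at h2
    rw [hα] at h2; linarith
  · intro h
    rw [hfl]
    rw [Int.floor_eq_iff]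
    rw [hα]
    constructor <;> push_cast <;> linarith [B_gt, B_lt]

/-- dichotomy -/
lemma f_not_zero (m : ℕ) (h : f m ≠ 0) : f m = 1 := by
  by_contra h1
  rw [Ne, f_zero_iff hα hf m] at h
  rw [f_one_iff hα hf m] at h1
  push_neg at h h1
  linarith


omit hf in
lemma fract_shift (i j : ℕ) :
    Int.fract ((((i+j : ℕ) : ℝ) + 1)*α) = Int.fract (Int.fract (((i:ℝ)+1)*α) - (j:ℝ)*B) := by
  have e : (((i+j : ℕ) : ℝ) + 1)*α
      = ((⌊((i:ℝ)+1)*α⌋ + (j:ℤ)) : ℤ) + (Int.fract (((i:ℝ)+1)*α) - (j:ℝ)*B) := by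
    rw [Int.fract]; push_cast; rw [hα]; ring
  rw [e, Int.fract_intCast_add]

omit hf in
lemma partA {d i : ℕ}
    (hgood : (B/2 < Int.fract ((d:ℝ)*B) ∧ Int.fract ((d:ℝ)*B) < 1 - B) ∨
      (B < Int.fract ((d:ℝ)*B) ∧ Int.fract ((d:ℝ)*B) < 1 - B/2))
    (lo : ℝ)
    (h0 : Int.fract (((i:ℝ)+1)*α) ∈ Set.Ico lo (lo+B))
    (h1 : Int.fract ((((i+d : ℕ) : ℝ) + 1)*α) ∈ Set.Ico lo (lo+B))
    (h2 : Int.fract ((((i+2*d : ℕ) : ℝ) + 1)*α) ∈ Set.Ico lo (lo+B)) : False := by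
  set θ := Int.fract ((d:ℝ)*B) with hθ
  set x := Int.fract (((i:ℝ)+1)*α) with hx
  have hθ0 : 0 ≤ θ := Int.fract_nonneg _
  have hθ1 : θ < 1 := Int.fract_lt_one _
  have e1 : Int.fract ((((i+d : ℕ) : ℝ) + 1)*α) = Int.fract (x - θ) := by
    rw [fract_shift hα i d, hx, hθ]
    have : Int.fract (((i:ℝ)+1)*α) - (d:ℝ)*B
        = (Int.fract (((i:ℝ)+1)*α) - Int.fract ((d:ℝ)*B)) - (⌊(d:ℝ)*B⌋ : ℤ) := by
      simp only [Int.fract]; ring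
    rw [this, Int.fract_sub_intCast]
  have e2 : Int.fract ((((i+2*d : ℕ) : ℝ) + 1)*α) = Int.fract (x - 2*θ) := by
    rw [fract_shift hα i (2*d), hx, hθ]
    have : Int.fract (((i:ℝ)+1)*α) - ((2*d:ℕ):ℝ)*B
        = (Int.fract (((i:ℝ)+1)*α) - 2*Int.fract ((d:ℝ)*B)) - ((2*⌊(d:ℝ)*B⌋ : ℤ)) := by
      simp only [Int.fract]; push_cast; ring
    rw [this, Int.fract_sub_intCast]
  rw [e1] at h1
  rw [e2] at h2
  set A : ℤ := -⌊x - θ⌋ with hA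
  set C : ℤ := -⌊x - 2*θ⌋ with hC
  have ex1 : Int.fract (x - θ) = x - θ + A := by rw [Int.fract, hA]; push_cast; ring
  have ex2 : Int.fract (x - 2*θ) = x - 2*θ + C := by rw [Int.fract, hC]; push_cast; ring
  rw [ex1] at h1; rw [ex2] at h2
  obtain ⟨h0a, h0b⟩ := h0
  obtain ⟨h1a, h1b⟩ := h1
  obtain ⟨h2a, h2b⟩ := h2
  have hBg := B_gt; have hBl := B_lt
  have hA0 : (0:ℤ) ≤ A := by
    have h : ((-1 : ℤ) : ℝ) < (A:ℝ) := by push_cast; linarith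
    have : (-1:ℤ) < A := by exact_mod_cast h
    omega
  have hA1 : A ≤ 1 := by
    have h : (A:ℝ) < ((2:ℤ):ℝ) := by push_cast; linarith
    have : A < (2:ℤ) := by exact_mod_cast h
    omega
  have hC0 : (0:ℤ) ≤ C := by
    have h : ((-1 : ℤ):ℝ) < (C:ℝ) := by push_cast; linarith
    have : (-1:ℤ) < C := by exact_mod_cast h
    omega
  have hC2 : C ≤ 2 := by
    have h : (C:ℝ) < ((3:ℤ):ℝ) := by push_cast; linarith
    have : C < (3:ℤ) := by exact_mod_cast h
    omega
  interval_cases A <;> interval_cases C <;>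
    rcases hgood with ⟨g1, g2⟩ | ⟨g1, g2⟩ <;>
    push_cast at h1a h1b h2a h2b <;> linarith


omit hf in
lemma fract_step (i d : ℕ) :
    Int.fract ((((i+d : ℕ) : ℝ) + 1)*α)
      = Int.fract (Int.fract (((i:ℝ)+1)*α) - Int.fract ((d:ℝ)*B)) := by
  rw [fract_shift hα i d]
  have e : Int.fract (((i:ℝ)+1)*α) - (d:ℝ)*B
      = (Int.fract (((i:ℝ)+1)*α) - Int.fract ((d:ℝ)*B)) - (⌊(d:ℝ)*B⌋ : ℤ) := by
    simp only [Int.fract]; ring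
  rw [e, Int.fract_sub_intCast]

omit hf in
lemma fract_step2 (i d : ℕ) :
    Int.fract ((((i+2*d : ℕ) : ℝ) + 1)*α)
      = Int.fract (Int.fract (((i:ℝ)+1)*α) - 2*Int.fract ((d:ℝ)*B)) := by
  rw [fract_shift hα i (2*d)]
  have e : Int.fract (((i:ℝ)+1)*α) - ((2*d : ℕ):ℝ)*B
      = (Int.fract (((i:ℝ)+1)*α) - 2*Int.fract ((d:ℝ)*B)) - ((2*⌊(d:ℝ)*B⌋ : ℤ)) := by
    simp only [Int.fract]; push_cast; ring
  rw [e, Int.fract_sub_intCast]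

omit hf in
lemma partB {d : ℕ} (hd : 2 ≤ d)
    (hbad : ¬ ((B/2 < Int.fract ((d:ℝ)*B) ∧ Int.fract ((d:ℝ)*B) < 1 - B) ∨
      (B < Int.fract ((d:ℝ)*B) ∧ Int.fract ((d:ℝ)*B) < 1 - B/2))) :
    ∃ i : ℕ, Int.fract (((i:ℝ)+1)*α) < B ∧
      Int.fract ((((i+d : ℕ) : ℝ) + 1)*α) < B ∧
      Int.fract ((((i+2*d : ℕ) : ℝ) + 1)*α) < B := by
  have hBg := B_gt; have hBl := B_lt
  set θ := Int.fract ((d:ℝ)*B) with hθdef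
  have hθf : θ = (d:ℝ)*B - (⌊(d:ℝ)*B⌋ : ℝ) := by rw [hθdef, Int.fract]
  have hθ0 : 0 ≤ θ := Int.fract_nonneg _
  have hθ1 : θ < 1 := Int.fract_lt_one _
  -- boundary exclusions
  have hne0 : θ ≠ 0 := by
    intro h
    exact B_comb (p := -⌊(d:ℝ)*B⌋) (q := (d:ℤ)) (by omega) (by push_cast; linarith)
  have hne1 : θ ≠ B/2 := by
    intro h
    exact B_comb (p := -2*⌊(d:ℝ)*B⌋) (q := 2*(d:ℤ)-1) (by omega) (by push_cast; linarith)
  have hne2 : θ ≠ 1 - B := by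
    intro h
    exact B_comb (p := -⌊(d:ℝ)*B⌋-1) (q := (d:ℤ)+1) (by omega) (by push_cast; linarith)
  have hne3 : θ ≠ B := by
    intro h
    exact B_comb (p := -⌊(d:ℝ)*B⌋) (q := (d:ℤ)-1) (by omega) (by push_cast; linarith)
  have hne4 : θ ≠ 1 - B/2 := by
    intro h
    exact B_comb (p := -2*⌊(d:ℝ)*B⌋-2) (q := 2*(d:ℤ)+1) (by omega) (by push_cast; linarith)
  push_neg at hbad
  obtain ⟨hb1, hb2⟩ := hbad
  have hirrα : ∀ p q : ℤ, q ≠ 0 → (p:ℝ) + q*α ≠ 0 := by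
    intro p q hq h
    refine B_comb (p := p + q) (q := -q) (by omega) ?_
    push_cast
    rw [hα] at h
    linarith
  -- helper to finish from an interval for x
  have main : ∀ u v : ℝ, 0 ≤ u → v ≤ 1 → u < v →
      (∀ x : ℝ, u < x → x < v →
        x < B ∧ Int.fract (x - θ) < B ∧ Int.fract (x - 2*θ) < B) →
      ∃ i : ℕ, Int.fract (((i:ℝ)+1)*α) < B ∧
        Int.fract ((((i+d : ℕ) : ℝ) + 1)*α) < B ∧
        Int.fract ((((i+2*d : ℕ) : ℝ) + 1)*α) < B := by
    intro u v hu hv huv hprop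
    obtain ⟨m, hm1, hxl, hxr⟩ := dense_fract α hirrα u v hu hv huv
    obtain ⟨i, rfl⟩ : ∃ i, m = i + 1 := ⟨m - 1, by omega⟩
    have hcast : ((i:ℝ)+1) = (((i+1 : ℕ)) : ℝ) := by push_cast; ring
    set x := Int.fract ((((i+1 : ℕ)) : ℝ)*α) with hx
    obtain ⟨hc1, hc2, hc3⟩ := hprop x hxl hxr
    refine ⟨i, ?_, ?_, ?_⟩
    · rw [hcast]; exact hc1
    · rw [fract_step hα i d, hcast, ← hθdef]; exact hc2
    · rw [fract_step2 hα i d, hcast, ← hθdef]; exact hc3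
  by_cases c1 : θ < B/2
  · -- region 1 : 0 < θ < B/2
    have hθpos : 0 < θ := lt_of_le_of_ne hθ0 (Ne.symm hne0)
    refine main (2*θ) B (by linarith) (by linarith) (by linarith) ?_
    intro x hxl hxr
    refine ⟨hxr, ?_, ?_⟩
    · rw [Int.fract_eq_self.2 ⟨by linarith, by linarith⟩]; linarith
    · rw [Int.fract_eq_self.2 ⟨by linarith, by linarith⟩]; linarith
  · push_neg at c1
    have hgt1 : B/2 < θ := lt_of_le_of_ne c1 hne1.symm
    have hge2 : 1 - B ≤ θ := hb1 hgt1
    have hgt2 : 1 - B < θ := lt_of_le_of_ne hge2 (Ne.symm hne2)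
    by_cases c2 : θ < B
    · -- region 2 : 1 - B < θ < B
      refine main (max (2*θ-1) 0) (θ+B-1) (le_max_right _ _)
        (by linarith) (max_lt (by linarith) (by linarith)) ?_
      intro x hxl hxr
      have hx1 : 2*θ-1 < x := lt_of_le_of_lt (le_max_left _ _) hxl
      have hx0 : 0 < x := lt_of_le_of_lt (le_max_right _ _) hxl
      refine ⟨by linarith, ?_, ?_⟩
      · rw [fract_eq_add_int (x - θ) 1 (by push_cast; linarith) (by push_cast; linarith)]
        push_cast; linarith
      · rw [fract_eq_add_int (x - 2*θ) 1 (by push_cast; linarith) (by push_cast; linarith)]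
        push_cast; linarith
    · push_neg at c2
      have hgt3 : B < θ := lt_of_le_of_ne c2 hne3.symm
      have hge4 : 1 - B/2 ≤ θ := hb2 hgt3
      have hgt4 : 1 - B/2 < θ := lt_of_le_of_ne hge4 (Ne.symm hne4)
      -- region 3 : 1 - B/2 < θ < 1
      refine main 0 (B - 2 + 2*θ) le_rfl (by linarith) (by linarith) ?_
      intro x hxl hxr
      refine ⟨by linarith, ?_, ?_⟩
      · rw [fract_eq_add_int (x - θ) 1 (by push_cast; linarith) (by push_cast; linarith)]
        push_cast; linarith
      · rw [fract_eq_add_int (x - 2*θ) 2 (by push_cast; linarith) (by push_cast; linarith)]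
        push_cast; linarith

end withf

/-- forward direction: values of the form `b k` give a good fractional part -/
lemma partC1 {k : ℕ} (hk : 1 ≤ k) {d : ℕ}
    (hd : (d:ℤ) = 5*(k:ℤ) + ⌊2*(k:ℝ)*B⌋ + ⌊(k:ℝ)*B⌋ + 1) :
    (B/2 < Int.fract ((d:ℝ)*B) ∧ Int.fract ((d:ℝ)*B) < 1 - B) ∨
      (B < Int.fract ((d:ℝ)*B) ∧ Int.fract ((d:ℝ)*B) < 1 - B/2) := by
  have hBg := B_gt; have hBl := B_lt; have hB2 := B_sq
  set p : ℤ := ⌊(k:ℝ)*B⌋ with hp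
  set u : ℝ := Int.fract ((k:ℝ)*B) with hu
  have hup : (k:ℝ)*B = (p:ℝ) + u := by rw [hp, hu, Int.fract]; ring
  have hu0 : 0 ≤ u := Int.fract_nonneg _
  have hu1 : u < 1 := Int.fract_lt_one _
  have hune0 : u ≠ 0 := by
    intro h
    exact B_comb (p := -p) (q := (k:ℤ)) (by omega) (by push_cast; linarith)
  have hune12 : u ≠ 1/2 := by
    intro h
    exact B_comb (p := -2*p-1) (q := 2*(k:ℤ)) (by omega) (by push_cast; linarith)
  have hupos : 0 < u := lt_of_le_of_ne hu0 (Ne.symm hune0)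
  rcases lt_or_gt_of_ne hune12 with hlt | hgt
  · -- u < 1/2 : land in (B, 1 - B/2)
    have h2f : ⌊2*(k:ℝ)*B⌋ = 2*p := by
      rw [Int.floor_eq_iff]
      constructor <;> push_cast <;> nlinarith
    have hdr : (d:ℝ)*B = ((2*p+3*(k:ℤ) : ℤ):ℝ) + (B + u*(2-3*B)) := by
      rw [h2f] at hd
      have hdz : (d:ℤ) = 5*(k:ℤ) + 3*p + 1 := by omega
      have hdc : (d:ℝ) = 5*(k:ℝ) + 3*(p:ℝ) + 1 := by exact_mod_cast hdz
      rw [hdc]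
      push_cast
      linear_combination (3*(k:ℝ)) * hB2 + (2 - 3*B) * hup
    rw [hdr, Int.fract_intCast_add, Int.fract_eq_self.2 ⟨by nlinarith, by nlinarith⟩]
    right
    constructor <;> nlinarith
  · -- u > 1/2 : land in (B/2, 1 - B)
    have h2f : ⌊2*(k:ℝ)*B⌋ = 2*p + 1 := by
      rw [Int.floor_eq_iff]
      constructor <;> push_cast <;> nlinarith
    have hdr : (d:ℝ)*B = ((2*p+3*(k:ℤ)+1 : ℤ):ℝ) + ((2*B-1) + u*(2-3*B)) := by
      rw [h2f] at hd
      have hdz : (d:ℤ) = 5*(k:ℤ) + 3*p + 2 := by omega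
      have hdc : (d:ℝ) = 5*(k:ℝ) + 3*(p:ℝ) + 2 := by exact_mod_cast hdz
      rw [hdc]
      push_cast
      linear_combination (3*(k:ℝ)) * hB2 + (2 - 3*B) * hup
    rw [hdr, Int.fract_intCast_add, Int.fract_eq_self.2 ⟨by nlinarith, by nlinarith⟩]
    left
    constructor <;> nlinarith

/-- reverse direction: a good fractional part forces the `b k` form -/
lemma partC2 {d : ℕ} (hd2 : 2 ≤ d)
    (hgood : (B/2 < Int.fract ((d:ℝ)*B) ∧ Int.fract ((d:ℝ)*B) < 1 - B) ∨
      (B < Int.fract ((d:ℝ)*B) ∧ Int.fract ((d:ℝ)*B) < 1 - B/2)) :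
    ∃ k : ℕ, 1 ≤ k ∧
      (d:ℤ) = 5*(k:ℤ) + ⌊2*(k:ℝ)*B⌋ + ⌊(k:ℝ)*B⌋ + 1 := by
  have hBg := B_gt; have hBl := B_lt; have hB2 := B_sq
  have h23 : (0:ℝ) < 2 - 3*B := by linarith
  set θ : ℝ := Int.fract ((d:ℝ)*B) with hθdef
  set m : ℤ := ⌊(d:ℝ)*B⌋ with hm
  have hθm : (d:ℝ)*B = (m:ℝ) + θ := by rw [hm, hθdef, Int.fract]; ring
  rcases hgood with ⟨hg1, hg2⟩ | ⟨hg1, hg2⟩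
  · -- θ ∈ (B/2, 1-B), u ∈ (1/2, 1)
    set K : ℤ := 2*(d:ℤ) - 1 - 3*m with hK
    set A : ℤ := 3*(d:ℤ) - 1 - 5*m with hA
    have key : ((K:ℝ)*B + (A:ℝ)) * (2 - 3*B) = θ - (2*B-1) := by
      rw [hK, hA]
      push_cast
      linear_combination (-3*(2*(d:ℝ) - 1 - 3*(m:ℝ))) * hB2 + hθm
    set w : ℝ := (K:ℝ)*B + (A:ℝ) with hw
    have hwval : w = (θ - (2*B-1)) / (2-3*B) := by
      rw [eq_div_iff (by linarith)]; exact key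
    have hw1 : 1/2 < w := by
      rw [hwval, lt_div_iff₀ h23]; linarith
    have hw2 : w < 1 := by
      rw [hwval, div_lt_iff₀ h23]; linarith
    have hfK : ⌊(K:ℝ)*B⌋ = -A := by
      rw [Int.floor_eq_iff]
      constructor <;> push_cast <;> linarith
    have hf2K : ⌊2*(K:ℝ)*B⌋ = 1 - 2*A := by
      rw [Int.floor_eq_iff]
      constructor <;> push_cast <;> linarith
    have hK1 : 1 ≤ K := by
      rcases lt_trichotomy K 0 with h | h | h
      · exfalso
        have hKB : (K:ℝ)*B ≤ -B := by
          have h' : K ≤ -1 := by omega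
          have h'' : (K:ℝ) ≤ -1 := by exact_mod_cast h'
          nlinarith
        have hA1 : 1 ≤ A := by
          have := Int.floor_le ((K:ℝ)*B)
          rw [hfK] at this
          have : (-A:ℝ) < 0 := by linarith
          have : -A < (0:ℤ) := by exact_mod_cast this
          omega
        have hdK : (d:ℤ) = 5*K - 3*A + 2 := by rw [hK, hA]; ring
        omega
      · exfalso
        have hAw : (A:ℝ) = w := by rw [hw, h]; push_cast; ring
        have h1' : (0:ℤ) < A := by
          have h1 : (0:ℝ) < (A:ℝ) := by rw [hAw]; linarith
          exact_mod_cast h1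
        have h2' : A < (1:ℤ) := by
          have h2 : (A:ℝ) < 1 := by rw [hAw]; linarith
          exact_mod_cast h2
        omega
      · omega
    refine ⟨K.toNat, by omega, ?_⟩
    have hcast2 : ((K.toNat : ℕ) : ℤ) = K := Int.toNat_of_nonneg (by omega)
    have hcast : ((K.toNat : ℕ) : ℝ) = (K:ℝ) := by exact_mod_cast hcast2
    rw [hcast, hcast2, hfK, hf2K, hK, hA]
    ring
  · -- θ ∈ (B, 1-B/2), u ∈ (0, 1/2)
    set K : ℤ := 2*((d:ℤ) - 1) - 3*m with hK
    set A : ℤ := 3*((d:ℤ) - 1) - 5*m with hA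
    have key : ((K:ℝ)*B + (A:ℝ)) * (2 - 3*B) = θ - B := by
      rw [hK, hA]
      push_cast
      linear_combination (-3*(2*((d:ℝ)-1) - 3*(m:ℝ))) * hB2 + hθm
    set w : ℝ := (K:ℝ)*B + (A:ℝ) with hw
    have hwval : w = (θ - B) / (2-3*B) := by
      rw [eq_div_iff (by linarith)]; exact key
    have hw1 : 0 < w := by
      rw [hwval]; exact div_pos (by linarith) h23
    have hw2 : w < 1/2 := by
      rw [hwval, div_lt_iff₀ h23]; linarith
    have hfK : ⌊(K:ℝ)*B⌋ = -A := by
      rw [Int.floor_eq_iff]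
      constructor <;> push_cast <;> linarith
    have hf2K : ⌊2*(K:ℝ)*B⌋ = -2*A := by
      rw [Int.floor_eq_iff]
      constructor <;> push_cast <;> linarith
    have hK1 : 1 ≤ K := by
      rcases lt_trichotomy K 0 with h | h | h
      · exfalso
        have hKB : (K:ℝ)*B ≤ -B := by
          have h' : K ≤ -1 := by omega
          have h'' : (K:ℝ) ≤ -1 := by exact_mod_cast h'
          nlinarith
        have hA1 : 1 ≤ A := by
          have := Int.floor_le ((K:ℝ)*B)
          rw [hfK] at this
          have : (-A:ℝ) < 0 := by linarith
          have : -A < (0:ℤ) := by exact_mod_cast this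
          omega
        have hdK : (d:ℤ) = 5*K - 3*A + 1 := by rw [hK, hA]; ring
        omega
      · exfalso
        have hAw : (A:ℝ) = w := by rw [hw, h]; push_cast; ring
        have h1' : (0:ℤ) < A := by
          have h1 : (0:ℝ) < (A:ℝ) := by rw [hAw]; linarith
          exact_mod_cast h1
        have h2' : A < (1:ℤ) := by
          have h2 : (A:ℝ) < 1 := by rw [hAw]; linarith
          exact_mod_cast h2
        omega
      · omega
    refine ⟨K.toNat, by omega, ?_⟩
    have hcast2 : ((K.toNat : ℕ) : ℤ) = K := Int.toNat_of_nonneg (by omega)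
    have hcast : ((K.toNat : ℕ) : ℝ) = (K:ℝ) := by exact_mod_cast hcast2
    rw [hcast, hcast2, hfK, hf2K, hK, hA]
    ring

end Reble



/-- Reble's conjecture for OEIS A189378: `n` is of the form
`b(k) = k + ⌊2k/s⌋ + ⌊kt/s⌋` (with `s = (√5−1)/2`, `t = (1+√5)/2`) iff the
Fibonacci word has no monochromatic 3-term arithmetic progression (of `0`s or of
`1`s) with common difference `n+1`. -/
theorem reble_A189378
    (α : ℝ) (hα : α = (3 - Real.sqrt 5) / 2)
    (f : ℕ → ℤ) (hf : ∀ n : ℕ, f n = ⌊((n : ℝ) + 2) * α⌋ - ⌊((n : ℝ) + 1) * α⌋)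
    (s t : ℝ) (hs : s = (Real.sqrt 5 - 1) / 2) (ht : t = (1 + Real.sqrt 5) / 2)
    (b : ℕ → ℤ) (hb : ∀ k : ℕ, b k = (k : ℤ) + ⌊2 * (k : ℝ) / s⌋ + ⌊(k : ℝ) * t / s⌋) :
    ∀ n : ℕ, 1 ≤ n →
      ((¬(∃ i : ℕ, f i = 0 ∧ f (i + (n + 1)) = 0 ∧ f (i + 2 * (n + 1)) = 0) ∧
        ¬(∃ j : ℕ, f j = 1 ∧ f (j + (n + 1)) = 1 ∧ f (j + 2 * (n + 1)) = 1)) ↔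
      (∃ k : ℕ, 1 ≤ k ∧ (n : ℤ) = b k)) := by
  have hα' : α = 1 - Reble.B := by rw [hα]; unfold Reble.B; ring
  have hsB : s = Reble.B := by rw [hs]; rfl
  have hBpos : (0:ℝ) < Reble.B := by linarith [Reble.B_gt]
  have hB2 := Reble.B_sq
  have ht' : t = Reble.B + 1 := by
    rw [ht]; unfold Reble.B; ring
  have b_eq : ∀ k : ℕ, b k = 5*(k:ℤ) + ⌊2*(k:ℝ)*Reble.B⌋ + ⌊(k:ℝ)*Reble.B⌋ := by
    intro k
    rw [hb k]
    have e1 : 2*(k:ℝ)/s = ((2*(k:ℤ) : ℤ):ℝ) + 2*(k:ℝ)*Reble.B := by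
      rw [hsB, div_eq_iff (ne_of_gt hBpos)]
      push_cast
      linear_combination (-2*(k:ℝ)) * hB2
    have e2 : (k:ℝ)*t/s = ((2*(k:ℤ) : ℤ):ℝ) + (k:ℝ)*Reble.B := by
      rw [hsB, ht', div_eq_iff (ne_of_gt hBpos)]
      push_cast
      linear_combination (-(k:ℝ)) * hB2
    rw [e1, e2, Int.floor_intCast_add, Int.floor_intCast_add]
    ring
  intro n hn
  have hd2 : 2 ≤ n + 1 := by omega
  constructor
  · rintro ⟨hno0, hno1⟩
    have hgood : (Reble.B/2 < Int.fract (((n+1 : ℕ):ℝ)*Reble.B) ∧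
          Int.fract (((n+1 : ℕ):ℝ)*Reble.B) < 1 - Reble.B) ∨
        (Reble.B < Int.fract (((n+1 : ℕ):ℝ)*Reble.B) ∧
          Int.fract (((n+1 : ℕ):ℝ)*Reble.B) < 1 - Reble.B/2) := by
      by_contra hbad
      obtain ⟨i, h1, h2, h3⟩ := Reble.partB hα' hd2 hbad
      exact hno0 ⟨i, (Reble.f_zero_iff hα' hf i).2 h1,
        (Reble.f_zero_iff hα' hf (i + (n+1))).2 h2,
        (Reble.f_zero_iff hα' hf (i + 2*(n+1))).2 h3⟩
    obtain ⟨k, hk1, hkd⟩ := Reble.partC2 hd2 hgood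
    refine ⟨k, hk1, ?_⟩
    rw [b_eq k]
    push_cast at hkd
    omega
  · rintro ⟨k, hk1, hnb⟩
    have hkd : ((n+1 : ℕ):ℤ) = 5*(k:ℤ) + ⌊2*(k:ℝ)*Reble.B⌋ + ⌊(k:ℝ)*Reble.B⌋ + 1 := by
      rw [b_eq k] at hnb
      push_cast
      omega
    have hgood := Reble.partC1 hk1 hkd
    constructor
    · rintro ⟨i, h1, h2, h3⟩
      refine Reble.partA hα' (d := n+1) (i := i) hgood 0 ?_ ?_ ?_ <;>
        rw [Set.mem_Ico] <;> refine ⟨Int.fract_nonneg _, ?_⟩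
      · rw [zero_add]; exact (Reble.f_zero_iff hα' hf i).1 h1
      · rw [zero_add]; exact (Reble.f_zero_iff hα' hf (i + (n+1))).1 h2
      · rw [zero_add]; exact (Reble.f_zero_iff hα' hf (i + 2*(n+1))).1 h3
    · rintro ⟨j, h1, h2, h3⟩
      have h2B : (1:ℝ) < Reble.B + Reble.B := by linarith [Reble.B_gt]
      refine Reble.partA hα' (d := n+1) (i := j) hgood Reble.B ?_ ?_ ?_ <;>
        rw [Set.mem_Ico]
      · exact ⟨(Reble.f_one_iff hα' hf j).1 h1, by linarith [Int.fract_lt_one (((j:ℝ)+1)*α)]⟩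
      · exact ⟨(Reble.f_one_iff hα' hf (j + (n+1))).1 h2,
          by linarith [Int.fract_lt_one ((((j + (n+1) : ℕ) : ℝ)+1)*α)]⟩
      · exact ⟨(Reble.f_one_iff hα' hf (j + 2*(n+1))).1 h3,
          by linarith [Int.fract_lt_one ((((j + 2*(n+1) : ℕ) : ℝ)+1)*α)]⟩
end

section
/- Let α = (3 − √5)/2, and define the Fibonacci word f : ℕ → ℤ by f(n) = ⌊(n+2)α⌋ − ⌊(n+1)α⌋. Let s = (√5 − 1)/2 and t = (1 + √5)/2, and define c(k) = k + ⌊2k/t⌋ + ⌊ks/t⌋ (equivalently c(k) = k + ⌊k(√5−1)⌋ + ⌊k(3−√5)/2⌋). Then for every integer n ≥ 1, the following are equivalent: (1) there exists i ≥ 0 with f(i) = f(i + (n+1)) = f(i + 2(n+1)) = 0 and there exists j ≥ 0 with f(j) = f(j + (n+1)) = f(j + 2(n+1)) = 1; (2) there exists an integer k ≥ 1 with n = c(k). -/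
private lemma floor01 {a : ℝ} (h0 : 0 ≤ a) (h2 : a < 2) : ⌊a⌋ = 0 ∨ ⌊a⌋ = 1 := by
  have h1 : (0:ℤ) ≤ ⌊a⌋ := Int.floor_nonneg.2 h0
  have h3 : ⌊a⌋ < 2 := Int.floor_lt.2 (by exact_mod_cast h2)
  omega

private lemma floor012 {a : ℝ} (h0 : 0 ≤ a) (h2 : a < 3) : ⌊a⌋ = 0 ∨ ⌊a⌋ = 1 ∨ ⌊a⌋ = 2 := by
  have h1 : (0:ℤ) ≤ ⌊a⌋ := Int.floor_nonneg.2 h0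
  have h3 : ⌊a⌋ < 3 := Int.floor_lt.2 (by exact_mod_cast h2)
  omega

private lemma fract_cases2 {a : ℝ} (h0 : 0 ≤ a) (h2 : a < 2) :
    Int.fract a = a ∨ Int.fract a = a - 1 := by
  have hfl := Int.floor_add_fract a
  rcases floor01 h0 h2 with h | h <;> rw [h] at hfl <;> push_cast at hfl
  · left; linarith
  · right; linarith

private lemma fract_cases3 {a : ℝ} (h0 : 0 ≤ a) (h2 : a < 3) :
    Int.fract a = a ∨ Int.fract a = a - 1 ∨ Int.fract a = a - 2 := by
  have hfl := Int.floor_add_fract a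
  rcases floor012 h0 h2 with h | h | h <;> rw [h] at hfl <;> push_cast at hfl
  · left; linarith
  · right; left; linarith
  · right; right; linarith

private lemma fract_pos {z : ℝ} (h : Irrational z) : 0 < Int.fract z := by
  rcases lt_or_eq_of_le (Int.fract_nonneg z) with h' | h'
  · exact h'
  · exfalso
    apply h.ne_int ⌊z⌋
    have := Int.floor_add_fract z
    rw [← h'] at this
    linarith

private lemma fract_eq1 {a : ℝ} (h0 : 1 ≤ a) (h1 : a < 2) : Int.fract a = a - 1 := by
  have h : Int.fract a = Int.fract (a - (1:ℤ)) := (Int.fract_sub_intCast a 1).symm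
  rw [h, Int.fract_eq_self.2 ⟨by push_cast; linarith, by push_cast; linarith⟩]
  push_cast; ring

private lemma fract_eq2 {a : ℝ} (h0 : 2 ≤ a) (h1 : a < 3) : Int.fract a = a - 2 := by
  have h : Int.fract a = Int.fract (a - (2:ℤ)) := (Int.fract_sub_intCast a 2).symm
  rw [h, Int.fract_eq_self.2 ⟨by push_cast; linarith, by push_cast; linarith⟩]
  push_cast; ring

private lemma step_hit {δ c : ℝ} (hδ : 0 < δ) (hc : 0 ≤ c) :
    ∃ j : ℕ, 1 ≤ j ∧ c < j * δ ∧ (j : ℝ) * δ ≤ c + δ := by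
  refine ⟨⌊c/δ⌋₊ + 1, by omega, ?_, ?_⟩
  · have h := Nat.lt_floor_add_one (c/δ)
    have h2 : c/δ < ((⌊c/δ⌋₊ + 1 : ℕ) : ℝ) := by push_cast; exact h
    exact (div_lt_iff₀ hδ).1 h2
  · have h := Nat.floor_le (div_nonneg hc hδ.le)
    have h2 : (↑⌊c/δ⌋₊ : ℝ) * δ ≤ c := (le_div_iff₀ hδ).1 h
    push_cast
    nlinarith

private lemma dense_pos {θ : ℝ} (hθ : Irrational θ) {a b : ℝ} (ha : 0 ≤ a)
    (hb : b ≤ 1) (hab : a < b) :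
    ∃ m : ℕ, 1 ≤ m ∧ a < Int.fract ((m:ℝ) * θ) ∧ Int.fract ((m:ℝ) * θ) < b := by
  obtain ⟨N, hN⟩ := exists_nat_one_div_lt (show (0:ℝ) < b - a by linarith)
  obtain ⟨q, hq0, -, hq⟩ := Real.exists_nat_abs_mul_sub_round_le θ (n := N + 1) (by omega)
  have hqθ : Irrational ((q:ℝ) * θ) := hθ.natCast_mul (by omega)
  set r : ℤ := round ((q:ℝ) * θ) with hr
  have he0 : (q:ℝ) * θ - r ≠ 0 := sub_ne_zero.2 (hqθ.ne_int r)
  have heb : |(q:ℝ) * θ - r| < b - a := by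
    refine lt_of_le_of_lt hq ?_
    have h1 : (1:ℝ)/(((N+1:ℕ):ℝ) + 1) ≤ 1/((N:ℝ)+1) := by
      apply one_div_le_one_div_of_le
      · positivity
      · push_cast; linarith
    exact lt_of_le_of_lt h1 hN
  rcases he0.lt_or_gt with hneg | hpos
  · have hδ0 : 0 < (r:ℝ) - q*θ := by linarith
    have hδb : (r:ℝ) - q*θ < b - a := by
      rw [abs_of_neg hneg] at heb; linarith
    obtain ⟨j, hj1, hjl, hjr⟩ := step_hit hδ0 (show (0:ℝ) ≤ 1 - b by linarith)
    have hj1' : (1:ℝ) ≤ j := by exact_mod_cast hj1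
    refine ⟨j * q, Nat.one_le_iff_ne_zero.2 (Nat.mul_ne_zero (by omega) (by omega)), ?_⟩
    have hfr : Int.fract ((↑(j*q):ℝ) * θ) = Int.fract (-((j:ℝ)*((r:ℝ) - q*θ))) := by
      rw [Int.fract_eq_fract]
      exact ⟨(j:ℤ)*r, by push_cast; ring⟩
    have hjδ1 : (j:ℝ)*((r:ℝ) - q*θ) < 1 := by linarith
    have hjδ0 : 0 < (j:ℝ)*((r:ℝ) - q*θ) := mul_pos (by linarith) hδ0
    have hfr2 : Int.fract ((j:ℝ)*((r:ℝ) - q*θ)) = (j:ℝ)*((r:ℝ) - q*θ) :=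
      Int.fract_eq_self.2 ⟨hjδ0.le, hjδ1⟩
    constructor <;>
      rw [hfr, Int.fract_neg (by rw [hfr2]; exact ne_of_gt hjδ0), hfr2] <;> linarith
  · have hδb : (q:ℝ)*θ - r < b - a := by
      rw [abs_of_pos hpos] at heb; linarith
    obtain ⟨j, hj1, hjl, hjr⟩ := step_hit hpos ha
    have hj1' : (1:ℝ) ≤ j := by exact_mod_cast hj1
    refine ⟨j * q, Nat.one_le_iff_ne_zero.2 (Nat.mul_ne_zero (by omega) (by omega)), ?_⟩
    have hfr : Int.fract ((↑(j*q):ℝ) * θ) = Int.fract ((j:ℝ)*((q:ℝ)*θ - r)) := by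
      rw [Int.fract_eq_fract]
      exact ⟨(j:ℤ)*r, by push_cast; ring⟩
    constructor <;>
      rw [hfr, Int.fract_eq_self.2 ⟨by linarith, by linarith⟩] <;> linarith

private lemma core_fwd {α β x y : ℝ} (hαl : 0.3819 < α) (hαr : α < 0.382)
    (hβ0 : 0 < β) (hβ1 : β < 1)
    (hx0 : 1 - α < x) (hx1 : x < 1)
    (hxb : 1 - α < Int.fract (x + β)) (hx2 : 1 - α < Int.fract (x + 2*β))
    (hy0 : 0 ≤ y) (hy1 : y < 1 - α)
    (hyb : Int.fract (y + β) < 1 - α) (hy2 : Int.fract (y + 2*β) < 1 - α) :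
    β < α/2 ∨ 1 - α/2 < β := by
  by_contra hcon
  push_neg at hcon
  obtain ⟨h1, h2⟩ := hcon
  have n1 : 0 ≤ Int.fract (y + β) := Int.fract_nonneg _
  have n2 : 0 ≤ Int.fract (y + 2*β) := Int.fract_nonneg _
  have n3 : Int.fract (x + β) < 1 := Int.fract_lt_one _
  have n4 : Int.fract (x + 2*β) < 1 := Int.fract_lt_one _
  rcases fract_cases2 (show (0:ℝ) ≤ x + β by linarith) (by linarith) with c1 | c1 <;>
  rcases fract_cases3 (show (0:ℝ) ≤ x + 2*β by linarith) (by linarith) with c2 | c2 | c2 <;>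
  rcases fract_cases2 (show (0:ℝ) ≤ y + β by linarith) (by linarith) with c3 | c3 <;>
  rcases fract_cases3 (show (0:ℝ) ≤ y + 2*β by linarith) (by linarith) with c4 | c4 | c4 <;>
  linarith

set_option maxHeartbeats 1600000

/-- Reble's conjecture for OEIS A189379: `n` is of the form
`c(k) = k + ⌊2k/t⌋ + ⌊ks/t⌋` (with `s = (√5−1)/2`, `t = (1+√5)/2`) iff the
Fibonacci word has a monochromatic 3-term arithmetic progression of `0`s and
also one of `1`s, both with common difference `n+1`. -/
theorem reble_A189379
    (α : ℝ) (hα : α = (3 - Real.sqrt 5) / 2)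
    (f : ℕ → ℤ) (hf : ∀ n : ℕ, f n = ⌊((n : ℝ) + 2) * α⌋ - ⌊((n : ℝ) + 1) * α⌋)
    (s t : ℝ) (hs : s = (Real.sqrt 5 - 1) / 2) (ht : t = (1 + Real.sqrt 5) / 2)
    (c : ℕ → ℤ) (hc : ∀ k : ℕ, c k = (k : ℤ) + ⌊2 * (k : ℝ) / t⌋ + ⌊(k : ℝ) * s / t⌋) :
    ∀ n : ℕ, 1 ≤ n →
      (((∃ i : ℕ, f i = 0 ∧ f (i + (n + 1)) = 0 ∧ f (i + 2 * (n + 1)) = 0) ∧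
        (∃ j : ℕ, f j = 1 ∧ f (j + (n + 1)) = 1 ∧ f (j + 2 * (n + 1)) = 1)) ↔
      (∃ k : ℕ, 1 ≤ k ∧ (n : ℤ) = c k)) := by
  intro n hn
  have h55 : Real.sqrt 5 * Real.sqrt 5 = 5 := Real.mul_self_sqrt (by norm_num)
  have h5a : 2.2360 < Real.sqrt 5 := by nlinarith [Real.sqrt_nonneg 5]
  have h5b : Real.sqrt 5 < 2.2361 := by nlinarith [Real.sqrt_nonneg 5]
  have hαl : 0.3819 < α := by rw [hα]; linarith
  have hαr : α < 0.382 := by rw [hα]; linarith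
  have htl : 1.6180 < t := by rw [ht]; linarith
  have htr : t < 1.6181 := by rw [ht]; linarith
  have htpos : 0 < t := by linarith
  have htt : t * t = t + 1 := by rw [ht]; linear_combination h55 / 4
  have hαt : α = 2 - t := by rw [hα, ht]; ring
  have hst : s = t - 1 := by rw [hs, ht]; ring
  have hα1 : (t + 1) * α = 1 := by rw [hαt]; linear_combination -htt
  have i5 : Irrational (Real.sqrt 5) := by
    have h := (by norm_num : Nat.Prime 5).irrational_sqrt
    simpa using h
  have hirr_t : Irrational t := by
    have h1 := (i5.intCast_add 1).div_intCast (m := 2) (by norm_num)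
    rw [ht]; simpa using h1
  have hirr_α : Irrational α := by
    have h1 := hirr_t.intCast_sub 2
    rw [hαt]; simpa using h1
  have hmul_α : ∀ m : ℕ, m ≠ 0 → Irrational ((m:ℝ) * α) := fun m hm => hirr_α.natCast_mul hm
  have hmul_t : ∀ m : ℕ, m ≠ 0 → Irrational ((m:ℝ) * t) := fun m hm => hirr_t.natCast_mul hm
  -- characterization of f via fractional parts
  have hchar : ∀ i : ℕ,
      (f i = 0 ↔ Int.fract (((i:ℝ)+1)*α) < 1 - α) ∧
      (f i = 1 ↔ 1 - α < Int.fract (((i:ℝ)+1)*α)) := by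
    intro i
    have hfl := Int.floor_add_fract (((i:ℝ)+1)*α)
    have hfloor : f i = ⌊Int.fract (((i:ℝ)+1)*α) + α⌋ := by
      rw [hf i]
      have h1 : ((i:ℝ)+2)*α = (⌊((i:ℝ)+1)*α⌋:ℝ) + (Int.fract (((i:ℝ)+1)*α) + α) := by
        linear_combination -hfl
      rw [h1, Int.floor_intCast_add]
      ring
    have hne1 : Int.fract (((i:ℝ)+1)*α) + α ≠ 1 := by
      intro hE
      apply (hmul_α (i+2) (by omega)).ne_int (1 + ⌊((i:ℝ)+1)*α⌋)
      push_cast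
      linear_combination hE - hfl
    have hb0 : 0 ≤ Int.fract (((i:ℝ)+1)*α) := Int.fract_nonneg _
    have hb1 : Int.fract (((i:ℝ)+1)*α) < 1 := Int.fract_lt_one _
    constructor
    · constructor
      · intro h0
        have hfl0 : ⌊Int.fract (((i:ℝ)+1)*α) + α⌋ = 0 := by omega
        have h2 := Int.lt_floor_add_one (Int.fract (((i:ℝ)+1)*α) + α)
        rw [hfl0] at h2
        push_cast at h2
        linarith
      · intro hlt
        rw [hfloor]
        exact Int.floor_eq_iff.2 ⟨by push_cast; linarith, by push_cast; linarith⟩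
    · constructor
      · intro h1'
        have hfl1 : ⌊Int.fract (((i:ℝ)+1)*α) + α⌋ = 1 := by omega
        have h2 := Int.floor_le (Int.fract (((i:ℝ)+1)*α) + α)
        rw [hfl1] at h2
        push_cast at h2
        have h3 : (1:ℝ) < Int.fract (((i:ℝ)+1)*α) + α := lt_of_le_of_ne h2 (Ne.symm hne1)
        linarith
      · intro hlt
        rw [hfloor]
        exact Int.floor_eq_iff.2 ⟨by push_cast; linarith, by push_cast; linarith⟩
  set β := Int.fract (((n:ℝ)+1)*α) with hβdef
  have hβpos : 0 < β := by
    have h := hmul_α (n+1) (by omega)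
    push_cast at h
    exact fract_pos h
  have hβlt : β < 1 := Int.fract_lt_one _
  have keyA : ∀ i : ℕ, Int.fract ((((i + (n+1) : ℕ) : ℝ) + 1) * α) =
      Int.fract (Int.fract (((i:ℝ)+1)*α) + β) := by
    intro i
    rw [Int.fract_eq_fract]
    refine ⟨⌊((i:ℝ)+1)*α⌋ + ⌊((n:ℝ)+1)*α⌋, ?_⟩
    have e1 := Int.floor_add_fract (((i:ℝ)+1)*α)
    have e2 := Int.floor_add_fract (((n:ℝ)+1)*α)
    push_cast
    linear_combination -e1 - e2
  have keyB : ∀ i : ℕ, Int.fract ((((i + 2*(n+1) : ℕ) : ℝ) + 1) * α) =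
      Int.fract (Int.fract (((i:ℝ)+1)*α) + 2*β) := by
    intro i
    rw [Int.fract_eq_fract]
    refine ⟨⌊((i:ℝ)+1)*α⌋ + 2*⌊((n:ℝ)+1)*α⌋, ?_⟩
    have e1 := Int.floor_add_fract (((i:ℝ)+1)*α)
    have e2 := Int.floor_add_fract (((n:ℝ)+1)*α)
    push_cast
    linear_combination -e1 - 2*e2
  -- the key approximation for c k
  have hckap : ∀ k : ℕ, 1 ≤ k →
      (-(1/2) < ((c k : ℤ):ℝ) + 1 - (k:ℝ)*(t+1) ∧ ((c k : ℤ):ℝ) + 1 - (k:ℝ)*(t+1) < 1/2) := by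
    intro k hk
    have hkne : k ≠ 0 := by omega
    have hdiv1 : 2*(k:ℝ)/t = 2*(k:ℝ)*t - 2*(k:ℝ) := by
      rw [div_eq_iff (ne_of_gt htpos)]
      linear_combination (-2*(k:ℝ))*htt
    have hdiv2 : (k:ℝ)*s/t = 2*(k:ℝ) - (k:ℝ)*t := by
      rw [hst, div_eq_iff (ne_of_gt htpos)]
      linear_combination (k:ℝ)*htt
    have e2 := Int.floor_add_fract ((k:ℝ)*t)
    have hwpos : 0 < Int.fract ((k:ℝ)*t) := fract_pos (hmul_t k hkne)
    have hwlt : Int.fract ((k:ℝ)*t) < 1 := Int.fract_lt_one _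
    have hf1 : Int.fract (2*(k:ℝ)/t) = Int.fract (2*Int.fract ((k:ℝ)*t)) := by
      rw [Int.fract_eq_fract]
      exact ⟨2*⌊(k:ℝ)*t⌋ - 2*k, by push_cast; linear_combination hdiv1 - 2*e2⟩
    have hf2 : Int.fract ((k:ℝ)*s/t) = 1 - Int.fract ((k:ℝ)*t) := by
      have h3 : Int.fract ((k:ℝ)*s/t) = Int.fract (-((k:ℝ)*t)) := by
        rw [Int.fract_eq_fract]
        exact ⟨2*k, by push_cast; linear_combination hdiv2⟩
      rw [h3, Int.fract_neg (ne_of_gt hwpos)]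
    have h2w_ne : Int.fract (2*Int.fract ((k:ℝ)*t)) ≠ 0 := by
      rw [← hf1]
      apply ne_of_gt
      apply fract_pos
      have h4 := hmul_t (2*k) (by omega)
      push_cast at h4
      have h4' : Irrational (2*(k:ℝ)*t) := by
        convert h4 using 1
        try ring
      have h5 := h4'.sub_intCast (2*k)
      rw [hdiv1]
      push_cast at h5
      exact h5
    have hcr : ((c k : ℤ):ℝ) = (k:ℝ) + (2*(k:ℝ)/t - Int.fract (2*(k:ℝ)/t)) +
        ((k:ℝ)*s/t - Int.fract ((k:ℝ)*s/t)) := by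
      rw [hc k]
      push_cast
      rw [Int.self_sub_fract, Int.self_sub_fract]
    have hfub := Int.fract_lt_one (2*Int.fract ((k:ℝ)*t))
    have hfnn := Int.fract_nonneg (2*Int.fract ((k:ℝ)*t))
    rcases fract_cases2 (show (0:ℝ) ≤ 2*Int.fract ((k:ℝ)*t) by linarith) (by linarith) with hcw | hcw
    · rw [hcw] at hfub
      constructor <;> rw [hcr, hf1, hf2, hcw] <;> linarith [hdiv1, hdiv2]
    · rw [hcw] at hfnn
      have hgt : 0 < 2*Int.fract ((k:ℝ)*t) - 1 := by
        rcases lt_or_eq_of_le hfnn with h' | h'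
        · exact h'
        · exact absurd (hcw.trans h'.symm) h2w_ne
      constructor <;> rw [hcr, hf1, hf2, hcw] <;> linarith [hdiv1, hdiv2]
  -- from an integer k0 close to (n+1)α, conclude n = c k
  have hnR : (1:ℝ) ≤ (n:ℝ) := by exact_mod_cast hn
  have conclude : ∀ k0 : ℤ, 1 ≤ k0 → -(α/2) < ((n:ℝ)+1)*α - k0 → ((n:ℝ)+1)*α - k0 < α/2 →
      ∃ k : ℕ, 1 ≤ k ∧ (n:ℤ) = c k := by
    intro k0 hk0 hlo hhi
    refine ⟨k0.toNat, by omega, ?_⟩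
    have hcast : ((k0.toNat : ℕ) : ℝ) = (k0 : ℝ) := by
      exact_mod_cast Int.toNat_of_nonneg (by omega)
    obtain ⟨hc1, hc2⟩ := hckap k0.toNat (by omega)
    rw [hcast] at hc1 hc2
    have hE : ((n:ℝ)+1) - (k0:ℝ)*(t+1) = (t+1)*(((n:ℝ)+1)*α - k0) := by
      linear_combination (-((n:ℝ)+1))*hα1
    have htp1 : (0:ℝ) < t + 1 := by linarith
    have hb1 : ((n:ℝ)+1) - (k0:ℝ)*(t+1) < 1/2 := by
      rw [hE]
      have h := mul_lt_mul_of_pos_left hhi htp1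
      nlinarith [h, hα1]
    have hb2 : -(1/2) < ((n:ℝ)+1) - (k0:ℝ)*(t+1) := by
      rw [hE]
      have h := mul_lt_mul_of_pos_left hlo htp1
      nlinarith [h, hα1]
    have hI1 : (n:ℤ) - c k0.toNat < 1 := by
      have : ((n:ℤ):ℝ) - ((c k0.toNat : ℤ):ℝ) < 1 := by push_cast; linarith
      exact_mod_cast this
    have hI2 : -1 < (n:ℤ) - c k0.toNat := by
      have : (-1 : ℝ) < ((n:ℤ):ℝ) - ((c k0.toNat : ℤ):ℝ) := by push_cast; linarith
      exact_mod_cast this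
    omega
  constructor
  · -- forward direction
    rintro ⟨⟨i, hi0, hi1, hi2⟩, ⟨j, hj0, hj1, hj2⟩⟩
    have hy1 := (hchar i).1.mp hi0
    have hyb := (hchar (i + (n+1))).1.mp hi1
    rw [keyA i] at hyb
    have hy2 := (hchar (i + 2*(n+1))).1.mp hi2
    rw [keyB i] at hy2
    have hx1 := (hchar j).2.mp hj0
    have hxb := (hchar (j + (n+1))).2.mp hj1
    rw [keyA j] at hxb
    have hx2 := (hchar (j + 2*(n+1))).2.mp hj2
    rw [keyB j] at hx2
    have hcore := core_fwd hαl hαr hβpos hβlt hx1 (Int.fract_lt_one _) hxb hx2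
      (Int.fract_nonneg _) hy1 hyb hy2
    have hfladd := Int.floor_add_fract (((n:ℝ)+1)*α)
    have hge : 2*α ≤ ((n:ℝ)+1)*α := by
      nlinarith [mul_nonneg (show (0:ℝ) ≤ (n:ℝ) - 1 by linarith) (show (0:ℝ) ≤ α by linarith)]
    rcases hcore with hb | hb
    · refine conclude ⌊((n:ℝ)+1)*α⌋ ?_ (by linarith) (by linarith)
      have h2 : (0:ℝ) < (⌊((n:ℝ)+1)*α⌋ : ℝ) := by linarith
      have h3 : (0:ℤ) < ⌊((n:ℝ)+1)*α⌋ := by exact_mod_cast h2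
      omega
    · refine conclude (⌊((n:ℝ)+1)*α⌋ + 1) ?_ (by push_cast; linarith) (by push_cast; linarith)
      have h3 : (0:ℤ) ≤ ⌊((n:ℝ)+1)*α⌋ := Int.floor_nonneg.2 (by linarith)
      omega
  · -- backward direction
    rintro ⟨k, hk1, hkn⟩
    obtain ⟨hc1, hc2⟩ := hckap k hk1
    have hnC : ((n:ℝ)) = ((c k : ℤ):ℝ) := by exact_mod_cast hkn
    rw [← hnC] at hc1 hc2
    have hEb : ((n:ℝ)+1)*α - (k:ℝ) = α*(((n:ℝ)+1) - (k:ℝ)*(t+1)) := by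
      linear_combination (k:ℝ)*hα1
    have hαpos : (0:ℝ) < α := by linarith
    have hu1 : ((n:ℝ)+1)*α - (k:ℝ) < α/2 := by
      rw [hEb]
      have h := mul_lt_mul_of_pos_left hc2 hαpos
      linarith [h]
    have hu2 : -(α/2) < ((n:ℝ)+1)*α - (k:ℝ) := by
      rw [hEb]
      have h := mul_lt_mul_of_pos_left hc1 hαpos
      linarith [h]
    have hene : ((n:ℝ)+1)*α - (k:ℝ) ≠ 0 := by
      have h := (hmul_α (n+1) (by omega)).ne_int (k:ℤ)
      push_cast at h
      exact sub_ne_zero.2 h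
    have hβcase : β < α/2 ∨ 1 - α/2 < β := by
      rcases hene.lt_or_gt with hneg | hpos
      · right
        have h1 : β = Int.fract ((((n:ℝ)+1)*α - (k:ℝ)) + 1) := by
          rw [hβdef, Int.fract_eq_fract]
          exact ⟨(k:ℤ) - 1, by push_cast; ring⟩
        rw [h1, Int.fract_eq_self.2 ⟨by linarith, by linarith⟩]
        linarith
      · left
        have h1 : β = Int.fract (((n:ℝ)+1)*α - (k:ℝ)) := by
          rw [hβdef, Int.fract_eq_fract]
          exact ⟨(k:ℤ), by push_cast; ring⟩
        rw [h1, Int.fract_eq_self.2 ⟨by linarith, by linarith⟩]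
        linarith
    clear hene hu1 hu2 hEb hc1 hc2 hnC
    rcases hβcase with hb | hb
    · constructor
      · -- zeros : x small
        obtain ⟨m, hm1, hmlo, hmhi⟩ := dense_pos hirr_α (le_refl (0:ℝ))
          (show 1 - α - 2*β ≤ 1 by linarith) (by linarith)
        have hm' : (m - 1) + 1 = m := Nat.sub_add_cancel hm1
        have hcastm : (((m-1:ℕ)):ℝ) + 1 = (m:ℝ) := by exact_mod_cast hm'
        refine ⟨m - 1, ?_, ?_, ?_⟩
        · exact (hchar (m-1)).1.mpr (by rw [hcastm]; linarith)
        · apply (hchar ((m-1) + (n+1))).1.mpr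
          rw [keyA (m-1), hcastm, Int.fract_eq_self.2 ⟨by linarith, by linarith⟩]
          linarith
        · apply (hchar ((m-1) + 2*(n+1))).1.mpr
          rw [keyB (m-1), hcastm, Int.fract_eq_self.2 ⟨by linarith, by linarith⟩]
          linarith
      · -- ones : x in (1-α, 1-2β)
        obtain ⟨m, hm1, hmlo, hmhi⟩ := dense_pos hirr_α (show (0:ℝ) ≤ 1 - α by linarith)
          (show 1 - 2*β ≤ 1 by linarith) (by linarith)
        have hm' : (m - 1) + 1 = m := Nat.sub_add_cancel hm1
        have hcastm : (((m-1:ℕ)):ℝ) + 1 = (m:ℝ) := by exact_mod_cast hm'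
        refine ⟨m - 1, ?_, ?_, ?_⟩
        · exact (hchar (m-1)).2.mpr (by rw [hcastm]; linarith)
        · apply (hchar ((m-1) + (n+1))).2.mpr
          rw [keyA (m-1), hcastm, Int.fract_eq_self.2 ⟨by linarith, by linarith⟩]
          linarith
        · apply (hchar ((m-1) + 2*(n+1))).2.mpr
          rw [keyB (m-1), hcastm, Int.fract_eq_self.2 ⟨by linarith, by linarith⟩]
          linarith
    · constructor
      · -- zeros : x in (2-2β, 1-α)
        obtain ⟨m, hm1, hmlo, hmhi⟩ := dense_pos hirr_α (show (0:ℝ) ≤ 2 - 2*β by linarith)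
          (show 1 - α ≤ 1 by linarith) (by linarith)
        have hm' : (m - 1) + 1 = m := Nat.sub_add_cancel hm1
        have hcastm : (((m-1:ℕ)):ℝ) + 1 = (m:ℝ) := by exact_mod_cast hm'
        refine ⟨m - 1, ?_, ?_, ?_⟩
        · exact (hchar (m-1)).1.mpr (by rw [hcastm]; linarith)
        · apply (hchar ((m-1) + (n+1))).1.mpr
          rw [keyA (m-1), hcastm, fract_eq1 (by linarith) (by linarith)]
          linarith
        · apply (hchar ((m-1) + 2*(n+1))).1.mpr
          rw [keyB (m-1), hcastm, fract_eq2 (by linarith) (by linarith)]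
          linarith
      · -- ones : x in (3-α-2β, 1)
        obtain ⟨m, hm1, hmlo, hmhi⟩ := dense_pos hirr_α (show (0:ℝ) ≤ 3 - α - 2*β by linarith)
          (le_refl (1:ℝ)) (by linarith)
        have hm' : (m - 1) + 1 = m := Nat.sub_add_cancel hm1
        have hcastm : (((m-1:ℕ)):ℝ) + 1 = (m:ℝ) := by exact_mod_cast hm'
        refine ⟨m - 1, ?_, ?_, ?_⟩
        · exact (hchar (m-1)).2.mpr (by rw [hcastm]; linarith)
        · apply (hchar ((m-1) + (n+1))).2.mpr
          rw [keyA (m-1), hcastm, fract_eq1 (by linarith) (by linarith)]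
          linarith
        · apply (hchar ((m-1) + 2*(n+1))).2.mpr
          rw [keyB (m-1), hcastm, fract_eq2 (by linarith) (by linarith)]
          linarith
end

section
/- Let φ = (1 + √5)/2 be the golden ratio. Define a(n) = ⌊nφ⁴⌋, b(n) = ⌊nφ³⌋, c(n) = ⌊nφ⌋, and for n ≥ 1 let c̃(n) be the n-th smallest positive integer not contained in the union {a(i) : i ≥ 1} ∪ {b(i) : i ≥ 1}. Then for all n ≥ 1, 0 ≤ c(n) − c̃(n) ≤ 2. -/
attribute [local instance] Classical.propDecidable

lemma irr_comb {φ : ℝ} (hirr : Irrational φ) (a b : ℚ) (hb : b ≠ 0) :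
    Irrational ((a:ℝ) + (b:ℝ) * φ) := (hirr.ratCast_mul hb).ratCast_add a

lemma irr_floor_lt {x : ℝ} (h : Irrational x) : (⌊x⌋ : ℝ) < x :=
  lt_of_le_of_ne (Int.floor_le x) (Ne.symm (h.ne_int ⌊x⌋))

lemma irr_nmul_pow {φ : ℝ} (hφ2 : φ^2 = φ + 1) (hirr : Irrational φ) {i : ℕ} (hi : 1 ≤ i) :
    Irrational ((i:ℝ) * φ ^ 4) ∧ Irrational ((i:ℝ) * φ ^ 3) := by
  have e4 : φ^4 = 3*φ + 2 := by nlinarith [hφ2]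
  have e3 : φ^3 = 2*φ + 1 := by nlinarith [hφ2]
  constructor
  · have := irr_comb hirr (2*i) (3*i) (by positivity)
    convert this using 1
    rw [e4]; push_cast; ring
  · have := irr_comb hirr (i) (2*i) (by positivity)
    convert this using 1
    rw [e3]; push_cast; ring

lemma key4 {φ : ℝ} (hφ2 : φ^2 = φ + 1) (c : ℝ) : (c*(3*φ+2))*(5-3*φ) = c := by
  linear_combination (-9*c)*hφ2

lemma key4' {φ : ℝ} (hφ2 : φ^2 = φ + 1) (c : ℝ) : (c*(5-3*φ))*(3*φ+2) = c := by
  linear_combination (-9*c)*hφ2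

lemma key3 {φ : ℝ} (hφ2 : φ^2 = φ + 1) (c : ℝ) : (c*(2*φ+1))*(2*φ-3) = c := by
  linear_combination (4*c)*hφ2

lemma key3' {φ : ℝ} (hφ2 : φ^2 = φ + 1) (c : ℝ) : (c*(2*φ-3))*(2*φ+1) = c := by
  linear_combination (4*c)*hφ2

lemma keyφ {φ : ℝ} (hφ2 : φ^2 = φ + 1) (c : ℝ) : (c*φ)*(φ-1) = c := by
  linear_combination c*hφ2

lemma disj_lem {φ : ℝ} (hφ2 : φ^2 = φ + 1) (hgt : 1.6 < φ) (hlt : φ < 1.62)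
    (hirr : Irrational φ) {i j : ℕ} (hi : 1 ≤ i) (hj : 1 ≤ j) :
    ⌊(i:ℝ) * φ^4⌋ ≠ ⌊(j:ℝ) * φ^3⌋ := by
  intro h
  set m : ℤ := ⌊(j:ℝ)*φ^3⌋ with hm
  have e4 : φ^4 = 3*φ + 2 := by linear_combination (φ^2+φ+2)*hφ2
  have e3 : φ^3 = 2*φ + 1 := by linear_combination (φ+1)*hφ2
  have h1 : (m:ℝ) < (i:ℝ)*φ^4 := by
    rw [← h]; exact irr_floor_lt (irr_nmul_pow hφ2 hirr hi).1
  have h2 : (i:ℝ)*φ^4 < m + 1 := by rw [← h]; exact Int.lt_floor_add_one _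
  have h3 : (m:ℝ) < (j:ℝ)*φ^3 := irr_floor_lt (irr_nmul_pow hφ2 hirr hj).2
  have h4 : (j:ℝ)*φ^3 < m + 1 := Int.lt_floor_add_one _
  rw [e4, show (i:ℝ)*(3*φ+2) = (i:ℝ)*(3*φ+2) from rfl] at h1
  rw [e4] at h2
  rw [e3] at h3 h4
  have q1 : (0:ℝ) < 5 - 3*φ := by linarith
  have q2 : (0:ℝ) < 2*φ - 3 := by linarith
  have s1 : (m:ℝ)*(5-3*φ) < i := by
    have := mul_lt_mul_of_pos_right h1 q1
    rwa [key4 hφ2 (i:ℝ)] at this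
  have s2 : (i:ℝ) < ((m:ℝ)+1)*(5-3*φ) := by
    have := mul_lt_mul_of_pos_right h2 q1
    rwa [key4 hφ2 (i:ℝ)] at this
  have r1 : (m:ℝ)*(2*φ-3) < j := by
    have := mul_lt_mul_of_pos_right h3 q2
    rwa [key3 hφ2 (j:ℝ)] at this
  have r2 : (j:ℝ) < ((m:ℝ)+1)*(2*φ-3) := by
    have := mul_lt_mul_of_pos_right h4 q2
    rwa [key3 hφ2 (j:ℝ)] at this
  have k1 : (m:ℝ) < 2*(i:ℝ) + 3*(j:ℝ) := by linarith
  have k2 : 2*(i:ℝ) + 3*(j:ℝ) < m + 1 := by linarith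
  have k1' : m < 2*(i:ℤ) + 3*(j:ℤ) := by exact_mod_cast k1
  have k2' : 2*(i:ℤ) + 3*(j:ℤ) < m + 1 := by exact_mod_cast k2
  omega

lemma toNat_cast_real {z : ℤ} (h : 0 ≤ z) : ((z.toNat : ℕ) : ℝ) = (z : ℝ) := by
  exact_mod_cast congrArg (Int.cast : ℤ → ℝ) (Int.toNat_of_nonneg h)

lemma card_floorset_le (α : ℝ) (hα : 0 < α) (M a : ℕ)
    (ha : ((M:ℝ)+1) ≤ ((a:ℝ)+1)*α) :
    ((Finset.Icc 1 M).filter (fun x : ℕ => ∃ i : ℕ, 1 ≤ i ∧ ((x:ℕ):ℤ) = ⌊(i:ℝ)*α⌋)).card ≤ a := by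
  have := Finset.card_le_card_of_injOn
    (f := fun x : ℕ => if h : ∃ i : ℕ, 1 ≤ i ∧ ((x:ℕ):ℤ) = ⌊(i:ℝ)*α⌋ then h.choose else 0)
    (s := (Finset.Icc 1 M).filter (fun x : ℕ => ∃ i : ℕ, 1 ≤ i ∧ ((x:ℕ):ℤ) = ⌊(i:ℝ)*α⌋))
    (t := Finset.Icc 1 a) ?_ ?_
  · simpa using this
  · intro x hx
    simp only [Finset.mem_coe, Finset.mem_filter, Finset.mem_Icc] at hx
    obtain ⟨⟨hx1, hxM⟩, hex⟩ := hx
    dsimp only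
    rw [dif_pos hex]
    obtain ⟨hi1, hix⟩ := hex.choose_spec
    simp only [Finset.mem_coe, Finset.mem_Icc]
    refine ⟨hi1, ?_⟩
    have h1 : (hex.choose : ℝ) * α < (x:ℝ) + 1 := by
      have h := Int.lt_floor_add_one ((hex.choose : ℝ)*α)
      rw [← hix] at h
      exact_mod_cast h
    have h2 : ((x:ℝ)) + 1 ≤ (M:ℝ) + 1 := by
      have : (x:ℝ) ≤ M := by exact_mod_cast hxM
      linarith
    have h3 : (hex.choose : ℝ) * α < ((a:ℝ)+1)*α := by linarith
    have h4 : (hex.choose : ℝ) < (a:ℝ)+1 := lt_of_mul_lt_mul_right h3 hα.le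
    have : (hex.choose : ℕ) < a + 1 := by exact_mod_cast h4
    omega
  · intro x hx y hy hxy
    simp only [Finset.coe_filter, Set.mem_setOf_eq] at hx hy
    obtain ⟨-, hex⟩ := hx
    obtain ⟨-, hey⟩ := hy
    simp only at hxy
    rw [dif_pos hex, dif_pos hey] at hxy
    have h1 := hex.choose_spec.2
    have h2 := hey.choose_spec.2
    rw [hxy] at h1
    rw [← h2] at h1
    exact_mod_cast h1

lemma card_floorset_ge (α : ℝ) (hα : 1 < α) (M a : ℕ)
    (ha : ((a:ℝ))*α < (M:ℝ)+1) :
    a ≤ ((Finset.Icc 1 M).filter (fun x : ℕ => ∃ i : ℕ, 1 ≤ i ∧ ((x:ℕ):ℤ) = ⌊(i:ℝ)*α⌋)).card := by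
  have hmono : ∀ i k : ℕ, i < k → (⌊(i:ℝ)*α⌋) < ⌊(k:ℝ)*α⌋ := by
    intro i k hik
    have h1 : (i:ℝ)*α + 1 ≤ (k:ℝ)*α := by
      have : (i:ℝ) + 1 ≤ (k:ℝ) := by exact_mod_cast hik
      nlinarith [Nat.cast_nonneg (α := ℝ) i]
    calc ⌊(i:ℝ)*α⌋ < ⌊(i:ℝ)*α⌋ + 1 := by omega
    _ = ⌊(i:ℝ)*α + 1⌋ := by rw [Int.floor_add_one]
    _ ≤ ⌊(k:ℝ)*α⌋ := Int.floor_le_floor h1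
  have := Finset.card_le_card_of_injOn
    (f := fun i : ℕ => (⌊(i:ℝ)*α⌋).toNat)
    (s := Finset.Icc 1 a)
    (t := (Finset.Icc 1 M).filter (fun x : ℕ => ∃ i : ℕ, 1 ≤ i ∧ ((x:ℕ):ℤ) = ⌊(i:ℝ)*α⌋)) ?_ ?_
  · simpa using this
  · intro i hi
    simp only [Finset.mem_coe, Finset.mem_Icc] at hi
    obtain ⟨hi1, hia⟩ := hi
    have hfl1 : (1:ℤ) ≤ ⌊(i:ℝ)*α⌋ := by
      refine Int.le_floor.2 ?_
      have h1 : (1:ℝ) ≤ (i:ℝ) := by exact_mod_cast hi1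
      push_cast
      nlinarith
    have hflM : ⌊(i:ℝ)*α⌋ ≤ (M:ℤ) := by
      have h1 : (i:ℝ)*α ≤ (a:ℝ)*α := by
        have : (i:ℝ) ≤ (a:ℝ) := by exact_mod_cast hia
        nlinarith
      have h2 : (i:ℝ)*α < (M:ℝ)+1 := by linarith
      have h3 : ((⌊(i:ℝ)*α⌋ : ℤ) : ℝ) < (M:ℝ)+1 := lt_of_le_of_lt (Int.floor_le _) h2
      have h4 : (⌊(i:ℝ)*α⌋ : ℤ) < (M:ℤ)+1 := by exact_mod_cast h3
      omega
    simp only [Finset.mem_coe, Finset.mem_filter, Finset.mem_Icc]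
    refine ⟨⟨by omega, by omega⟩, ⟨i, hi1, by
      rw [Int.toNat_of_nonneg (by omega : (0:ℤ) ≤ ⌊(i:ℝ)*α⌋)]⟩⟩
  · intro i hi k hk hik
    simp only [Finset.mem_coe, Finset.mem_Icc] at hi hk
    have hik' : (⌊(i:ℝ)*α⌋).toNat = (⌊(k:ℝ)*α⌋).toNat := hik
    by_contra hne
    rcases Nat.lt_or_ge i k with h | h
    · have h2 := hmono i k h
      have hi0 : (0:ℤ) ≤ ⌊(i:ℝ)*α⌋ := by positivity
      omega
    · have h' : k < i := by omega
      have h2 := hmono k i h'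
      have hk0 : (0:ℤ) ≤ ⌊(k:ℝ)*α⌋ := by positivity
      omega

set_option maxHeartbeats 1600000 in
/-- Hildebrand–Li–Li–Xie: if `c̃(n)` is the `n`-th smallest positive integer not
of the form `⌊iφ⁴⌋` or `⌊iφ³⌋` (`i ≥ 1`), then `0 ≤ ⌊nφ⌋ − c̃(n) ≤ 2` for all `n ≥ 1`. -/
theorem hildebrand_li_li_xie
    (φ : ℝ) (hφ : φ = (1 + Real.sqrt 5) / 2)
    (S : Set ℕ)
    (hS : S = {x : ℕ | 0 < x ∧
      (¬∃ i : ℕ, 1 ≤ i ∧ (x : ℤ) = ⌊(i : ℝ) * φ ^ 4⌋) ∧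
      (¬∃ i : ℕ, 1 ≤ i ∧ (x : ℤ) = ⌊(i : ℝ) * φ ^ 3⌋)})
    (ct : ℕ → ℕ)
    -- `ct` enumerates `S` in increasing order, starting at index 1:
    (hmem : ∀ n : ℕ, 1 ≤ n → ct n ∈ S)
    (hmono : ∀ n : ℕ, 1 ≤ n → ct n < ct (n + 1))
    (hsurj : ∀ x ∈ S, ∃ n : ℕ, 1 ≤ n ∧ ct n = x) :
    ∀ n : ℕ, 1 ≤ n →
      0 ≤ ⌊(n : ℝ) * φ⌋ - (ct n : ℤ) ∧ ⌊(n : ℝ) * φ⌋ - (ct n : ℤ) ≤ 2 := by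
  -- basic facts about φ
  have h5 : Real.sqrt 5 ^ 2 = 5 := Real.sq_sqrt (by norm_num)
  have hs5lb : 2.23 < Real.sqrt 5 := by nlinarith [Real.sqrt_nonneg 5, h5]
  have hs5ub : Real.sqrt 5 < 2.24 := by nlinarith [Real.sqrt_nonneg 5, h5]
  have hφ2 : φ^2 = φ + 1 := by rw [hφ]; nlinarith
  have hgt : 1.6 < φ := by rw [hφ]; nlinarith
  have hlt : φ < 1.62 := by rw [hφ]; nlinarith
  have hirr : Irrational φ := by
    rw [hφ]
    have h5i : Irrational (Real.sqrt 5) := (Nat.prime_five).irrational_sqrt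
    have := (h5i.ratCast_mul (show ((1:ℚ)/2) ≠ 0 by norm_num)).ratCast_add ((1:ℚ)/2)
    convert this using 1
    push_cast
    ring
  have e4 : φ^4 = 3*φ + 2 := by linear_combination (φ^2+φ+2)*hφ2
  have e3 : φ^3 = 2*φ + 1 := by linear_combination (φ+1)*hφ2
  have hφ4pos : (0:ℝ) < φ^4 := by rw [e4]; linarith
  have hφ3gt1 : (1:ℝ) < φ^3 := by rw [e3]; linarith
  have hφ4gt1 : (1:ℝ) < φ^4 := by rw [e4]; linarith
  -- monotonicity machinery
  have hmono2 : ∀ k l : ℕ, 1 ≤ k → k < l → ct k < ct l := by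
    intro k l hk hkl
    induction l with
    | zero => omega
    | succ l ih =>
      rcases Nat.lt_or_ge k l with h | h
      · exact lt_trans (ih h) (hmono l (by omega))
      · have : k = l := by omega
        subst this
        exact hmono k hk
  have hmonole : ∀ k l : ℕ, 1 ≤ k → k ≤ l → ct k ≤ ct l := by
    intro k l hk hkl
    rcases Nat.eq_or_lt_of_le hkl with h | h
    · rw [h]
    · exact (hmono2 k l hk h).le
  have hct1 : ∀ k : ℕ, 1 ≤ k → 1 ≤ ct k := by
    intro k hk
    have := hmem k hk
    rw [hS] at this
    exact this.1
  -- the counting set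
  set pA : ℕ → Prop := fun x => ∃ i : ℕ, 1 ≤ i ∧ (x : ℤ) = ⌊(i:ℝ)*φ^4⌋ with hpA
  set pB : ℕ → Prop := fun x => ∃ i : ℕ, 1 ≤ i ∧ (x : ℤ) = ⌊(i:ℝ)*φ^3⌋ with hpB
  have hSmem : ∀ x : ℕ, x ∈ S ↔ 0 < x ∧ ¬ pA x ∧ ¬ pB x := by
    intro x; rw [hS]; rfl
  set T : ℕ → Finset ℕ := fun M => (Finset.Icc 1 M).filter (fun x => x ∈ S) with hT
  -- partition count
  have hcardT : ∀ M : ℕ,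
      (T M).card + ((Finset.Icc 1 M).filter pA).card
        + ((Finset.Icc 1 M).filter pB).card = M := by
    intro M
    have hdisj : Disjoint ((Finset.Icc 1 M).filter pA) ((Finset.Icc 1 M).filter pB) := by
      rw [Finset.disjoint_left]
      intro x hxA hxB
      simp only [Finset.mem_filter] at hxA hxB
      obtain ⟨-, i, hi1, hix⟩ := hxA
      obtain ⟨-, j, hj1, hjx⟩ := hxB
      exact disj_lem hφ2 hgt hlt hirr hi1 hj1 (by rw [← hix, ← hjx])
    have hunion : ((Finset.Icc 1 M).filter (fun x => pA x ∨ pB x)).card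
        = ((Finset.Icc 1 M).filter pA).card + ((Finset.Icc 1 M).filter pB).card := by
      rw [Finset.filter_or, Finset.card_union_of_disjoint hdisj]
    have hpart := Finset.card_filter_add_card_filter_not
      (s := Finset.Icc 1 M) (p := fun x => pA x ∨ pB x)
    have hTeq : (T M) = (Finset.Icc 1 M).filter (fun x => ¬ (pA x ∨ pB x)) := by
      apply Finset.filter_congr
      intro x hx
      simp only [Finset.mem_Icc] at hx
      rw [hSmem x]
      constructor
      · rintro ⟨-, h1, h2⟩ h
        exact h.elim h1 h2
      · intro h
        push_neg at h
        exact ⟨by omega, h.1, h.2⟩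
    rw [hTeq]
    have hMcard : (Finset.Icc 1 M).card = M := by simp
    omega
  intro n hn
  -- enumeration lemmas
  have enum_ge : ∀ M : ℕ, ct n ≤ M → n ≤ (T M).card := by
    intro M hctM
    have himg : (Finset.Icc 1 n).image ct ⊆ T M := by
      intro y hy
      simp only [Finset.mem_image, Finset.mem_Icc] at hy
      obtain ⟨k, ⟨hk1, hkn⟩, rfl⟩ := hy
      simp only [hT, Finset.mem_filter, Finset.mem_Icc]
      exact ⟨⟨hct1 k hk1, le_trans (hmonole k n hk1 hkn) hctM⟩, hmem k hk1⟩
    have hinj : Set.InjOn ct (Finset.Icc 1 n) := by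
      intro a ha b hb hab
      simp only [Finset.coe_Icc, Set.mem_Icc] at ha hb
      by_contra hne
      rcases Nat.lt_or_ge a b with h | h
      · exact absurd hab (by have := hmono2 a b ha.1 h; omega)
      · have : b < a := by omega
        exact absurd hab (by have := hmono2 b a hb.1 this; omega)
    calc n = (Finset.Icc 1 n).card := by simp
    _ = ((Finset.Icc 1 n).image ct).card := (Finset.card_image_of_injOn hinj).symm
    _ ≤ (T M).card := Finset.card_le_card himg
  have enum_le : ∀ M : ℕ, n ≤ (T M).card → ct n ≤ M := by
    intro M hcard
    by_contra hlt'
    push_neg at hlt'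
    have hsub : T M ⊆ (Finset.Icc 1 (n-1)).image ct := by
      intro x hx
      simp only [hT, Finset.mem_filter, Finset.mem_Icc] at hx
      obtain ⟨⟨hx1, hxM⟩, hxS⟩ := hx
      obtain ⟨k, hk1, hkx⟩ := hsurj x hxS
      have hkn : k ≤ n - 1 := by
        by_contra hk'
        push_neg at hk'
        have : n ≤ k := by omega
        have := hmonole n k hn this
        omega
      simp only [Finset.mem_image, Finset.mem_Icc]
      exact ⟨k, ⟨hk1, hkn⟩, hkx⟩
    have h1 := Finset.card_le_card hsub
    have h2 := Finset.card_image_le (f := ct) (s := Finset.Icc 1 (n-1))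
    have h3 : (Finset.Icc 1 (n-1)).card = n - 1 := by simp
    omega
  -- N = ⌊nφ⌋
  set N : ℕ := (⌊(n:ℝ)*φ⌋).toNat with hN
  have hnφpos : (0:ℝ) ≤ (n:ℝ)*φ := by positivity
  have hNfl : (⌊(n:ℝ)*φ⌋ : ℤ) = (N:ℤ) := by
    rw [hN, Int.toNat_of_nonneg (Int.floor_nonneg.2 hnφpos)]
  have hNle : (N:ℝ) ≤ (n:ℝ)*φ := by
    have := Int.floor_le ((n:ℝ)*φ)
    rw [hNfl] at this
    exact_mod_cast this
  have hNgt : (n:ℝ)*φ < (N:ℝ) + 1 := by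
    have := Int.lt_floor_add_one ((n:ℝ)*φ)
    rw [hNfl] at this
    exact_mod_cast this
  -- upper bound: ct n ≤ N
  have hctN : ct n ≤ N := by
    apply enum_le
    -- a, b upper bounds for the two filters
    set a : ℕ := (⌊((N:ℝ)+1)/φ^4⌋).toNat with ha
    set b : ℕ := (⌊((N:ℝ)+1)/φ^3⌋).toNat with hb
    have hapos : (0:ℝ) ≤ ((N:ℝ)+1)/φ^4 := by positivity
    have hbpos : (0:ℝ) ≤ ((N:ℝ)+1)/φ^3 := by positivity
    have haub : (a:ℝ) ≤ ((N:ℝ)+1)/φ^4 := by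
      rw [ha, toNat_cast_real (Int.floor_nonneg.2 hapos)]
      exact Int.floor_le _
    have hbub : (b:ℝ) ≤ ((N:ℝ)+1)/φ^3 := by
      rw [hb, toNat_cast_real (Int.floor_nonneg.2 hbpos)]
      exact Int.floor_le _
    have halb : ((N:ℝ)+1)/φ^4 - 1 < (a:ℝ) := by
      rw [ha, toNat_cast_real (Int.floor_nonneg.2 hapos)]
      exact Int.sub_one_lt_floor _
    have hblb : ((N:ℝ)+1)/φ^3 - 1 < (b:ℝ) := by
      rw [hb, toNat_cast_real (Int.floor_nonneg.2 hbpos)]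
      exact Int.sub_one_lt_floor _
    have hcardA : ((Finset.Icc 1 N).filter pA).card ≤ a := by
      apply card_floorset_le (φ^4) hφ4pos
      exact le_of_lt ((div_lt_iff₀ hφ4pos).1 (by linarith : ((N:ℝ)+1)/φ^4 < (a:ℝ)+1))
    have hcardB : ((Finset.Icc 1 N).filter pB).card ≤ b := by
      apply card_floorset_le (φ^3) (by linarith)
      exact le_of_lt ((div_lt_iff₀ (by linarith : (0:ℝ) < φ^3)).1
        (by linarith : ((N:ℝ)+1)/φ^3 < (b:ℝ)+1))
    -- a + b + n ≤ N
    have haφ : (a:ℝ) * (3*φ+2) ≤ (N:ℝ)+1 := by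
      rw [← e4]; exact (le_div_iff₀ hφ4pos).1 haub
    have hbφ : (b:ℝ) * (2*φ+1) ≤ (N:ℝ)+1 := by
      rw [← e3]; exact (le_div_iff₀ (by linarith : (0:ℝ) < φ^3)).1 hbub
    have f1 : (a:ℝ) ≤ ((N:ℝ)+1)*(5-3*φ) := by
      have := mul_le_mul_of_nonneg_right haφ (by linarith : (0:ℝ) ≤ 5-3*φ)
      rwa [key4 hφ2 (a:ℝ)] at this
    have f2 : (b:ℝ) ≤ ((N:ℝ)+1)*(2*φ-3) := by
      have := mul_le_mul_of_nonneg_right hbφ (by linarith : (0:ℝ) ≤ 2*φ-3)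
      rwa [key3 hφ2 (b:ℝ)] at this
    have f3 : (n:ℝ) < ((N:ℝ)+1)*(φ-1) := by
      have := mul_lt_mul_of_pos_right hNgt (by linarith : (0:ℝ) < φ-1)
      rwa [keyφ hφ2 (n:ℝ)] at this
    have habn : (a:ℝ) + b + n < (N:ℝ) + 1 := by linarith
    have habn' : a + b + n ≤ N := by
      have : ((a+b+n : ℕ):ℝ) < ((N+1 : ℕ):ℝ) := by push_cast; linarith
      have := Nat.cast_lt (α := ℝ) |>.1 this
      omega
    have := hcardT N
    omega
  -- lower bound: N ≤ ct n + 2, i.e. ¬ (ct n ≤ N - 3)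
  have hctlow : N ≤ ct n + 2 := by
    rcases Nat.lt_or_ge N 4 with hN4 | hN4
    · have := hct1 n hn
      omega
    · by_contra hcon
      push_neg at hcon
      -- then ct n ≤ N - 3 =: M
      set M : ℕ := N - 3 with hM
      have hctM : ct n ≤ M := by omega
      have hMN : (M:ℝ) + 3 = (N:ℝ) := by
        have : M + 3 = N := by omega
        exact_mod_cast congrArg (Nat.cast : ℕ → ℝ) this
      have hge := enum_ge M hctM
      -- count: (T M).card < n
      set a : ℕ := (⌊((M:ℝ)+1)/φ^4⌋).toNat with ha
      set b : ℕ := (⌊((M:ℝ)+1)/φ^3⌋).toNat with hb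
      have hapos : (0:ℝ) ≤ ((M:ℝ)+1)/φ^4 := by positivity
      have hbpos : (0:ℝ) ≤ ((M:ℝ)+1)/φ^3 := by positivity
      have haub : (a:ℝ) ≤ ((M:ℝ)+1)/φ^4 := by
        rw [ha, toNat_cast_real (Int.floor_nonneg.2 hapos)]
        exact Int.floor_le _
      have hbub : (b:ℝ) ≤ ((M:ℝ)+1)/φ^3 := by
        rw [hb, toNat_cast_real (Int.floor_nonneg.2 hbpos)]
        exact Int.floor_le _
      have halb : ((M:ℝ)+1)/φ^4 - 1 < (a:ℝ) := by
        rw [ha, toNat_cast_real (Int.floor_nonneg.2 hapos)]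
        exact Int.sub_one_lt_floor _
      have hblb : ((M:ℝ)+1)/φ^3 - 1 < (b:ℝ) := by
        rw [hb, toNat_cast_real (Int.floor_nonneg.2 hbpos)]
        exact Int.sub_one_lt_floor _
      -- strictness via irrationality
      have haφlt : (a:ℝ)*φ^4 < (M:ℝ)+1 := by
        have hle : (a:ℝ)*φ^4 ≤ (M:ℝ)+1 := (le_div_iff₀ hφ4pos).1 haub
        rcases Nat.eq_zero_or_pos a with h0 | hpos
        · rw [h0]; push_cast
          nlinarith [Nat.cast_nonneg (α := ℝ) M]
        · rcases lt_or_eq_of_le hle with h | h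
          · exact h
          · exfalso
            have hirr4 := (irr_nmul_pow hφ2 hirr hpos).1
            rw [h] at hirr4
            exact hirr4 ⟨(M:ℚ)+1, by push_cast; ring⟩
      have hbφlt : (b:ℝ)*φ^3 < (M:ℝ)+1 := by
        have hle : (b:ℝ)*φ^3 ≤ (M:ℝ)+1 := (le_div_iff₀ (by linarith : (0:ℝ) < φ^3)).1 hbub
        rcases Nat.eq_zero_or_pos b with h0 | hpos
        · rw [h0]; push_cast
          nlinarith [Nat.cast_nonneg (α := ℝ) M]
        · rcases lt_or_eq_of_le hle with h | h
          · exact h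
          · exfalso
            have hirr3 := (irr_nmul_pow hφ2 hirr hpos).2
            rw [h] at hirr3
            exact hirr3 ⟨(M:ℚ)+1, by push_cast; ring⟩
      have hcardA : a ≤ ((Finset.Icc 1 M).filter pA).card :=
        card_floorset_ge (φ^4) hφ4gt1 M a haφlt
      have hcardB : b ≤ ((Finset.Icc 1 M).filter pB).card :=
        card_floorset_ge (φ^3) hφ3gt1 M b hbφlt
      -- M + 1 ≤ n + a + b
      have g1 : ((M:ℝ)+1)*(5-3*φ) - 1 < (a:ℝ) := by
        have hdiveq : ((M:ℝ)+1)/φ^4 = ((M:ℝ)+1)*(5-3*φ) := by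
          rw [eq_comm, eq_div_iff (by positivity : (φ:ℝ)^4 ≠ 0), e4]
          exact key4' hφ2 _
        rw [hdiveq] at halb
        linarith
      have g2 : ((M:ℝ)+1)*(2*φ-3) - 1 < (b:ℝ) := by
        have hdiveq : ((M:ℝ)+1)/φ^3 = ((M:ℝ)+1)*(2*φ-3) := by
          rw [eq_comm, eq_div_iff (by positivity : (φ:ℝ)^3 ≠ 0), e3]
          exact key3' hφ2 _
        rw [hdiveq] at hblb
        linarith
      have g3 : (N:ℝ)*(φ-1) ≤ (n:ℝ) := by
        have := mul_le_mul_of_nonneg_right hNle (by linarith : (0:ℝ) ≤ φ-1)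
        rwa [keyφ hφ2 (n:ℝ)] at this
      have hNφ : (N:ℝ)*φ = (M:ℝ)*φ + 3*φ := by rw [← hMN]; ring
      have hMreal : (M:ℝ) < (n:ℝ) + a + b := by linarith [g1, g2, g3, hNφ, hMN, hgt]
      have hMnat : M + 1 ≤ n + a + b := by
        have : ((M:ℕ):ℝ) < ((n+a+b : ℕ):ℝ) := by push_cast; linarith
        have := Nat.cast_lt (α := ℝ) |>.1 this
        omega
      have := hcardT M
      omega
  -- conclusion
  constructor
  · rw [hNfl]
    have : (ct n : ℤ) ≤ (N:ℤ) := by exact_mod_cast hctN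
    omega
  · rw [hNfl]
    have : (N:ℤ) ≤ (ct n : ℤ) + 2 := by exact_mod_cast hctlow
    omega
end

section
/- Let φ = (1 + √5)/2 be the golden ratio. Then the sets {⌊mφ⁴⌋ : m ≥ 1} and {⌊nφ³⌋ : n ≥ 1} are disjoint; that is, there are no integers m ≥ 1 and n ≥ 1 with ⌊mφ⁴⌋ = ⌊nφ³⌋. -/
/-- The Beatty sequences `⌊mφ⁴⌋` and `⌊nφ³⌋` (for `m, n ≥ 1`) are disjoint,
where `φ` is the golden ratio. -/
theorem beatty_phi4_phi3_disjoint :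
    ¬∃ m n : ℕ, 1 ≤ m ∧ 1 ≤ n ∧
      ⌊(m : ℝ) * ((1 + Real.sqrt 5) / 2) ^ 4⌋
        = ⌊(n : ℝ) * ((1 + Real.sqrt 5) / 2) ^ 3⌋ := by
  rintro ⟨m, n, hm, hn, heq⟩
  set φ : ℝ := (1 + Real.sqrt 5) / 2 with hφ
  have hs5 : Real.sqrt 5 ^ 2 = 5 := Real.sq_sqrt (by norm_num)
  have hs5lb : (2.2 : ℝ) < Real.sqrt 5 := by
    nlinarith [Real.sqrt_nonneg 5, hs5]
  have hs5ub : Real.sqrt 5 < 2.3 := by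
    nlinarith [Real.sqrt_nonneg 5, hs5]
  have hφ2 : φ ^ 2 = φ + 1 := by rw [hφ]; nlinarith [hs5]
  have hφlb : (1.6 : ℝ) < φ := by rw [hφ]; nlinarith
  have hφub : φ < 1.65 := by rw [hφ]; nlinarith
  have h3 : φ ^ 3 = 2 * φ + 1 := by nlinarith [hφ2]
  have h4 : φ ^ 4 = 3 * φ + 2 := by nlinarith [hφ2, hφ2.symm ▸ (rfl : φ^2 = φ^2)]
  set N : ℤ := ⌊(n : ℝ) * φ ^ 3⌋ with hNdef
  have hm1 : (1 : ℝ) ≤ m := by exact_mod_cast hm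
  have hn1 : (1 : ℝ) ≤ n := by exact_mod_cast hn
  have hA : (N : ℝ) ≤ (n : ℝ) * φ ^ 3 := Int.floor_le _
  have hA' : (n : ℝ) * φ ^ 3 < N + 1 := Int.lt_floor_add_one _
  have hB : (N : ℝ) ≤ (m : ℝ) * φ ^ 4 := by
    have := Int.floor_le ((m : ℝ) * φ ^ 4)
    rw [heq] at this
    exact this
  have hB' : (m : ℝ) * φ ^ 4 < N + 1 := by
    have := Int.lt_floor_add_one ((m : ℝ) * φ ^ 4)
    rw [heq] at this
    exact this
  -- positivity of the reciprocals φ⁻³ = 2φ-3, φ⁻⁴ = 5-3φ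
  have h23 : (0 : ℝ) < 2 * φ - 3 := by linarith
  have h53 : (0 : ℝ) < 5 - 3 * φ := by linarith
  have key3 : φ ^ 3 * (2 * φ - 3) = 1 := by
    linear_combination (2 * φ - 3) * h3 + 4 * hφ2
  have key4 : φ ^ 4 * (5 - 3 * φ) = 1 := by
    linear_combination (5 - 3 * φ) * h4 - 9 * hφ2
  -- rescaled inequalities
  have hAL : (N : ℝ) * (2 * φ - 3) ≤ n := by
    have h := mul_le_mul_of_nonneg_right hA h23.le
    have e : (n : ℝ) * φ ^ 3 * (2 * φ - 3) = n := by
      rw [mul_assoc, key3, mul_one]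
    linarith
  have hAR : (n : ℝ) < ((N : ℝ) + 1) * (2 * φ - 3) := by
    have h := mul_lt_mul_of_pos_right hA' h23
    have e : (n : ℝ) * φ ^ 3 * (2 * φ - 3) = n := by
      rw [mul_assoc, key3, mul_one]
    linarith
  have hBL : (N : ℝ) * (5 - 3 * φ) ≤ m := by
    have h := mul_le_mul_of_nonneg_right hB h53.le
    have e : (m : ℝ) * φ ^ 4 * (5 - 3 * φ) = m := by
      rw [mul_assoc, key4, mul_one]
    linarith
  have hBR : (m : ℝ) < ((N : ℝ) + 1) * (5 - 3 * φ) := by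
    have h := mul_lt_mul_of_pos_right hB' h53
    have e : (m : ℝ) * φ ^ 4 * (5 - 3 * φ) = m := by
      rw [mul_assoc, key4, mul_one]
    linarith
  -- deduce N = 3n + 2m
  have id1 : 3 * ((N : ℝ) * (2 * φ - 3)) + 2 * ((N : ℝ) * (5 - 3 * φ)) = N := by
    ring
  have id2 : 3 * (((N : ℝ) + 1) * (2 * φ - 3)) + 2 * (((N : ℝ) + 1) * (5 - 3 * φ))
      = N + 1 := by ring
  have hle : (N : ℝ) ≤ 3 * n + 2 * m := by linarith
  have hlt : (3 : ℝ) * n + 2 * m < N + 1 := by linarith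
  have hle' : N ≤ 3 * (n : ℤ) + 2 * (m : ℤ) := by
    have : (N : ℝ) ≤ ((3 * (n : ℤ) + 2 * (m : ℤ) : ℤ) : ℝ) := by push_cast; linarith
    exact_mod_cast this
  have hlt' : 3 * (n : ℤ) + 2 * (m : ℤ) < N + 1 := by
    have : ((3 * (n : ℤ) + 2 * (m : ℤ) : ℤ) : ℝ) < ((N + 1 : ℤ) : ℝ) := by
      push_cast; linarith
    exact_mod_cast this
  have hNval : N = 3 * (n : ℤ) + 2 * (m : ℤ) := by omega
  have hNr : (N : ℝ) = 3 * n + 2 * m := by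
    rw [hNval]; push_cast; ring
  -- pin down φ: 6Nφ = 30n + 18m from both sides
  have eA : 6 * (N : ℝ) * φ - 9 * N = 3 * ((N : ℝ) * (2 * φ - 3)) := by ring
  have eB : 10 * (N : ℝ) - 6 * (N : ℝ) * φ = 2 * ((N : ℝ) * (5 - 3 * φ)) := by ring
  have hkey : 6 * (N : ℝ) * φ = 30 * n + 18 * m := by
    have h1 : 6 * (N : ℝ) * φ ≤ 3 * n + 9 * N := by linarith
    have h2 : 10 * (N : ℝ) - 2 * m ≤ 6 * (N : ℝ) * φ := by linarith
    linarith [hNr]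
  -- extract rationality of √5
  have esplit : 6 * (N : ℝ) * ((1 + Real.sqrt 5) / 2)
      = 3 * (N : ℝ) + 3 * ((N : ℝ) * Real.sqrt 5) := by ring
  rw [hφ] at hkey
  have hrat : (N : ℝ) * Real.sqrt 5 = 7 * n + 4 * m := by linarith
  have hNpos : 0 < N := by
    have hφ3 : (1 : ℝ) ≤ φ ^ 3 := by rw [h3]; linarith
    have h1 : (1 : ℝ) ≤ (n : ℝ) * φ ^ 3 := by
      have := mul_le_mul hn1 hφ3 (by norm_num) (by linarith)
      linarith
    have h2 : (1 : ℤ) ≤ ⌊(n : ℝ) * φ ^ 3⌋ := Int.le_floor.2 (by push_cast; exact h1)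
    rw [hNdef]
    linarith
  have h5irr : Irrational (Real.sqrt 5) := (by norm_num : Nat.Prime 5).irrational_sqrt
  apply h5irr
  refine ⟨(7 * n + 4 * m : ℚ) / (N : ℚ), ?_⟩
  have hN0 : ((N : ℚ) : ℝ) ≠ 0 := by
    simp only [Rat.cast_intCast, ne_eq, Int.cast_eq_zero]
    omega
  push_cast
  rw [div_eq_iff (by exact_mod_cast hN0)]
  linarith [hrat]
end

section
/- For every natural number i ≥ 0, the number of natural numbers m with ⌊m(√2 − 1)⌋ = i equals ⌈(i+1)(√2 + 1)⌉ − ⌈i(√2 + 1)⌉. (Equivalently, A097509(i) = A080754(i+1) − A080754(i) for all i ≥ 0.) -/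
/-- For every `i ≥ 0`, the number of `m` with `⌊m(√2−1)⌋ = i` equals
`⌈(i+1)(√2+1)⌉ − ⌈i(√2+1)⌉` (i.e., A097509(i) = A080754(i+1) − A080754(i)). -/
theorem A097509_eq_diff_A080754 :
    ∀ i : ℕ,
      (({m : ℕ | ⌊(m : ℝ) * (Real.sqrt 2 - 1)⌋ = (i : ℤ)}.ncard : ℤ))
        = ⌈((i : ℝ) + 1) * (Real.sqrt 2 + 1)⌉ - ⌈(i : ℝ) * (Real.sqrt 2 + 1)⌉ := by
  intro i
  set s := Real.sqrt 2 with hsdef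
  have hs2 : s ^ 2 = 2 := Real.sq_sqrt (by norm_num)
  have hs1 : 1 < s := by nlinarith [Real.sqrt_nonneg 2]
  have hkey : ∀ x y : ℝ, x ≤ y * (s - 1) ↔ x * (s + 1) ≤ y := by
    intro x y
    have e : y * (s - 1) * (s + 1) = y := by linear_combination y * hs2
    have e2 : x * (s + 1) * (s - 1) = x := by linear_combination x * hs2
    constructor
    · intro h
      have := mul_le_mul_of_nonneg_right h (by linarith : (0:ℝ) ≤ s + 1)
      rw [e] at this; exact this
    · intro h
      have := mul_le_mul_of_nonneg_right h (by linarith : (0:ℝ) ≤ s - 1)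
      rw [e2] at this; exact this
  have hkey2 : ∀ x y : ℝ, y * (s - 1) < x ↔ y < x * (s + 1) := by
    intro x y
    have e : y * (s - 1) * (s + 1) = y := by linear_combination y * hs2
    have e2 : x * (s + 1) * (s - 1) = x := by linear_combination x * hs2
    constructor
    · intro h
      have := mul_lt_mul_of_pos_right h (by linarith : (0:ℝ) < s + 1)
      rw [e] at this; exact this
    · intro h
      have := mul_lt_mul_of_pos_right h (by linarith : (0:ℝ) < s - 1)
      rw [e2] at this; exact this
  set c := ⌈(i : ℝ) * (s + 1)⌉ with hc
  set d := ⌈((i : ℝ) + 1) * (s + 1)⌉ with hd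
  have hc0 : 0 ≤ c := Int.ceil_nonneg (by positivity)
  have hcd : c ≤ d := by
    apply Int.ceil_le_ceil
    nlinarith [Nat.cast_nonneg (α := ℝ) i]
  have hset : {m : ℕ | ⌊(m : ℝ) * (s - 1)⌋ = (i : ℤ)} = Set.Ico c.toNat d.toNat := by
    ext m
    simp only [Set.mem_setOf_eq, Set.mem_Ico]
    rw [Int.floor_eq_iff]
    push_cast
    rw [hkey, hkey2]
    constructor
    · rintro ⟨h1, h2⟩
      constructor
      · rw [Int.toNat_le, hc, Int.ceil_le]; push_cast; exact h1
      · rw [Int.lt_toNat, hd, Int.lt_ceil]; push_cast; exact h2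
    · rintro ⟨h1, h2⟩
      rw [Int.toNat_le, hc, Int.ceil_le] at h1
      rw [Int.lt_toNat, hd, Int.lt_ceil] at h2
      push_cast at h1 h2
      exact ⟨h1, h2⟩
  rw [hset, Set.ncard_eq_toFinset_card', Set.toFinset_Ico, Nat.card_Ico]
  have h1 := Int.toNat_of_nonneg hc0
  have h2 := Int.toNat_of_nonneg (hc0.trans hcd)
  omega
end

section
/- For every natural number n ≥ 0, the number of natural numbers m with ⌊m(√2 − 1)⌋ = n is either 2 or 3. -/
/-- Every `n` occurs either 2 or 3 times as a value of `m ↦ ⌊m(√2−1)⌋`. -/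
theorem A097509_two_or_three :
    ∀ n : ℕ,
      {m : ℕ | ⌊(m : ℝ) * (Real.sqrt 2 - 1)⌋ = (n : ℤ)}.ncard = 2 ∨
      {m : ℕ | ⌊(m : ℝ) * (Real.sqrt 2 - 1)⌋ = (n : ℤ)}.ncard = 3 := by
  intro n
  have h2 : Real.sqrt 2 ^ 2 = 2 := Real.sq_sqrt (by norm_num)
  have hs0 : (0:ℝ) ≤ Real.sqrt 2 := Real.sqrt_nonneg 2
  have hlb : (1.4:ℝ) < Real.sqrt 2 := by nlinarith
  have hub : Real.sqrt 2 < 1.5 := by nlinarith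
  set s := Real.sqrt 2 with hs
  have hprod : (s - 1) * (s + 1) = 1 := by nlinarith
  set c : ℕ → ℤ := fun k => ⌈(k:ℝ) * (s + 1)⌉ with hc
  have hcnonneg : ∀ k : ℕ, 0 ≤ c k := by
    intro k
    exact Int.ceil_nonneg (by positivity)
  have hset : ∀ k : ℕ, {m : ℕ | ⌊(m : ℝ) * (s - 1)⌋ = (k : ℤ)} =
      ↑(Finset.Ico (c k).toNat (c (k+1)).toNat) := by
    intro k
    ext m
    simp only [Set.mem_setOf_eq, Finset.coe_Ico, Set.mem_Ico]
    rw [Int.floor_eq_iff]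
    push_cast
    constructor
    · rintro ⟨ha, hb⟩
      have h1 : c k ≤ (m:ℤ) := Int.ceil_le.mpr (by push_cast; nlinarith)
      have h2 : (m:ℤ) < c (k+1) := Int.lt_ceil.mpr (by push_cast; nlinarith)
      have := hcnonneg k
      have := hcnonneg (k+1)
      omega
    · rintro ⟨ha, hb⟩
      have h1 : c k ≤ (m:ℤ) := by have := hcnonneg k; omega
      have h2 : (m:ℤ) < c (k+1) := by have := hcnonneg (k+1); omega
      have h1' := Int.ceil_le.mp h1
      have h2' := Int.lt_ceil.mp h2
      push_cast at h1' h2'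
      constructor <;> nlinarith
  rw [hset n, Set.ncard_coe_finset, Nat.card_Ico]
  have hA : (c n : ℝ) < (n:ℝ) * (s + 1) + 1 := Int.ceil_lt_add_one _
  have hB : ((n:ℝ) * (s + 1)) ≤ c n := Int.le_ceil _
  have hC : (((n+1:ℕ)):ℝ) * (s + 1) ≤ (c (n+1) : ℝ) := Int.le_ceil _
  have hD : (c (n+1) : ℝ) < ((n+1:ℕ):ℝ) * (s + 1) + 1 := Int.ceil_lt_add_one _
  push_cast at hC hD
  have hlo : c n + 2 ≤ c (n+1) := by
    have hr : ((c n : ℤ) : ℝ) + 1 < ((c (n+1) : ℤ) : ℝ) := by nlinarith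
    have : (c n : ℤ) + 1 < c (n+1) := by exact_mod_cast hr
    omega
  have hhi : c (n+1) ≤ c n + 3 := by
    have hr : ((c (n+1) : ℤ) : ℝ) < ((c n : ℤ) : ℝ) + 4 := by nlinarith
    have : c (n+1) < c n + 4 := by exact_mod_cast hr
    omega
  have h1 := hcnonneg n
  have h2 := hcnonneg (n+1)
  omega
end

section
/- Define b(i) to be the number of natural numbers m with ⌊m(√2 − 1)⌋ = i + 1. Then for every n ≥ 0, the partial sum b(1) + b(2) + ⋯ + b(n) equals ⌈(n+2)(√2 + 1)⌉ − 5. -/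
lemma sqrt2_facts : (Real.sqrt 2 - 1) * (Real.sqrt 2 + 1) = 1 ∧ 1 < Real.sqrt 2 := by
  have h := Real.sq_sqrt (show (0:ℝ) ≤ 2 by norm_num)
  have h0 := Real.sqrt_nonneg 2
  constructor
  · nlinarith
  · nlinarith

lemma card_eq (k : ℤ) (hk : 0 ≤ k) :
    ({m : ℕ | ⌊(m : ℝ) * (Real.sqrt 2 - 1)⌋ = k}.ncard : ℤ)
      = ⌈((k:ℝ)+1) * (Real.sqrt 2 + 1)⌉ - ⌈(k:ℝ) * (Real.sqrt 2 + 1)⌉ := by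
  obtain ⟨h1, h2⟩ := sqrt2_facts
  have key : ∀ x : ℝ, x * (Real.sqrt 2 - 1) * (Real.sqrt 2 + 1) = x := by
    intro x
    rw [mul_assoc, h1, mul_one]
  have hpos : (0:ℝ) < Real.sqrt 2 + 1 := by linarith
  have hpos2 : (0:ℝ) < Real.sqrt 2 - 1 := by linarith
  set A : ℤ := ⌈(k:ℝ) * (Real.sqrt 2 + 1)⌉ with hA
  set B : ℤ := ⌈((k:ℝ)+1) * (Real.sqrt 2 + 1)⌉ with hB
  have hApos : 0 ≤ A := Int.ceil_nonneg (by positivity)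
  have hAB : A ≤ B := Int.ceil_le_ceil (by nlinarith)
  have hset : {m : ℕ | ⌊(m : ℝ) * (Real.sqrt 2 - 1)⌋ = k} = Set.Ico A.toNat B.toNat := by
    ext m
    simp only [Set.mem_setOf_eq, Set.mem_Ico]
    rw [Int.floor_eq_iff]
    constructor
    · rintro ⟨hl, hr⟩
      constructor
      · rw [Int.toNat_le, hA, Int.ceil_le]
        push_cast
        calc (k:ℝ) * (Real.sqrt 2 + 1) ≤ (m:ℝ) * (Real.sqrt 2 - 1) * (Real.sqrt 2 + 1) :=
              mul_le_mul_of_nonneg_right hl hpos.le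
          _ = m := key m
      · rw [Int.lt_toNat, hB, Int.lt_ceil]
        push_cast
        calc (m:ℝ) = (m:ℝ) * (Real.sqrt 2 - 1) * (Real.sqrt 2 + 1) := (key m).symm
          _ < ((k:ℝ)+1) * (Real.sqrt 2 + 1) := mul_lt_mul_of_pos_right hr hpos
    · rintro ⟨hl, hr⟩
      rw [Int.toNat_le, hA, Int.ceil_le] at hl
      rw [Int.lt_toNat, hB, Int.lt_ceil] at hr
      push_cast at hl hr ⊢
      constructor
      · have := mul_le_mul_of_nonneg_right hl hpos2.le
        calc (k:ℝ) = (k:ℝ) * (Real.sqrt 2 + 1) * (Real.sqrt 2 - 1) := by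
              have := key (k:ℝ); nlinarith [key (k:ℝ)]
          _ ≤ (m:ℝ) * (Real.sqrt 2 - 1) := this
      · have := mul_lt_mul_of_pos_right hr hpos2
        calc (m:ℝ) * (Real.sqrt 2 - 1) < ((k:ℝ)+1) * (Real.sqrt 2 + 1) * (Real.sqrt 2 - 1) := by
              linarith [mul_lt_mul_of_pos_right hr hpos2]
          _ = (k:ℝ) + 1 := by nlinarith [key ((k:ℝ)+1)]
  rw [hset, ← Finset.coe_Ico, Set.ncard_coe_finset, Nat.card_Ico]
  omega

open Finset in
/-- With `b(i)` the number of `m` with `⌊m(√2−1)⌋ = i+1`, the partial sums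
satisfy `b(1) + ⋯ + b(n) = ⌈(n+2)(√2+1)⌉ − 5`. -/
theorem partial_sums_b
    (b : ℕ → ℕ)
    (hb : ∀ i : ℕ, b i = {m : ℕ | ⌊(m : ℝ) * (Real.sqrt 2 - 1)⌋ = (i : ℤ) + 1}.ncard) :
    ∀ n : ℕ,
      (∑ i ∈ Icc 1 n, (b i : ℤ)) = ⌈((n : ℝ) + 2) * (Real.sqrt 2 + 1)⌉ - 5 := by
  obtain ⟨h1, h2⟩ := sqrt2_facts
  have h0 := Real.sqrt_nonneg 2
  have hsq := Real.sq_sqrt (show (0:ℝ) ≤ 2 by norm_num)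
  intro n
  induction n with
  | zero =>
    rw [show Icc 1 0 = (∅ : Finset ℕ) from rfl, Finset.sum_empty,
      show (((0:ℕ):ℝ) + 2) = 2 by norm_num]
    suffices h : ⌈(2:ℝ) * (Real.sqrt 2 + 1)⌉ = 5 by omega
    rw [Int.ceil_eq_iff]
    push_cast
    constructor
    · nlinarith
    · nlinarith
  | succ n ih =>
    rw [Finset.sum_Icc_succ_top (by omega), ih, hb (n+1)]
    have hk : ((n+1 : ℕ) : ℤ) + 1 = ((n:ℤ)+2) := by push_cast; ring
    rw [hk, card_eq ((n:ℤ)+2) (by omega)]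
    push_cast
    rw [show ((n:ℝ)+2+1) = (n:ℝ)+1+2 by ring]
    ring
end

section
/- Define b(i) to be the number of natural numbers m with ⌊m(√2 − 1)⌋ = i + 1. Then for every n ≥ 0, b(⌈(n+2)(√2 + 1)⌉ − 5) = b(n); that is, if t = b(1) + ⋯ + b(n) then b(t) = b(n). -/
set_option maxHeartbeats 1000000

private lemma sqrt2_mul_ne_int (q : ℕ) (z : ℤ) : ((q:ℝ)+1) * Real.sqrt 2 ≠ (z:ℝ) := by
  have h : Irrational (((q+1 : ℕ):ℝ) * Real.sqrt 2) :=
    irrational_sqrt_two.natCast_mul (by omega)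
  have := h.ne_int z
  push_cast at this ⊢
  exact this

private lemma b_formula (b : ℕ → ℕ)
    (hb : ∀ i : ℕ, b i = {m : ℕ | ⌊(m : ℝ) * (Real.sqrt 2 - 1)⌋ = (i : ℤ) + 1}.ncard)
    (i : ℕ) :
    b i = (⌊((i:ℝ)+2) * (Real.sqrt 2 + 1)⌋ - ⌊((i:ℝ)+1) * (Real.sqrt 2 + 1)⌋).toNat := by
  set s := Real.sqrt 2 with hsdef
  have hs : s * s = 2 := Real.mul_self_sqrt (by norm_num)
  have h1 : 1 < s := by nlinarith [Real.sqrt_nonneg 2]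
  set A : ℝ := ((i:ℝ)+1) * (s + 1) with hA
  set B : ℝ := ((i:ℝ)+2) * (s + 1) with hB
  have hA0 : (0:ℝ) < A := by positivity
  have hAfl : (0:ℤ) ≤ ⌊A⌋ := Int.floor_nonneg.mpr hA0.le
  have hBfl : ⌊A⌋ ≤ ⌊B⌋ := Int.floor_le_floor (by nlinarith)
  have hset : {m : ℕ | ⌊(m : ℝ) * (s - 1)⌋ = (i : ℤ) + 1}
      = ↑(Finset.Ioc (⌊A⌋.toNat) (⌊B⌋.toNat)) := by
    ext m
    simp only [Set.mem_setOf_eq, Finset.coe_Ioc, Set.mem_Ioc]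
    rw [Int.floor_eq_iff]
    push_cast
    constructor
    · rintro ⟨hl, hr⟩
      have hl' : A ≤ (m:ℝ) := by
        have := mul_le_mul_of_nonneg_right hl (by linarith : (0:ℝ) ≤ s + 1)
        nlinarith
      have hl'' : A < (m:ℝ) :=
        lt_of_le_of_ne hl' (by
          intro h
          exact sqrt2_mul_ne_int i ((m:ℤ) - (i+1)) (by push_cast [hA] at h ⊢; nlinarith [h]))
      have hr' : (m:ℝ) < B := by
        have := mul_lt_mul_of_pos_right hr (by linarith : (0:ℝ) < s + 1)
        nlinarith
      have h1' : ⌊A⌋ < (m:ℤ) := Int.floor_lt.mpr (by exact_mod_cast hl'')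
      have h2' : (m:ℤ) ≤ ⌊B⌋ := Int.le_floor.mpr (by exact_mod_cast hr'.le)
      constructor
      · omega
      · omega
    · rintro ⟨hl, hr⟩
      have hl' : A < (m:ℝ) := Int.floor_lt.mp (by omega : ⌊A⌋ < (m:ℤ))
      have hr' : (m:ℝ) ≤ B := Int.le_floor.mp (by omega : (m:ℤ) ≤ ⌊B⌋)
      have hr'' : (m:ℝ) < B :=
        lt_of_le_of_ne hr' (by
          intro h
          exact sqrt2_mul_ne_int (i+1) ((m:ℤ) - (i+2)) (by push_cast [hB] at h ⊢; nlinarith [h]))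
      constructor
      · nlinarith
      · nlinarith
  rw [hb i, hset, Set.ncard_coe_finset, Nat.card_Ioc]
  omega

/-- With `b(i)` the number of `m` with `⌊m(√2−1)⌋ = i+1`, one has
`b(⌈(n+2)(√2+1)⌉ − 5) = b(n)` for all `n ≥ 0`; i.e., if `t = b(1) + ⋯ + b(n)`
then `b(t) = b(n)`. -/
theorem b_at_partial_sum
    (b : ℕ → ℕ)
    (hb : ∀ i : ℕ, b i = {m : ℕ | ⌊(m : ℝ) * (Real.sqrt 2 - 1)⌋ = (i : ℤ) + 1}.ncard) :
    ∀ n : ℕ, b ((⌈((n : ℝ) + 2) * (Real.sqrt 2 + 1)⌉ - 5).toNat) = b n := by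
  intro n
  set s := Real.sqrt 2 with hsdef
  have hs : s * s = 2 := Real.mul_self_sqrt (by norm_num)
  have h1 : (1.414:ℝ) < s := by nlinarith [Real.sqrt_nonneg 2]
  have h2 : s < 1.415 := by nlinarith [Real.sqrt_nonneg 2]
  set N : ℤ := ⌊((n:ℝ)+2) * s⌋ with hNdef
  have hNu : ((n:ℝ)+2) * s < N + 1 := Int.lt_floor_add_one _
  have hNl : (N:ℝ) < ((n:ℝ)+2) * s :=
    lt_of_le_of_ne (Int.floor_le _) (fun h => sqrt2_mul_ne_int (n+1) N (by push_cast at h ⊢; linarith) )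
  have hN2 : (2:ℤ) ≤ N := by
    rw [hNdef]
    apply Int.le_floor.mpr
    push_cast
    nlinarith
  -- compute the ceiling
  have hceil : ⌈((n:ℝ)+2) * (s + 1)⌉ = N + n + 3 := by
    rw [Int.ceil_eq_iff]
    push_cast
    constructor
    · nlinarith
    · nlinarith
  rw [hceil]
  have htn : (⌈((n:ℝ)+2) * (s + 1)⌉ - 5).toNat = (N + n + 3 - 5).toNat := by rw [hceil]
  have ht : ((N + n + 3 - 5 : ℤ).toNat : ℤ) = N + n - 2 := by omega
  have htR : (((N + n + 3 - 5 : ℤ).toNat : ℕ) : ℝ) = (N:ℝ) + n - 2 := by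
    have := ht
    push_cast at this ⊢
    exact_mod_cast this
  rw [b_formula b hb, b_formula b hb]
  rw [htR]
  -- abbreviations
  have hθne : ((n:ℝ)+2) * s - N ≠ s - 1 := by
    intro h
    exact sqrt2_mul_ne_int n (N - 1)
      (by push_cast at h ⊢; linarith)
  -- products needed
  have hspos : (0:ℝ) < s := by linarith
  have hAu : ((n:ℝ)+2) * s * s < ((N:ℝ) + 1) * s := mul_lt_mul_of_pos_right hNu hspos
  have hAl : (N:ℝ) * s < ((n:ℝ)+2) * s * s := mul_lt_mul_of_pos_right hNl hspos
  have hks2 : ((n:ℝ)+2) * s * s = 2 * ((n:ℝ)+2) := by nlinarith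
  rcases lt_or_gt_of_ne hθne with hB | hA
  · -- case B : θ < s - 1, b = 3
    have hcb : ((n:ℝ)+2)*s - N < s - 1 := hB
    have hcbs : (((n:ℝ)+2)*s - N) * s < (s - 1) * s := by
      apply mul_lt_mul_of_pos_right hcb hspos
    have f1 : ⌊((n:ℝ)+2) * (s + 1)⌋ = N + (n + 2) := by
      rw [Int.floor_eq_iff]; push_cast; constructor <;> nlinarith
    have f2 : ⌊((n:ℝ)+1) * (s + 1)⌋ = N + n - 1 := by
      rw [Int.floor_eq_iff]; push_cast; constructor <;> nlinarith
    have f3 : ⌊((N:ℝ) + n - 2 + 2) * (s + 1)⌋ = 2*N + 3*n + 1 := by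
      rw [Int.floor_eq_iff]; push_cast; constructor <;> nlinarith
    have f4 : ⌊((N:ℝ) + n - 2 + 1) * (s + 1)⌋ = 2*N + 3*n - 2 := by
      rw [Int.floor_eq_iff]; push_cast; constructor <;> nlinarith
    rw [f1, f2, f3, f4]; omega
  · -- case A : θ > s - 1, b = 2
    have hca : s - 1 < ((n:ℝ)+2)*s - N := hA
    have hcas : (s - 1) * s < (((n:ℝ)+2)*s - N) * s := by
      apply mul_lt_mul_of_pos_right hca hspos
    have f1 : ⌊((n:ℝ)+2) * (s + 1)⌋ = N + (n + 2) := by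
      rw [Int.floor_eq_iff]; push_cast; constructor <;> nlinarith
    have f2 : ⌊((n:ℝ)+1) * (s + 1)⌋ = N + n := by
      rw [Int.floor_eq_iff]; push_cast; constructor <;> nlinarith
    have f3 : ⌊((N:ℝ) + n - 2 + 2) * (s + 1)⌋ = 2*N + 3*n := by
      rw [Int.floor_eq_iff]; push_cast; constructor <;> nlinarith
    have f4 : ⌊((N:ℝ) + n - 2 + 1) * (s + 1)⌋ = 2*N + 3*n - 2 := by
      rw [Int.floor_eq_iff]; push_cast; constructor <;> nlinarith
    rw [f1, f2, f3, f4]; omega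
end

section
/- Define b(i) to be the number of natural numbers m with ⌊m(√2 − 1)⌋ = i + 1. Then for every integer t ≥ 1, if b(t − 1) = 3 and there is no natural number n with t + 5 = ⌈(n+2)(√2 + 1)⌉ (i.e., t is not a partial sum b(1) + ⋯ + b(n)), then b(t) = 2. -/
lemma bcount (i : ℕ) :
    {m : ℕ | ⌊(m : ℝ) * (Real.sqrt 2 - 1)⌋ = (i : ℤ) + 1}.ncard
      = (⌈((i : ℝ) + 2) * (Real.sqrt 2 + 1)⌉
          - ⌈((i : ℝ) + 1) * (Real.sqrt 2 + 1)⌉).toNat := by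
  have hs : Real.sqrt 2 ^ 2 = 2 := Real.sq_sqrt (by norm_num)
  have hs0 : 0 ≤ Real.sqrt 2 := Real.sqrt_nonneg 2
  have hs1 : 1 < Real.sqrt 2 := by nlinarith
  have hseteq : {m : ℕ | ⌊(m : ℝ) * (Real.sqrt 2 - 1)⌋ = (i : ℤ) + 1}
      = ↑(Finset.Ico (⌈((i : ℝ) + 1) * (Real.sqrt 2 + 1)⌉.toNat)
          (⌈((i : ℝ) + 2) * (Real.sqrt 2 + 1)⌉.toNat)) := by
    ext m
    simp only [Set.mem_setOf_eq, Finset.coe_Ico, Set.mem_Ico]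
    rw [Int.floor_eq_iff]
    push_cast
    constructor
    · rintro ⟨h1, h2⟩
      constructor
      · rw [Int.toNat_le, Int.ceil_le]
        push_cast
        nlinarith
      · rw [Int.lt_toNat, Int.lt_ceil]
        push_cast
        nlinarith
    · rintro ⟨h1, h2⟩
      rw [Int.toNat_le, Int.ceil_le] at h1
      rw [Int.lt_toNat, Int.lt_ceil] at h2
      push_cast at h1 h2
      constructor <;> nlinarith
  rw [hseteq, Set.ncard_coe_finset, Nat.card_Ico]
  have h1 : (0 : ℤ) ≤ ⌈((i : ℝ) + 1) * (Real.sqrt 2 + 1)⌉ :=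
    Int.ceil_nonneg (by positivity)
  omega

/-- With `b(i)` the number of `m` with `⌊m(√2−1)⌋ = i+1`: if `b(t−1) = 3` and
`t` is not a partial sum `b(1) + ⋯ + b(n)` (equivalently, `t + 5` is never
`⌈(n+2)(√2+1)⌉`), then `b(t) = 2`. -/
theorem b_after_three
    (b : ℕ → ℕ)
    (hb : ∀ i : ℕ, b i = {m : ℕ | ⌊(m : ℝ) * (Real.sqrt 2 - 1)⌋ = (i : ℤ) + 1}.ncard) :
    ∀ t : ℕ, 1 ≤ t → b (t - 1) = 3 →
      (¬∃ n : ℕ, (t : ℤ) + 5 = ⌈((n : ℝ) + 2) * (Real.sqrt 2 + 1)⌉) →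
      b t = 2 := by
  have hs : Real.sqrt 2 ^ 2 = 2 := Real.sq_sqrt (by norm_num)
  have hs0 : 0 ≤ Real.sqrt 2 := Real.sqrt_nonneg 2
  have hs1 : 1 < Real.sqrt 2 := by nlinarith
  have hs2 : Real.sqrt 2 < 1.5 := by nlinarith
  rintro t ht h3 -
  obtain ⟨k, rfl⟩ : ∃ k, t = k + 1 := ⟨t - 1, by omega⟩
  rw [hb, bcount] at h3 ⊢
  simp only [Nat.add_sub_cancel] at h3
  push_cast at h3 ⊢
  set A := ⌈((k : ℝ) + 1) * (Real.sqrt 2 + 1)⌉ with hA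
  set B := ⌈((k : ℝ) + 2) * (Real.sqrt 2 + 1)⌉ with hB
  set C := ⌈((k : ℝ) + 1 + 2) * (Real.sqrt 2 + 1)⌉ with hC
  have hBeq : ⌈((k : ℝ) + 1 + 1) * (Real.sqrt 2 + 1)⌉ = B := by rw [hB]; ring_nf
  rw [hBeq]
  have hAle : ((k : ℝ) + 1) * (Real.sqrt 2 + 1) ≤ A := Int.le_ceil _
  have hBlt : (B : ℝ) < ((k : ℝ) + 2) * (Real.sqrt 2 + 1) + 1 :=
    (Int.ceil_lt_add_one _)
  have hCA : C ≤ A + 5 := by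
    rw [hC, Int.ceil_le]
    push_cast
    nlinarith
  have hCB : B + 1 < C := by
    rw [hC, Int.lt_ceil]
    push_cast
    nlinarith
  omega
end

section
/- Define b(i) to be the number of natural numbers m with ⌊m(√2 − 1)⌋ = i + 1. Then for every integer t ≥ 1, if b(t − 1) = 2 and there is no natural number n with t + 5 = ⌈(n+2)(√2 + 1)⌉ (i.e., t is not a partial sum b(1) + ⋯ + b(n)), then b(t) = 3. -/
private lemma card_eq_aux (i : ℕ) :
    {m : ℕ | ⌊(m : ℝ) * (Real.sqrt 2 - 1)⌋ = (i : ℤ) + 1}.ncard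
      = (⌈((i:ℝ)+2)*(Real.sqrt 2+1)⌉ - ⌈((i:ℝ)+1)*(Real.sqrt 2+1)⌉).toNat := by
  set s := Real.sqrt 2 with hsdef
  have hss : s * s = 2 := Real.mul_self_sqrt (by norm_num)
  have h1 : (1:ℝ) < s := by nlinarith [Real.sqrt_nonneg 2]
  have hsp : (0:ℝ) ≤ s + 1 := by linarith
  have hsm : (0:ℝ) < s - 1 := by linarith
  have hd : (s - 1) * (s + 1) = 1 := by linear_combination hss
  have key : ∀ y : ℝ, y * (s - 1) * (s + 1) = y := fun y => by
    rw [mul_assoc, hd, mul_one]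
  have key2 : ∀ y : ℝ, y * (s + 1) * (s - 1) = y := fun y => by
    rw [mul_assoc, mul_comm (s+1), hd, mul_one]
  set a := ⌈((i:ℝ)+1)*(s+1)⌉ with ha
  set c := ⌈((i:ℝ)+2)*(s+1)⌉ with hc
  have hset : {m : ℕ | ⌊(m : ℝ) * (s - 1)⌋ = (i : ℤ) + 1}
      = ↑(Finset.Ico a.toNat c.toNat) := by
    ext m
    simp only [Set.mem_setOf_eq, Finset.coe_Ico, Set.mem_Ico]
    rw [Int.floor_eq_iff]
    constructor
    · rintro ⟨hl, hr⟩
      push_cast at hl hr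
      constructor
      · rw [Int.toNat_le, ha, Int.ceil_le]
        push_cast
        have h := mul_le_mul_of_nonneg_right hl hsp
        rw [key] at h
        exact h
      · rw [Int.lt_toNat, hc, Int.lt_ceil]
        push_cast
        have h := mul_lt_mul_of_pos_right hr (by linarith : (0:ℝ) < s + 1)
        rw [key] at h
        linarith
    · rintro ⟨hl, hr⟩
      rw [Int.toNat_le, ha, Int.ceil_le] at hl
      rw [Int.lt_toNat, hc, Int.lt_ceil] at hr
      push_cast at hl hr
      push_cast
      constructor
      · have h := mul_le_mul_of_nonneg_right hl hsm.le
        rw [key2] at h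
        exact h
      · have h := mul_lt_mul_of_pos_right hr hsm
        rw [key2] at h
        linarith [h]
  rw [hset, Set.ncard_coe_finset, Nat.card_Ico]
  have ha0 : 0 ≤ a := Int.ceil_nonneg (by positivity)
  omega

/-- With `b(i)` the number of `m` with `⌊m(√2−1)⌋ = i+1`: if `b(t−1) = 2` and
`t` is not a partial sum `b(1) + ⋯ + b(n)` (equivalently, `t + 5` is never
`⌈(n+2)(√2+1)⌉`), then `b(t) = 3`. -/
theorem b_after_two
    (b : ℕ → ℕ)
    (hb : ∀ i : ℕ, b i = {m : ℕ | ⌊(m : ℝ) * (Real.sqrt 2 - 1)⌋ = (i : ℤ) + 1}.ncard) :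
    ∀ t : ℕ, 1 ≤ t → b (t - 1) = 2 →
      (¬∃ n : ℕ, (t : ℤ) + 5 = ⌈((n : ℝ) + 2) * (Real.sqrt 2 + 1)⌉) →
      b t = 3 := by
  have hbf : ∀ i : ℕ, b i = (⌈((i:ℝ)+2)*(Real.sqrt 2+1)⌉ - ⌈((i:ℝ)+1)*(Real.sqrt 2+1)⌉).toNat :=
    fun i => (hb i).trans (card_eq_aux i)
  clear hb
  intro t ht h2 hne
  set s := Real.sqrt 2 with hsdef
  have hss : s * s = 2 := Real.mul_self_sqrt (by norm_num)
  have h141 : (1.414:ℝ) < s := by nlinarith [Real.sqrt_nonneg 2]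
  have h142 : s < 1.415 := by nlinarith [Real.sqrt_nonneg 2]
  have ht' : (1:ℝ) ≤ (t:ℝ) := by exact_mod_cast ht
  set A := ⌈(t:ℝ)*(s+1)⌉ with hA
  set B := ⌈((t:ℝ)+1)*(s+1)⌉ with hB
  set C := ⌈((t:ℝ)+2)*(s+1)⌉ with hC
  -- rewrite h2
  have hcast : ((t-1 : ℕ) : ℝ) = (t:ℝ) - 1 := by
    push_cast [Nat.cast_sub ht]; ring
  rw [hbf (t-1), hcast, show ((t:ℝ)-1+2) = (t:ℝ)+1 by ring,
    show ((t:ℝ)-1+1) = (t:ℝ) by ring] at h2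
  have hBA : B = A + 2 := by omega
  -- real facts
  have hA1 : (t:ℝ)*(s+1) ≤ (A:ℝ) := Int.le_ceil _
  have hA2 : (A:ℝ) < (t:ℝ)*(s+1) + 1 := Int.ceil_lt_add_one _
  have hB1 : ((t:ℝ)+1)*(s+1) ≤ (B:ℝ) := Int.le_ceil _
  have hB2 : (B:ℝ) < ((t:ℝ)+1)*(s+1) + 1 := Int.ceil_lt_add_one _
  have hC1 : ((t:ℝ)+2)*(s+1) ≤ (C:ℝ) := Int.le_ceil _
  -- C ∈ [B+2, B+3]
  have hCub : C ≤ B + 3 := by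
    rw [hC]
    apply Int.ceil_le.mpr
    push_cast
    nlinarith
  have hClb : B + 1 < C := by
    have : ((B:ℝ) + 1) < (C:ℝ) := by nlinarith
    exact_mod_cast this
  -- A > 2t
  have hA2t : 2 * (t:ℤ) + 1 ≤ A := by
    have : (2*(t:ℝ)) < (A:ℝ) := by nlinarith
    have : (2*(t:ℤ) : ℝ) < (A:ℝ) := by push_cast; linarith
    have := (by exact_mod_cast this : 2*(t:ℤ) < A)
    omega
  rw [hbf t, ← hC, ← hB]
  by_cases hc3 : C = B + 3
  · rw [hc3]; omega
  · exfalso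
    have hCeq : C = A + 4 := by omega
    apply hne
    refine ⟨(A - 2*(t:ℤ) - 1).toNat, ?_⟩
    have h0 : (0:ℤ) ≤ A - 2*(t:ℤ) - 1 := by omega
    have h1 : ((A - 2*(t:ℤ) - 1).toNat : ℤ) = A - 2*(t:ℤ) - 1 := Int.toNat_of_nonneg h0
    have hn : ((A - 2*(t:ℤ) - 1).toNat : ℝ) = (A:ℝ) - 2*(t:ℝ) - 1 := by
      calc ((A - 2*(t:ℤ) - 1).toNat : ℝ) = (((A - 2*(t:ℤ) - 1).toNat : ℤ) : ℝ) := by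
            push_cast; ring
        _ = ((A - 2*(t:ℤ) - 1 : ℤ) : ℝ) := by rw [h1]
        _ = (A:ℝ) - 2*(t:ℝ) - 1 := by push_cast; ring
    rw [hn, show ((A:ℝ) - 2*(t:ℝ) - 1 + 2) = ((A:ℝ) - 2*(t:ℝ) + 1) by ring]
    have hC1' : ((t:ℝ)+2)*(s+1) ≤ (A:ℝ) + 4 := by
      rw [hCeq] at hC1; push_cast at hC1; linarith
    symm
    rw [Int.ceil_eq_iff]
    have hp1 := mul_le_mul_of_nonneg_right hC1' (by linarith : (0:ℝ) ≤ s + 1)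
    have hp2 := mul_le_mul_of_nonneg_right hA2.le (by linarith : (0:ℝ) ≤ s + 1)
    have hts : (t:ℝ) * s * s = 2 * (t:ℝ) := by
      rw [mul_assoc, hss]; ring
    constructor
    · push_cast
      nlinarith [hp1, hts, hss, ht', h141]
    · push_cast
      nlinarith [hp2, hts, hss, ht', h142]
end

section
/- Let φ = (1 + √5)/2 be the golden ratio, and let L(n) = ⌊nφ⌋ (lower Wythoff) and U(n) = ⌊nφ²⌋ (upper Wythoff). Fix an integer n ≥ 1 and suppose U(n) is odd. Let i ≥ 1 be the least integer such that U(n−1) < L(i) < U(n+1) and L(i−1) < U(n) < L(i+1). Then L(i) = 2⌊n(φ+1)/2⌋. (Together with the trivial case that U(n) = 2⌊n(φ+1)/2⌋ when U(n) is even, this shows the lower even swappage sequence satisfies V_le(n) = 2⌊n(φ+1)/2⌋.) -/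
private lemma phi_sq (φ : ℝ) (hφ : φ = (1 + Real.sqrt 5) / 2) : φ ^ 2 = φ + 1 := by
  have h5 : Real.sqrt 5 ^ 2 = 5 := Real.sq_sqrt (by norm_num)
  rw [hφ]; nlinarith [h5]

private lemma phi_gt (φ : ℝ) (hφ : φ = (1 + Real.sqrt 5) / 2) : 1 < φ := by
  have h5 : Real.sqrt 5 ^ 2 = 5 := Real.sq_sqrt (by norm_num)
  have h0 : 0 ≤ Real.sqrt 5 := Real.sqrt_nonneg 5
  nlinarith

private lemma phi_lt (φ : ℝ) (hφ : φ = (1 + Real.sqrt 5) / 2) : φ < 2 := by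
  have h5 : Real.sqrt 5 ^ 2 = 5 := Real.sq_sqrt (by norm_num)
  have h0 : 0 ≤ Real.sqrt 5 := Real.sqrt_nonneg 5
  nlinarith

private lemma phi_irr (φ : ℝ) (hφ : φ = (1 + Real.sqrt 5) / 2) : Irrational φ := by
  have h5 : Irrational (Real.sqrt 5) := (by norm_num : Nat.Prime 5).irrational_sqrt
  have h1 : Irrational (1 + Real.sqrt 5) := by
    have := h5.ratCast_add 1
    simpa using this
  have := h1.div_intCast (m := 2) (by norm_num)
  rw [hφ]
  simpa using this

private lemma nphi_irr (φ : ℝ) (hφ : φ = (1 + Real.sqrt 5) / 2) (n : ℕ) (hn : 1 ≤ n) :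
    Irrational ((n : ℝ) * φ) :=
  (phi_irr φ hφ).natCast_mul (by omega)

/-- Strict lower bound on an irrational multiple. -/
private lemma floor_lt_self (x : ℝ) (hx : Irrational x) : (⌊x⌋ : ℝ) < x :=
  lt_of_le_of_ne (Int.floor_le x) (fun h => hx.ne_int ⌊x⌋ h.symm)

/-- The classical identity `L(L(n)) = L(n) + n - 1`. -/
private lemma key_floor (φ : ℝ) (hφ : φ = (1 + Real.sqrt 5) / 2) (n : ℕ) (hn : 1 ≤ n) :
    ⌊(⌊(n : ℝ) * φ⌋ : ℝ) * φ⌋ = ⌊(n : ℝ) * φ⌋ + n - 1 := by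
  have hφ2 := phi_sq φ hφ
  have hφgt := phi_gt φ hφ
  have hφlt := phi_lt φ hφ
  set m := ⌊(n : ℝ) * φ⌋ with hm
  set f := Int.fract ((n : ℝ) * φ) with hf
  have hsplit : (n : ℝ) * φ = m + f := (Int.floor_add_fract _).symm
  have hf0 : 0 < f := by
    rw [hf, Int.fract_pos]
    exact (nphi_irr φ hφ n hn).ne_int m
  have hf1 : f < 1 := Int.fract_lt_one _
  have hmφ : (m : ℝ) * φ = ((m + n : ℤ) : ℝ) + (f - f * φ) := by
    push_cast
    have hm' : (m : ℝ) = n * φ - f := by linarith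
    rw [hm']
    nlinarith [hφ2]
  have hfloor : ⌊f - f * φ⌋ = -1 := by
    rw [Int.floor_eq_iff]
    constructor
    · push_cast; nlinarith
    · push_cast; nlinarith
  rw [hmφ, Int.floor_intCast_add, hfloor]
  push_cast
  ring

/-- Beatty disjointness: `L(j) ≠ U(n)` for `j, n ≥ 1`. -/
private lemma beatty_ne (φ : ℝ) (hφ : φ = (1 + Real.sqrt 5) / 2) (j n : ℕ)
    (hj : 1 ≤ j) (hn : 1 ≤ n) : ⌊(j : ℝ) * φ⌋ ≠ ⌊(n : ℝ) * φ ^ 2⌋ := by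
  have hφ2 := phi_sq φ hφ
  have hφgt := phi_gt φ hφ
  have hφlt := phi_lt φ hφ
  intro h
  set m := ⌊(n : ℝ) * φ ^ 2⌋ with hm
  have hirr1 : Irrational ((j : ℝ) * φ) := nphi_irr φ hφ j hj
  have hirr2 : Irrational ((n : ℝ) * φ ^ 2) := by
    have : (n : ℝ) * φ ^ 2 = (n : ℝ) * φ + n := by rw [hφ2]; ring
    rw [this]
    exact (nphi_irr φ hφ n hn).add_natCast n
  have h1 : (m : ℝ) < j * φ := by rw [← h]; exact floor_lt_self _ hirr1
  have h2 : (j : ℝ) * φ < m + 1 := by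
    rw [← h]; exact Int.lt_floor_add_one _
  have h3 : (m : ℝ) < n * φ ^ 2 := floor_lt_self _ hirr2
  have h4 : (n : ℝ) * φ ^ 2 < m + 1 := Int.lt_floor_add_one _
  have e1 : (φ - 1) * ((m : ℝ)) < (φ - 1) * ((j : ℝ) * φ) :=
    mul_lt_mul_of_pos_left h1 (by linarith)
  have e1' : (φ - 1) * ((j : ℝ) * φ) = j := by nlinarith [hφ2]
  have e2 : (2 - φ) * ((m : ℝ)) < (2 - φ) * ((n : ℝ) * φ ^ 2) :=
    mul_lt_mul_of_pos_left h3 (by linarith)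
  have e2' : (2 - φ) * ((n : ℝ) * φ ^ 2) = n := by nlinarith [hφ2]
  have f1 : (φ - 1) * ((j : ℝ) * φ) < (φ - 1) * ((m : ℝ) + 1) :=
    mul_lt_mul_of_pos_left h2 (by linarith)
  have f2 : (2 - φ) * ((n : ℝ) * φ ^ 2) < (2 - φ) * ((m : ℝ) + 1) :=
    mul_lt_mul_of_pos_left h4 (by linarith)
  have hgt : (m : ℝ) < (j : ℝ) + n := by nlinarith
  have hlt : (j : ℝ) + n < (m : ℝ) + 1 := by nlinarith
  have hgt' : m < (j : ℤ) + n := by exact_mod_cast hgt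
  have hlt' : (j : ℤ) + n < m + 1 := by exact_mod_cast hlt
  omega

/-- The odd case of the lower even swappage sequence: if `U(n)` is odd and `i`
is the least index with `U(n−1) < L(i) < U(n+1)` and `L(i−1) < U(n) < L(i+1)`,
then `L(i) = 2⌊n(φ+1)/2⌋`. -/
theorem lower_even_swappage_odd_case
    (φ : ℝ) (hφ : φ = (1 + Real.sqrt 5) / 2)
    (L U : ℕ → ℤ)
    (hL : ∀ n : ℕ, L n = ⌊(n : ℝ) * φ⌋) (hU : ∀ n : ℕ, U n = ⌊(n : ℝ) * φ ^ 2⌋)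
    (n : ℕ) (hn : 1 ≤ n) (hodd : Odd (U n))
    (i : ℕ) (hi : 1 ≤ i)
    (hcond : U (n - 1) < L i ∧ L i < U (n + 1) ∧ L (i - 1) < U n ∧ U n < L (i + 1))
    (hleast : ∀ j : ℕ, 1 ≤ j →
      (U (n - 1) < L j ∧ L j < U (n + 1) ∧ L (j - 1) < U n ∧ U n < L (j + 1)) → i ≤ j) :
    L i = 2 * ⌊(n : ℝ) * (φ + 1) / 2⌋ := by
  have hφ2 := phi_sq φ hφ
  have hφgt := phi_gt φ hφ
  have hφlt := phi_lt φ hφ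
  -- RHS equals U n - 1
  obtain ⟨k, hk⟩ := hodd
  have hUn : U n = ⌊(n : ℝ) * φ ^ 2⌋ := hU n
  have hUnlb : ((U n : ℝ)) ≤ (n : ℝ) * φ ^ 2 := by rw [hUn]; exact_mod_cast Int.floor_le _
  have hUnub : (n : ℝ) * φ ^ 2 < (U n : ℝ) + 1 := by
    rw [hUn]; exact Int.lt_floor_add_one _
  have hrhs : ⌊(n : ℝ) * (φ + 1) / 2⌋ = k := by
    rw [Int.floor_eq_iff] <;> rw [← hφ2]
    constructor
    · have : ((k : ℝ)) * 2 + 1 ≤ (n : ℝ) * φ ^ 2 := by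
        calc ((k : ℝ)) * 2 + 1 = ((2 * k + 1 : ℤ) : ℝ) := by push_cast; ring
        _ = (U n : ℝ) := by rw [hk]
        _ ≤ _ := hUnlb
      linarith
    · have : (n : ℝ) * φ ^ 2 < ((k : ℝ)) * 2 + 2 := by
        have : ((U n : ℝ)) + 1 = ((2 * k + 1 : ℤ) : ℝ) + 1 := by rw [hk]
        push_cast at this
        linarith
      linarith
  rw [hrhs]
  -- so the goal is L i = 2 * k = U n - 1
  have hgoal : 2 * k = U n - 1 := by omega
  rw [hgoal]
  -- basic monotonicity facts
  have Lmono : ∀ a b : ℕ, a < b → L a < L b := by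
    intro a b hab
    rw [hL, hL]
    have : (a : ℝ) * φ + 1 ≤ (b : ℝ) * φ := by
      have hb : (a : ℝ) + 1 ≤ b := by exact_mod_cast hab
      nlinarith
    calc ⌊(a : ℝ) * φ⌋ < ⌊(a : ℝ) * φ⌋ + 1 := by omega
    _ = ⌊(a : ℝ) * φ + 1⌋ := by rw [Int.floor_add_one]
    _ ≤ ⌊(b : ℝ) * φ⌋ := Int.floor_le_floor this
  have Lgap : ∀ a : ℕ, L (a + 1) ≤ L a + 2 := by
    intro a
    rw [hL, hL]
    have : ((a : ℝ) + 1) * φ ≤ (a : ℝ) * φ + 2 := by nlinarith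
    calc ⌊((a + 1 : ℕ) : ℝ) * φ⌋ ≤ ⌊(a : ℝ) * φ + 2⌋ := by
          apply Int.floor_le_floor; push_cast; linarith
    _ = ⌊(a : ℝ) * φ⌋ + 2 := by
          rw [show ((2 : ℝ)) = ((2 : ℤ) : ℝ) by norm_num, Int.floor_add_intCast]
  have Ugap : ∀ a : ℕ, U a + 2 ≤ U (a + 1) := by
    intro a
    rw [hU, hU]
    have : (a : ℝ) * φ ^ 2 + 2 ≤ ((a : ℝ) + 1) * φ ^ 2 := by nlinarith
    calc ⌊(a : ℝ) * φ ^ 2⌋ + 2 = ⌊(a : ℝ) * φ ^ 2 + 2⌋ := by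
          rw [show ((2 : ℝ)) = ((2 : ℤ) : ℝ) by norm_num, Int.floor_add_intCast]
    _ ≤ ⌊((a + 1 : ℕ) : ℝ) * φ ^ 2⌋ := by apply Int.floor_le_floor; push_cast; linarith
  -- the witness index i₀ = L n
  have hLn1 : 1 ≤ L n := by
    rw [hL]
    have : (1 : ℝ) ≤ (n : ℝ) * φ := by
      have : (1 : ℝ) ≤ n := by exact_mod_cast hn
      nlinarith
    exact_mod_cast Int.le_floor.mpr (by exact_mod_cast this)
  set i₀ : ℕ := (L n).toNat with hi₀
  have hi₀1 : 1 ≤ i₀ := by simp only [hi₀]; omega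
  have hcast : ((i₀ : ℕ) : ℝ) = ((L n : ℤ) : ℝ) := by
    have : ((i₀ : ℕ) : ℤ) = L n := Int.toNat_of_nonneg (by omega)
    exact_mod_cast this
  have hULn : U n = L n + n := by
    rw [hU, hL]
    have : (n : ℝ) * φ ^ 2 = (n : ℝ) * φ + (n : ℤ) := by rw [hφ2]; push_cast; ring
    rw [this, Int.floor_add_intCast]
  have hLi₀ : L i₀ = U n - 1 := by
    have hkey := key_floor φ hφ n hn
    have h' : L i₀ = ⌊(⌊(n : ℝ) * φ⌋ : ℝ) * φ⌋ := by
      rw [hL i₀]; congr 2; rw [hcast, hL n]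
    rw [h', hkey, hULn, hL]
  -- i₀ satisfies the four conditions
  have hc1 : U (n - 1) < L i₀ := by
    have h1 : U (n - 1) + 2 ≤ U (n - 1 + 1) := Ugap (n - 1)
    have h2 : n - 1 + 1 = n := by omega
    rw [h2] at h1
    omega
  have hc2 : L i₀ < U (n + 1) := by
    have := Ugap n
    omega
  have hc3 : L (i₀ - 1) < U n := by
    have : L (i₀ - 1) < L i₀ := Lmono _ _ (by omega)
    omega
  have hc4 : U n < L (i₀ + 1) := by
    have hgt : L i₀ < L (i₀ + 1) := Lmono _ _ (by omega)
    have hne : L (i₀ + 1) ≠ U n := by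
      rw [hL, hU]
      exact beatty_ne φ hφ (i₀ + 1) n (by omega) hn
    omega
  have hile : i ≤ i₀ := hleast i₀ hi₀1 ⟨hc1, hc2, hc3, hc4⟩
  have hLile : L i ≤ U n - 1 := by
    rcases eq_or_lt_of_le hile with h | h
    · rw [h]; omega
    · have := Lmono i i₀ h; omega
  have hLige : U n - 1 ≤ L i := by
    have h4 := hcond.2.2.2
    have := Lgap i
    omega
  omega
end
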